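/- arXiv:0712.0489 — 4 statements merged into one kernel-verified Lean document; each statement's English description precedes it below -/
import Mathlib

section
/- Let G be an infinite (g,o)-growing graph with g ≥ 1 and maximal degree Δ < ∞, set δ = 1 + log(Δ+1), and fix i ∈ {0,…,m}, S ⊆ L_i, U = F_{i+1} ∪ S. Then for every β with β′ = 2gβ − δ > 0 and every vertex x ∈ S, μ_U^−(σ_x = −1) ≤ e^{−β′}/(1 − e^{−β′}). -/
/- Common framework: Ising model with boundary conditions on (finite pieces of)
   locally finite graphs, heat-bath Glauber dynamics quantities. -/

open Finset
open scoped Classical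

noncomputable section

namespace IsingGlauber

/-- The real spin value of a Boolean spin: `true ↦ +1`, `false ↦ -1`. -/
def spin (b : Bool) : ℝ := if b then 1 else -1

variable {V : Type*}

/-- Neighbourhood finset of a vertex, from an explicit local finiteness witness. -/
def nbr (G : SimpleGraph V) (hlf : G.LocallyFinite) (x : V) : Finset V :=
  @SimpleGraph.neighborFinset V G x (hlf x)

/-- `G` is `(g,o)`-growing: every vertex `x` (say at distance `r` from `o`) has at
    least `g` more neighbours in level `r+1` than in the ball of radius `r`. -/
def IsGrowing (G : SimpleGraph V) (hlf : G.LocallyFinite) (g : ℕ) (o : V) : Prop :=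
  ∀ x : V,
    ((nbr G hlf x).filter fun z => G.dist o z ≤ G.dist o x).card + g ≤
      ((nbr G hlf x).filter fun z => G.dist o z = G.dist o x + 1).card

variable [DecidableEq V]

/-- External vertex boundary of a finite vertex set. -/
def vbd (G : SimpleGraph V) (hlf : G.LocallyFinite) (A : Finset V) : Finset V :=
  A.biUnion (fun a => nbr G hlf a) \ A

/-- Closure `A ∪ ∂_V A` of a finite vertex set. -/
def cl (G : SimpleGraph V) (hlf : G.LocallyFinite) (A : Finset V) : Finset V :=
  A ∪ vbd G hlf A

/-- Ising Hamiltonian (zero field) with boundary: `Σ_{(x,y) ∈ E(A ∪ ∂_V A)} σ_x σ_y`,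
    the sum over edges with both endpoints in `A ∪ ∂_V A` (each edge counted once). -/
def energyB (G : SimpleGraph V) (hlf : G.LocallyFinite) (A : Finset V) (σ : V → Bool) : ℝ :=
  (1 / 2) * ∑ x ∈ cl G hlf A, ∑ y ∈ (cl G hlf A).filter (fun y => G.Adj x y),
    spin (σ x) * spin (σ y)

/-- Free-boundary Ising Hamiltonian: `Σ_{(x,y) ∈ E(A)} σ_x σ_y`,
    the sum over edges with both endpoints in `A` (each edge counted once). -/
def energyF (G : SimpleGraph V) (A : Finset V) (σ : V → Bool) : ℝ :=
  (1 / 2) * ∑ x ∈ A, ∑ y ∈ A.filter (fun y => G.Adj x y), spin (σ x) * spin (σ y)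

/-- The configuration equal to `p` on `A` and to `η` off `A`. -/
def patch (A : Finset V) (η : V → Bool) (p : ∀ a ∈ A, Bool) : V → Bool :=
  fun v => if h : v ∈ A then p v h else η v

/-- Unnormalised Gibbs sum over configurations agreeing with `η` off `A`,
    with energy functional `E` (which should already include the factor `β`). -/
def wsum (E : (V → Bool) → ℝ) (A : Finset V) (η : V → Bool) (f : (V → Bool) → ℝ) : ℝ :=
  ∑ p ∈ A.pi (fun _ => (Finset.univ : Finset Bool)),
    Real.exp (E (patch A η p)) * f (patch A η p)

/-- Gibbs expectation of `f` for the measure on region `A` with boundary condition `η`. -/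
def gExp (E : (V → Bool) → ℝ) (A : Finset V) (η : V → Bool) (f : (V → Bool) → ℝ) : ℝ :=
  wsum E A η f / wsum E A η (fun _ => 1)

/-- Gibbs probability of an event. -/
def gProb (E : (V → Bool) → ℝ) (A : Finset V) (η : V → Bool) (P : (V → Bool) → Prop) : ℝ :=
  gExp E A η (fun σ => if P σ then 1 else 0)

/-- Gibbs variance of `f`. -/
def gVar (E : (V → Bool) → ℝ) (A : Finset V) (η : V → Bool) (f : (V → Bool) → ℝ) : ℝ :=
  gExp E A η (fun σ => f σ ^ 2) - gExp E A η f ^ 2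

/-- Dirichlet form of the heat-bath Glauber dynamics:
    `D(f) = Σ_{x ∈ A} μ(Var_x(f))`, where `Var_x(f)(σ)` is the variance of `f`
    under the one-site conditional Gibbs measure at `x` given `σ` elsewhere. -/
def dirich (E : (V → Bool) → ℝ) (A : Finset V) (η : V → Bool) (f : (V → Bool) → ℝ) : ℝ :=
  ∑ x ∈ A, gExp E A η (fun σ => gVar E {x} σ f)

/-- Spectral gap `c_gap(μ) = inf { D(f)/Var(f) : Var(f) ≠ 0 }`. -/
def cgap (E : (V → Bool) → ℝ) (A : Finset V) (η : V → Bool) : ℝ :=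
  sInf {r : ℝ | ∃ f : (V → Bool) → ℝ, gVar E A η f ≠ 0 ∧ r = dirich E A η f / gVar E A η f}

/-- The edge boundary of `C`, encoded as ordered pairs `(u,v)` with `u ∈ C`,
    `v ∉ C` and `u ~ v`; these pairs are in bijection with the boundary edges. -/
def obd (G : SimpleGraph V) (hlf : G.LocallyFinite) (C : Finset V) : Finset (V × V) :=
  (C ×ˢ C.biUnion (fun c => nbr G hlf c)).filter (fun p => G.Adj p.1 p.2 ∧ p.2 ∉ C)

end IsingGlauber

open IsingGlauber

namespace St10

open Relation IsingGlauber

variable {V : Type*} [DecidableEq V]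

lemma spin_not (b : Bool) : spin (!b) = -spin b := by cases b <;> simp [spin]
lemma neg_one_le_spin (b : Bool) : -1 ≤ spin b := by cases b <;> simp [spin]

omit [DecidableEq V] in
/-- strengthen a reachability relation to one internal to a set `C` -/
lemma rtg_conn {G : SimpleGraph V} {r : V → V → Prop} (hadj : ∀ a b, r a b → G.Adj a b)
    {x : V} {C : Finset V} (hmem : ∀ a, ReflTransGen r x a → a ∈ C)
    {v : V} (h : ReflTransGen r x v) :
    ReflTransGen (fun a b => G.Adj a b ∧ a ∈ C ∧ b ∈ C) x v := by
  induction h with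
  | refl => exact .refl
  | tail hxb hbc ih =>
      exact ih.tail ⟨hadj _ _ hbc, hmem _ hxb, hmem _ (hxb.tail hbc)⟩

/-- connectivity of a finite set `C` from `x` using only edges inside `C` -/
def ConnIn (G : SimpleGraph V) (C : Finset V) (x : V) : Prop :=
  x ∈ C ∧ ∀ v ∈ C, ReflTransGen (fun a b => G.Adj a b ∧ a ∈ C ∧ b ∈ C) x v

/-- polymer generating function -/
def phi (G : SimpleGraph V) (lam : ℝ) (A : Finset V) (x : V) : ℝ :=
  ∑ C ∈ A.powerset.filter (fun C => ConnIn G C x), lam ^ C.card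

lemma phi_nonneg (G : SimpleGraph V) {lam : ℝ} (h0 : 0 ≤ lam) (A : Finset V) (x : V) :
    0 ≤ phi G lam A x :=
  Finset.sum_nonneg fun _ _ => pow_nonneg h0 _

/-- the minus-cluster of `x` inside `U` -/
def cluster (G : SimpleGraph V) (U : Finset V) (σ : V → Bool) (x : V) : Finset V :=
  U.filter (fun v => ReflTransGen
    (fun a b => G.Adj a b ∧ a ∈ U ∧ b ∈ U ∧ σ a = false ∧ σ b = false) x v)

variable {G : SimpleGraph V}

lemma cluster_subset (U : Finset V) (σ : V → Bool) (x : V) : cluster G U σ x ⊆ U :=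
  Finset.filter_subset _ _

lemma mem_cluster_self {U : Finset V} {σ : V → Bool} {x : V} (hx : x ∈ U) :
    x ∈ cluster G U σ x :=
  Finset.mem_filter.2 ⟨hx, .refl⟩

lemma cluster_spin {U : Finset V} {σ : V → Bool} {x : V} (hσx : σ x = false) :
    ∀ v ∈ cluster G U σ x, σ v = false := by
  intro v hv
  have h := (Finset.mem_filter.1 hv).2
  rcases h.cases_tail with h | ⟨c, _, hc⟩
  · rw [h]; exact hσx
  · exact hc.2.2.2.2

lemma cluster_max {U : Finset V} {σ : V → Bool} {x u v : V}
    (hσx : σ x = false) (hu : u ∈ cluster G U σ x) (hv : v ∈ U)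
    (hadj : G.Adj u v) (hσv : σ v = false) : v ∈ cluster G U σ x := by
  have h := Finset.mem_filter.1 hu
  exact Finset.mem_filter.2 ⟨hv, h.2.tail ⟨hadj, h.1, hv, cluster_spin hσx u hu, hσv⟩⟩

lemma cluster_conn {U : Finset V} {σ : V → Bool} {x : V} (hx : x ∈ U) (hσx : σ x = false) :
    ConnIn G (cluster G U σ x) x := by
  refine ⟨mem_cluster_self hx, ?_⟩
  intro v hv
  refine rtg_conn (fun a b h => h.1) ?_ (Finset.mem_filter.1 hv).2
  intro a ha
  rcases ha.cases_tail with h | ⟨c, hc, hca⟩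
  · rw [h]; exact mem_cluster_self hx
  · exact Finset.mem_filter.2 ⟨hca.2.2.1, hc.tail hca⟩

lemma nbr_sub_cl (hlf : G.LocallyFinite) {U : Finset V} {a : V} (ha : a ∈ U) :
    nbr G hlf a ⊆ cl G hlf U := by
  intro v hv
  by_cases hvU : v ∈ U
  · exact Finset.mem_union_left _ hvU
  · exact Finset.mem_union_right _
      (Finset.mem_sdiff.2 ⟨Finset.mem_biUnion.2 ⟨a, ha, hv⟩, hvU⟩)

/-- double sum algebra for flipping the spins of `C` -/
lemma double_sum_flip (W C : Finset V) (hCW : C ⊆ W) (s t : V → ℝ)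
    (ht1 : ∀ v ∈ C, t v = - s v) (ht2 : ∀ v ∈ W, v ∉ C → t v = s v) :
    ∑ a ∈ W, ∑ b ∈ W.filter (fun b => G.Adj a b), t a * t b
      = (∑ a ∈ W, ∑ b ∈ W.filter (fun b => G.Adj a b), s a * s b)
        - 4 * ∑ a ∈ C, ∑ b ∈ (W \ C).filter (fun b => G.Adj a b), s a * s b := by
  have hWu : C ∪ (W \ C) = W := Finset.union_sdiff_of_subset hCW
  have hdis : Disjoint C (W \ C) := Finset.disjoint_sdiff
  set T : Finset V → Finset V → (V → ℝ) → ℝ :=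
    fun X Y u => ∑ a ∈ X, ∑ b ∈ Y.filter (fun b => G.Adj a b), u a * u b with hT
  have expand : ∀ u : V → ℝ,
      ∑ a ∈ W, ∑ b ∈ W.filter (fun b => G.Adj a b), u a * u b
        = T C C u + T C (W \ C) u + T (W \ C) C u + T (W \ C) (W \ C) u := by
    intro u
    have inner : ∀ a : V, ∑ b ∈ W.filter (fun b => G.Adj a b), u a * u b
        = (∑ b ∈ C.filter (fun b => G.Adj a b), u a * u b)
          + ∑ b ∈ (W \ C).filter (fun b => G.Adj a b), u a * u b := by
      intro a
      have hsplit : W.filter (fun b => G.Adj a b)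
          = C.filter (fun b => G.Adj a b) ∪ (W \ C).filter (fun b => G.Adj a b) := by
        rw [← Finset.filter_union, hWu]
      rw [hsplit, Finset.sum_union (Finset.disjoint_filter_filter hdis)]
    have outer : ∀ h : V → ℝ, ∑ a ∈ W, h a = (∑ a ∈ C, h a) + ∑ a ∈ W \ C, h a := by
      intro h
      rw [← Finset.sum_union hdis, hWu]
    rw [Finset.sum_congr rfl (fun a _ => inner a), Finset.sum_add_distrib,
      outer (fun a => ∑ b ∈ C.filter (fun b => G.Adj a b), u a * u b),
      outer (fun a => ∑ b ∈ (W \ C).filter (fun b => G.Adj a b), u a * u b)]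
    ring
  have hCC : T C C t = T C C s := by
    apply Finset.sum_congr rfl; intro a ha
    apply Finset.sum_congr rfl; intro b hb
    rw [ht1 a ha, ht1 b (Finset.mem_filter.1 hb).1, neg_mul_neg]
  have hWW : T (W \ C) (W \ C) t = T (W \ C) (W \ C) s := by
    apply Finset.sum_congr rfl; intro a ha
    apply Finset.sum_congr rfl; intro b hb
    have hb' := Finset.mem_sdiff.1 (Finset.mem_filter.1 hb).1
    have ha' := Finset.mem_sdiff.1 ha
    rw [ht2 a ha'.1 ha'.2, ht2 b hb'.1 hb'.2]
  have hCW' : T C (W \ C) t = - T C (W \ C) s := by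
    rw [hT, ← Finset.sum_neg_distrib]
    apply Finset.sum_congr rfl; intro a ha
    rw [← Finset.sum_neg_distrib]
    apply Finset.sum_congr rfl; intro b hb
    have hb' := Finset.mem_sdiff.1 (Finset.mem_filter.1 hb).1
    rw [ht1 a ha, ht2 b hb'.1 hb'.2]
    ring
  have hWC : T (W \ C) C t = - T (W \ C) C s := by
    rw [hT, ← Finset.sum_neg_distrib]
    apply Finset.sum_congr rfl; intro a ha
    rw [← Finset.sum_neg_distrib]
    apply Finset.sum_congr rfl; intro b hb
    have ha' := Finset.mem_sdiff.1 ha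
    rw [ht2 a ha'.1 ha'.2, ht1 b (Finset.mem_filter.1 hb).1]
    ring
  have hswap : T (W \ C) C s = T C (W \ C) s := by
    rw [hT]
    simp only [Finset.sum_filter]
    rw [Finset.sum_comm]
    apply Finset.sum_congr rfl; intro a _
    apply Finset.sum_congr rfl; intro b _
    by_cases h : G.Adj a b
    · rw [if_pos h, if_pos h.symm, mul_comm]
    · rw [if_neg h, if_neg (fun hc => h hc.symm)]
  rw [expand t, expand s, hCC, hWW, hCW', hWC, hswap]
  have : T C (W \ C) s
      = ∑ a ∈ C, ∑ b ∈ (W \ C).filter (fun b => G.Adj a b), s a * s b := rfl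
  rw [this]
  ring

end St10

namespace St10

variable {V : Type*} [DecidableEq V] {G : SimpleGraph V}

/-- the geometric bound on the boundary of the minus cluster -/
lemma cross_bound (hlf : G.LocallyFinite) (hconn : G.Connected)
    {g i : ℕ} {o : V} (hgrow : IsGrowing G hlf g o)
    (U : Finset V) (hUi : ∀ u ∈ U, i ≤ G.dist o u)
    (σ : V → Bool) (hout : ∀ b, b ∉ U → i + 1 ≤ G.dist o b → σ b = true)
    (C : Finset V) (hCU : C ⊆ U)
    (hCm : ∀ v ∈ C, σ v = false)
    (hmax : ∀ u ∈ C, ∀ v ∈ U, G.Adj u v → σ v = false → v ∈ C) :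
    (g : ℝ) * C.card ≤
      ∑ a ∈ C, ∑ b ∈ ((cl G hlf U) \ C).filter (fun b => G.Adj a b), spin (σ b) := by
  set W := cl G hlf U with hW
  set Up : V → Finset V :=
    fun a => (nbr G hlf a).filter (fun z => G.dist o z = G.dist o a + 1) with hUp
  set Dn : V → Finset V :=
    fun a => (nbr G hlf a).filter (fun z => G.dist o z ≤ G.dist o a) with hDn
  have hdichot : ∀ a b : V, G.Adj a b → G.dist o b ≤ G.dist o a + 1 := by
    intro a b hab
    have h1 : G.dist o b ≤ G.dist o a + G.dist a b := hconn.dist_triangle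
    rwa [SimpleGraph.dist_eq_one_iff_adj.2 hab] at h1
  have hperA : ∀ a ∈ C,
      (g : ℝ) + ((Dn a ∩ C).card : ℝ) - ((Up a ∩ C).card : ℝ)
        ≤ ∑ b ∈ (W \ C).filter (fun b => G.Adj a b), spin (σ b) := by
    intro a ha
    have hsplit : (W \ C).filter (fun b => G.Adj a b) = (Up a \ C) ∪ (Dn a \ C) := by
      ext b
      simp only [Finset.mem_filter, Finset.mem_sdiff, Finset.mem_union, hUp, hDn,
        SimpleGraph.mem_neighborFinset, nbr]
      constructor
      · rintro ⟨⟨hbW, hbC⟩, hadj⟩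
        have := hdichot a b hadj
        rcases Nat.lt_or_ge (G.dist o b) (G.dist o a + 1) with h | h
        · exact Or.inr ⟨⟨hadj, by omega⟩, hbC⟩
        · exact Or.inl ⟨⟨hadj, by omega⟩, hbC⟩
      · rintro (⟨⟨hadj, _⟩, hbC⟩ | ⟨⟨hadj, _⟩, hbC⟩) <;>
          exact ⟨⟨nbr_sub_cl hlf (hCU ha) ((SimpleGraph.mem_neighborFinset _ _ _).2 hadj),
            hbC⟩, hadj⟩
    have hdisj : Disjoint (Up a \ C) (Dn a \ C) := by
      rw [Finset.disjoint_left]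
      intro b hb1 hb2
      have h1 := (Finset.mem_filter.1 (Finset.mem_sdiff.1 hb1).1).2
      have h2 := (Finset.mem_filter.1 (Finset.mem_sdiff.1 hb2).1).2
      omega
    have hUpval : ∑ b ∈ Up a \ C, spin (σ b) = ((Up a \ C).card : ℝ) := by
      have hone : ∀ b ∈ Up a \ C, spin (σ b) = 1 := by
        intro b hb
        have hb' := Finset.mem_sdiff.1 hb
        have hbmem := Finset.mem_filter.1 hb'.1
        have hadj : G.Adj a b := (SimpleGraph.mem_neighborFinset _ _ _).1 hbmem.1
        have hdist : G.dist o b = G.dist o a + 1 := hbmem.2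
        have hσb : σ b = true := by
          by_cases hbU : b ∈ U
          · cases hsb : σ b with
            | false => exact absurd (hmax a ha b hbU hadj hsb) hb'.2
            | true => rfl
          · exact hout b hbU (by have := hUi a (hCU ha); omega)
        rw [hσb]; rfl
      rw [Finset.sum_congr rfl hone, Finset.sum_const, nsmul_eq_mul, mul_one]
    have hDnval : -((Dn a \ C).card : ℝ) ≤ ∑ b ∈ Dn a \ C, spin (σ b) := by
      calc -((Dn a \ C).card : ℝ) = ∑ _b ∈ Dn a \ C, (-1 : ℝ) := by
            rw [Finset.sum_const, nsmul_eq_mul]; ring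
        _ ≤ _ := Finset.sum_le_sum (fun b _ => neg_one_le_spin (σ b))
    have hUpcard : (Up a ∩ C).card + (Up a \ C).card = (Up a).card :=
      Finset.card_inter_add_card_sdiff _ _
    have hDncard : (Dn a ∩ C).card + (Dn a \ C).card = (Dn a).card :=
      Finset.card_inter_add_card_sdiff _ _
    have hgr : (Dn a).card + g ≤ (Up a).card := hgrow a
    rw [hsplit, Finset.sum_union hdisj, hUpval]
    have hfin : (g : ℝ) + ((Dn a ∩ C).card : ℝ) - ((Up a ∩ C).card : ℝ)
        ≤ ((Up a \ C).card : ℝ) - ((Dn a \ C).card : ℝ) := by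
      have h1 : ((Dn a).card : ℝ) + (g : ℝ) ≤ ((Up a).card : ℝ) := by exact_mod_cast hgr
      have h2 : ((Up a ∩ C).card : ℝ) + ((Up a \ C).card : ℝ) = ((Up a).card : ℝ) := by
        exact_mod_cast hUpcard
      have h3 : ((Dn a ∩ C).card : ℝ) + ((Dn a \ C).card : ℝ) = ((Dn a).card : ℝ) := by
        exact_mod_cast hDncard
      linarith
    linarith [hDnval]
  have pairing : ∑ a ∈ C, ((Up a ∩ C).card : ℝ) ≤ ∑ a ∈ C, ((Dn a ∩ C).card : ℝ) := by
    have key : ∀ X : V → Finset V, ∑ a ∈ C, (X a ∩ C).card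
        = ((C ×ˢ C).filter (fun q => q.2 ∈ X q.1)).card := by
      intro X
      rw [Finset.card_filter, Finset.sum_product]
      apply Finset.sum_congr rfl
      intro a _
      rw [← Finset.card_filter]
      congr 1
      ext b
      simp [Finset.mem_inter, and_comm]
    have hnat : ∑ a ∈ C, (Up a ∩ C).card ≤ ∑ a ∈ C, (Dn a ∩ C).card := by
      rw [key Up, key Dn]
      apply Finset.card_le_card_of_injOn Prod.swap
      · intro q hq
        rw [Finset.mem_coe, Finset.mem_filter] at hq ⊢
        obtain ⟨hqm, hq2⟩ := hq
        rw [Finset.mem_product] at hqm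
        have hmem := Finset.mem_filter.1 hq2
        have hadj : G.Adj q.1 q.2 := (SimpleGraph.mem_neighborFinset _ _ _).1 hmem.1
        refine ⟨Finset.mem_product.2 ⟨hqm.2, hqm.1⟩, ?_⟩
        refine Finset.mem_filter.2 ⟨(SimpleGraph.mem_neighborFinset _ _ _).2 hadj.symm, ?_⟩
        simp only [Prod.fst_swap, Prod.snd_swap]
        omega
      · exact Function.Injective.injOn Prod.swap_injective
    exact_mod_cast hnat
  calc (g : ℝ) * C.card = ∑ _a ∈ C, (g : ℝ) := by
        rw [Finset.sum_const, nsmul_eq_mul]; ring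
    _ ≤ ∑ a ∈ C, ((g : ℝ) + (((Dn a ∩ C).card : ℝ) - ((Up a ∩ C).card : ℝ))) := by
        rw [Finset.sum_add_distrib]
        have : (0:ℝ) ≤ ∑ a ∈ C, (((Dn a ∩ C).card : ℝ) - ((Up a ∩ C).card : ℝ)) := by
          rw [Finset.sum_sub_distrib]
          linarith [pairing]
        linarith
    _ ≤ _ := by
        apply Finset.sum_le_sum
        intro a ha
        have := hperA a ha
        linarith
end St10

namespace St10

variable {V : Type*} [DecidableEq V] {G : SimpleGraph V}

/-- flipping the minus cluster increases the energy by at least `2g|C|` -/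
lemma energy_ge (hlf : G.LocallyFinite) (hconn : G.Connected)
    {g i : ℕ} {o : V} (hgrow : IsGrowing G hlf g o)
    (U : Finset V) (hUi : ∀ u ∈ U, i ≤ G.dist o u)
    (σ : V → Bool) (hout : ∀ b, b ∉ U → i + 1 ≤ G.dist o b → σ b = true)
    (C : Finset V) (hCU : C ⊆ U)
    (hCm : ∀ v ∈ C, σ v = false)
    (hmax : ∀ u ∈ C, ∀ v ∈ U, G.Adj u v → σ v = false → v ∈ C)
    (τ : V → Bool) (hτ : ∀ v, τ v = if v ∈ C then !(σ v) else σ v) :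
    energyB G hlf U σ + 2 * (g : ℝ) * C.card ≤ energyB G hlf U τ := by
  have hCW : C ⊆ cl G hlf U := hCU.trans Finset.subset_union_left
  have ht1 : ∀ v ∈ C, spin (τ v) = - spin (σ v) := by
    intro v hv; rw [hτ v, if_pos hv, spin_not]
  have ht2 : ∀ v ∈ cl G hlf U, v ∉ C → spin (τ v) = spin (σ v) := by
    intro v _ hv; rw [hτ v, if_neg hv]
  have hds := double_sum_flip (G := G) (cl G hlf U) C hCW (fun v => spin (σ v)) (fun v => spin (τ v))
    ht1 ht2
  have hXbound : ∑ a ∈ C, ∑ b ∈ ((cl G hlf U) \ C).filter (fun b => G.Adj a b),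
      spin (σ a) * spin (σ b) ≤ -((g:ℝ) * C.card) := by
    have hcb := cross_bound hlf hconn hgrow U hUi σ hout C hCU hCm hmax
    have heq : ∑ a ∈ C, ∑ b ∈ ((cl G hlf U) \ C).filter (fun b => G.Adj a b),
        spin (σ a) * spin (σ b)
        = - ∑ a ∈ C, ∑ b ∈ ((cl G hlf U) \ C).filter (fun b => G.Adj a b), spin (σ b) := by
      rw [← Finset.sum_neg_distrib]
      apply Finset.sum_congr rfl; intro a ha
      rw [← Finset.sum_neg_distrib]
      apply Finset.sum_congr rfl; intro b _
      rw [hCm a ha]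
      show (-1 : ℝ) * spin (σ b) = - spin (σ b)
      ring
    rw [heq]
    linarith
  rw [energyB, energyB, hds]
  nlinarith [hXbound]

end St10

namespace St10
open Relation

variable {V : Type*} [DecidableEq V]

/-- The key polymer-counting bound. -/
lemma phi_le (G : SimpleGraph V) (hlf : G.LocallyFinite) {lam : ℝ} (h0 : 0 ≤ lam) (Δ : ℕ)
    (hdeg : ∀ v, (nbr G hlf v).card ≤ Δ)
    (hl : Real.exp 1 * lam * ((Δ : ℝ) + 1) ≤ 1) :
    ∀ (A : Finset V) (x : V), phi G lam A x ≤ Real.exp 1 * lam := by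
  intro A
  induction A using Finset.strongInduction with
  | _ A ih =>
  intro x
  by_cases hxA : x ∈ A
  swap
  · have : A.powerset.filter (fun C => ConnIn G C x) = ∅ := by
      rw [Finset.filter_eq_empty_iff]
      intro C hC hCx
      exact hxA (Finset.mem_powerset.1 hC hCx.1)
    simp only [phi, this, Finset.sum_empty]
    positivity
  -- main case
  set N : Finset V := (nbr G hlf x) ∩ A with hN
  set A' : Finset V := A.erase x with hA'
  set choices : V → Finset (Finset V) :=
    fun y => insert ∅ (A'.powerset.filter (fun D => ConnIn G D y)) with hchoices
  set stepC : Finset V → V → V → Prop := fun D a b => G.Adj a b ∧ a ∈ D ∧ b ∈ D with hstepC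
  set comp : Finset V → V → Finset V :=
    fun D v => D.filter (fun w => ReflTransGen (stepC D) v w) with hcomp
  set rep : Finset V → V := fun K => if h : (K ∩ N).Nonempty then h.choose else x with hrep
  set fC : Finset V → V → Finset V :=
    fun C y => (C.erase x).filter (fun v => rep (comp (C.erase x) v) = y) with hfC
  -- generic facts about components
  have hsymm : ∀ D : Finset V, Symmetric (stepC D) := by
    intro D a b h; exact ⟨h.1.symm, h.2.2, h.2.1⟩
  have hRsymm : ∀ D : Finset V, Symmetric (ReflTransGen (stepC D)) :=
    fun D => by
      haveI : Std.Symm (stepC D) := ⟨fun a b h => hsymm D h⟩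
      intro a b h; exact (ReflTransGen.stdSymm (r := stepC D)).symm a b h
  have comp_self : ∀ (D : Finset V) (v : V), v ∈ D → v ∈ comp D v := by
    intro D v hv; exact Finset.mem_filter.2 ⟨hv, .refl⟩
  have comp_eq : ∀ (D : Finset V) (v w : V), w ∈ comp D v → comp D w = comp D v := by
    intro D v w hw
    have hvw : ReflTransGen (stepC D) v w := (Finset.mem_filter.1 hw).2
    ext u
    simp only [hcomp, Finset.mem_filter]
    exact ⟨fun h => ⟨h.1, hvw.trans h.2⟩, fun h => ⟨h.1, (hRsymm D hvw).trans h.2⟩⟩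
  -- the sum
  have main :
      phi G lam A x ≤ lam * ∏ y ∈ N, (1 + phi G lam A' y) := by
    have hCmem : ∀ C ∈ A.powerset.filter (fun C => ConnIn G C x),
        (∀ y ∈ N, fC C y ∈ choices y) ∧
        C.card = 1 + ∑ y ∈ N, (fC C y).card ∧
        C = insert x (N.biUnion (fC C)) := by
      intro C hC
      rw [Finset.mem_filter, Finset.mem_powerset] at hC
      have hCA : C ⊆ A := hC.1
      have hxC : x ∈ C := hC.2.1
      have hconn := hC.2.2
      set D : Finset V := C.erase x with hD
      have hDA' : D ⊆ A' := Finset.erase_subset_erase x hCA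
      have touch : ∀ v ∈ D, ((comp D v) ∩ N).Nonempty := by
        intro v hv
        have hvC : v ∈ C := Finset.mem_of_mem_erase hv
        have hvx : v ≠ x := Finset.ne_of_mem_erase hv
        have key : ∀ w, ReflTransGen (fun a b => G.Adj a b ∧ a ∈ C ∧ b ∈ C) x w →
            w = x ∨ (w ∈ D ∧ ((comp D w) ∩ N).Nonempty) := by
          intro w hw
          induction hw with
          | refl => exact Or.inl rfl
          | @tail b c hxb hbc ihh =>
            by_cases hcx : c = x
            · exact Or.inl hcx
            · have hcD : c ∈ D := Finset.mem_erase.2 ⟨hcx, hbc.2.2⟩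
              rcases ihh with hbx | ⟨hbD, y, hy⟩
              · subst hbx
                refine Or.inr ⟨hcD, ⟨c, ?_⟩⟩
                refine Finset.mem_inter.2 ⟨comp_self D c hcD, ?_⟩
                exact Finset.mem_inter.2 ⟨(SimpleGraph.mem_neighborFinset _ _ _).2 hbc.1,
                  hCA hbc.2.2⟩
              · have hstep : stepC D b c := ⟨hbc.1, hbD, hcD⟩
                have hcb : c ∈ comp D b :=
                  Finset.mem_filter.2 ⟨hcD, ReflTransGen.single hstep⟩
                refine Or.inr ⟨hcD, ⟨y, ?_⟩⟩
                rwa [comp_eq D b c hcb]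
        rcases key v (hconn v hvC) with h | h
        · exact absurd h hvx
        · exact h.2
      have rep_mem : ∀ v ∈ D, rep (comp D v) ∈ (comp D v) ∩ N := by
        intro v hv
        have h := touch v hv
        simp only [hrep, dif_pos h]
        exact h.choose_spec
      have fC_class : ∀ v ∈ D, fC C (rep (comp D v)) = comp D v := by
        intro v hv
        ext w
        simp only [hfC, Finset.mem_filter, ← hD]
        constructor
        · rintro ⟨hwD, hwrep⟩
          have h1 : rep (comp D w) ∈ comp D w := Finset.mem_inter.1 (rep_mem w hwD) |>.1
          rw [hwrep] at h1
          have h2 : rep (comp D v) ∈ comp D v := Finset.mem_inter.1 (rep_mem v hv) |>.1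
          have := comp_eq D w _ h1
          rw [← comp_eq D v _ h2, this]
          exact comp_self D w hwD
        · intro hw
          have hwD : w ∈ D := (Finset.mem_filter.1 hw).1
          exact ⟨hwD, by rw [comp_eq D v w hw]⟩
      have biu : N.biUnion (fC C) = D := by
        apply Finset.Subset.antisymm
        · intro w hw
          rcases Finset.mem_biUnion.1 hw with ⟨y, _, hwy⟩
          exact (Finset.mem_filter.1 hwy).1
        · intro v hv
          refine Finset.mem_biUnion.2 ⟨rep (comp D v),
            (Finset.mem_inter.1 (rep_mem v hv)).2, ?_⟩
          exact Finset.mem_filter.2 ⟨hv, rfl⟩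
      have hdisj : ∀ y ∈ N, ∀ z ∈ N, y ≠ z → Disjoint (fC C y) (fC C z) := by
        intro y _ z _ hyz
        rw [Finset.disjoint_left]
        intro w hwy hwz
        exact hyz ((Finset.mem_filter.1 hwy).2 ▸ (Finset.mem_filter.1 hwz).2 ▸ rfl)
      refine ⟨?_, ?_, ?_⟩
      · intro y hy
        by_cases hfe : fC C y = ∅
        · rw [hfe]; exact Finset.mem_insert_self _ _
        · obtain ⟨v, hv⟩ := Finset.nonempty_iff_ne_empty.2 hfe
          have hvD : v ∈ D := (Finset.mem_filter.1 hv).1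
          have hvy : rep (comp D v) = y := (Finset.mem_filter.1 hv).2
          have hfceq : fC C y = comp D v := by rw [← hvy]; exact fC_class v hvD
          refine Finset.mem_insert.2 (Or.inr ?_)
          rw [Finset.mem_filter, Finset.mem_powerset, hfceq]
          have hyK : y ∈ comp D v := by
            rw [← hvy]; exact (Finset.mem_inter.1 (rep_mem v hvD)).1
          refine ⟨(Finset.filter_subset _ _).trans hDA', hyK, ?_⟩
          intro w hw
          have hKmem : ∀ a, ReflTransGen (stepC D) y a → a ∈ comp D v := by
            intro a ha
            have hva : ReflTransGen (stepC D) v a :=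
              ((Finset.mem_filter.1 hyK).2).trans ha
            have haD : a ∈ D := by
              rcases ha.cases_tail with h | ⟨b, _, hba⟩
              · rw [h]; exact (Finset.mem_filter.1 hyK).1
              · exact hba.2.2
            exact Finset.mem_filter.2 ⟨haD, hva⟩
          have hyw : ReflTransGen (stepC D) y w :=
            (hRsymm D (Finset.mem_filter.1 hyK).2).trans (Finset.mem_filter.1 hw).2
          exact rtg_conn (fun a b h => h.1) hKmem hyw
      · have h1 : D.card + 1 = C.card := Finset.card_erase_add_one hxC
        have h2 : D.card = ∑ y ∈ N, (fC C y).card := by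
          rw [← biu]; exact Finset.card_biUnion hdisj
        omega
      · rw [biu, hD, Finset.insert_erase hxC]
    -- now the sum manipulation
    set 𝒞 := A.powerset.filter (fun C => ConnIn G C x) with h𝒞
    set F : Finset V → (∀ y ∈ N, Finset V) := fun C => fun y _ => fC C y with hF
    have hinj : ∀ C ∈ 𝒞, ∀ C' ∈ 𝒞, F C = F C' → C = C' := by
      intro C hC C' hC' hFF
      have h1 := (hCmem C hC).2.2
      have h2 := (hCmem C' hC').2.2
      rw [h1, h2]
      congr 1
      apply Finset.biUnion_congr rfl
      intro y hy
      have := congrFun (congrFun hFF y) hy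
      exact this
    have hmempi : ∀ C ∈ 𝒞, F C ∈ N.pi choices := by
      intro C hC
      exact Finset.mem_pi.2 fun y hy => (hCmem C hC).1 y hy
    set W : (∀ y ∈ N, Finset V) → ℝ :=
      fun p => ∏ y ∈ N.attach, lam ^ (p y.1 y.2).card with hW
    have hWF : ∀ C ∈ 𝒞, lam ^ C.card = lam * W (F C) := by
      intro C hC
      rw [(hCmem C hC).2.1, pow_add, pow_one]
      congr 1
      have hh : W (F C) = ∏ y ∈ N, lam ^ (fC C y).card :=
        Finset.prod_attach N (fun y => lam ^ (fC C y).card)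
      rw [hh, Finset.prod_pow_eq_pow_sum]
    calc phi G lam A x = ∑ C ∈ 𝒞, lam * W (F C) := Finset.sum_congr rfl hWF
      _ = lam * ∑ C ∈ 𝒞, W (F C) := by rw [Finset.mul_sum]
      _ = lam * ∑ q ∈ 𝒞.image F, W q := by rw [Finset.sum_image hinj]
      _ ≤ lam * ∑ q ∈ N.pi choices, W q := by
          apply mul_le_mul_of_nonneg_left _ h0
          apply Finset.sum_le_sum_of_subset_of_nonneg
          · intro q hq
            rcases Finset.mem_image.1 hq with ⟨C, hC, rfl⟩
            exact hmempi C hC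
          · intro q _ _
            exact Finset.prod_nonneg fun _ _ => pow_nonneg h0 _
      _ = lam * ∏ y ∈ N, ∑ D ∈ choices y, lam ^ D.card := by
          rw [Finset.prod_sum]
      _ = lam * ∏ y ∈ N, (1 + phi G lam A' y) := by
          congr 1
          apply Finset.prod_congr rfl
          intro y _
          rw [hchoices]
          rw [Finset.sum_insert (by
            simp only [Finset.mem_filter]
            rintro ⟨-, h, -⟩
            exact absurd h (Finset.notMem_empty y))]
          simp [phi]
    -- end of main
  -- numeric estimate
  have hpos : (0:ℝ) ≤ Real.exp 1 * lam := by positivity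
  have hfac : ∀ y ∈ N, 1 + phi G lam A' y ≤ 1 + Real.exp 1 * lam := by
    intro y _
    have := ih A' (Finset.erase_ssubset hxA) y
    linarith
  have hNcard : N.card ≤ Δ := le_trans (Finset.card_le_card Finset.inter_subset_left) (hdeg x)
  have hprod : ∏ y ∈ N, (1 + phi G lam A' y) ≤ (1 + Real.exp 1 * lam) ^ N.card := by
    rw [← Finset.prod_const]
    apply Finset.prod_le_prod
    · intro y _; have := phi_nonneg G h0 A' y; linarith
    · exact hfac
  have hpow : (1 + Real.exp 1 * lam) ^ N.card ≤ Real.exp 1 := by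
    calc (1 + Real.exp 1 * lam) ^ N.card ≤ (1 + Real.exp 1 * lam) ^ Δ :=
          pow_le_pow_right₀ (by linarith) hNcard
      _ ≤ (Real.exp (Real.exp 1 * lam)) ^ Δ := by
          apply pow_le_pow_left₀ (by linarith)
          linarith [Real.add_one_le_exp (Real.exp 1 * lam)]
      _ = Real.exp ((Δ:ℝ) * (Real.exp 1 * lam)) := by rw [Real.exp_nat_mul]
      _ ≤ Real.exp 1 := by
          apply Real.exp_le_exp.2
          have h1 : (Δ:ℝ) * (Real.exp 1 * lam) ≤ ((Δ:ℝ)+1) * (Real.exp 1 * lam) := by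
            apply mul_le_mul_of_nonneg_right (by linarith) hpos
          calc (Δ:ℝ) * (Real.exp 1 * lam) ≤ ((Δ:ℝ)+1) * (Real.exp 1 * lam) := h1
            _ = Real.exp 1 * lam * ((Δ:ℝ)+1) := by ring
            _ ≤ 1 := hl
  calc phi G lam A x ≤ lam * ∏ y ∈ N, (1 + phi G lam A' y) := main
    _ ≤ lam * Real.exp 1 := by
        apply mul_le_mul_of_nonneg_left _ h0
        exact le_trans hprod hpow
    _ = Real.exp 1 * lam := mul_comm _ _


end St10

namespace St10

variable {V : Type*} [DecidableEq V]

def flipc (U C : Finset V) (p : ∀ a ∈ U, Bool) : ∀ a ∈ U, Bool :=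
  fun a ha => if a ∈ C then !(p a ha) else p a ha

lemma patch_flipc {U C : Finset V} (hCU : C ⊆ U) (η : V → Bool) (p : ∀ a ∈ U, Bool) (v : V) :
    IsingGlauber.patch U η (flipc U C p) v
      = if v ∈ C then !(IsingGlauber.patch U η p v) else IsingGlauber.patch U η p v := by
  unfold IsingGlauber.patch flipc
  by_cases hvC : v ∈ C
  · rw [if_pos hvC, dif_pos (hCU hvC), dif_pos (hCU hvC), if_pos hvC]
  · rw [if_neg hvC]
    by_cases hvU : v ∈ U
    · rw [dif_pos hvU, dif_pos hvU, if_neg hvC]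
    · rw [dif_neg hvU, dif_neg hvU]

lemma flipc_flipc (U C : Finset V) (p : ∀ a ∈ U, Bool) : flipc U C (flipc U C p) = p := by
  funext a ha
  unfold flipc
  by_cases h : a ∈ C <;> simp [h]

end St10


open St10

/-- inequality (3.9) of the paper: under the minus boundary condition
on `B_i \ S` and plus on `∂_V B`, the probability that a given spin `x ∈ S` is minus
is at most `e^{-β'}/(1 - e^{-β'})`, with `β' = 2gβ - δ > 0`, `δ = 1 + log(Δ+1)`. -/
theorem statement10 {V : Type*} [DecidableEq V] [Infinite V]
    (G : SimpleGraph V) (hlf : G.LocallyFinite) (hconn : G.Connected)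
    (g Δ : ℕ) (hg : 1 ≤ g) (o : V)
    (hgrow : IsGrowing G hlf g o)
    (hΔ : ∀ v : V, (nbr G hlf v).card ≤ Δ)
    (δ : ℝ) (hδ : δ = 1 + Real.log ((Δ : ℝ) + 1))
    (β β' : ℝ) (hβ' : β' = 2 * (g : ℝ) * β - δ) (hpos : 0 < β')
    (m i : ℕ) (him : i ≤ m) (Bm : Finset V) (hBm : ∀ v : V, v ∈ Bm ↔ G.dist o v ≤ m)
    (S : Finset V) (hS : ∀ v ∈ S, G.dist o v = i)
    (U : Finset V) (hU : U = Bm.filter (fun v => i + 1 ≤ G.dist o v) ∪ S)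
    (x : V) (hx : x ∈ S) :
    gProb (fun σ => β * energyB G hlf U σ) U
        (fun v => if G.dist o v ≤ i then false else true)
        (fun σ => σ x = false) ≤
      Real.exp (-β') / (1 - Real.exp (-β')) := by
  classical
  have hxU : x ∈ U := by rw [hU]; exact Finset.mem_union_right _ hx
  -- numeric preliminaries
  have hΔ1 : (0:ℝ) < (Δ:ℝ) + 1 := by positivity
  have hΔ0 : (0:ℝ) ≤ (Δ:ℝ) := Nat.cast_nonneg Δ
  have hlog : (0:ℝ) ≤ Real.log ((Δ:ℝ)+1) := Real.log_nonneg (by linarith)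
  have hδpos : (0:ℝ) < δ := by rw [hδ]; linarith
  have hgβ : 2 * (g:ℝ) * β = β' + δ := by rw [hβ']; ring
  have hβpos : 0 < β := by
    by_contra hb
    push_neg at hb
    have hgnn : (0:ℝ) ≤ 2 * (g:ℝ) := by positivity
    nlinarith
  set lam : ℝ := Real.exp (-(2*(g:ℝ)*β)) with hlam
  have hlam0 : 0 ≤ lam := (Real.exp_pos _).le
  have hkey : Real.exp 1 * lam * ((Δ:ℝ)+1) = Real.exp (-β') := by
    rw [hlam, ← Real.exp_add]
    nth_rewrite 1 [← Real.exp_log hΔ1]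
    rw [← Real.exp_add]
    congr 1
    rw [hβ', hδ]
    ring
  have hexpβ' : Real.exp (-β') < 1 := by
    rw [← Real.exp_zero]
    exact Real.exp_lt_exp.2 (by linarith)
  -- geometric preliminaries
  set η : V → Bool := fun v => if G.dist o v ≤ i then false else true with hη
  set E : (V → Bool) → ℝ := fun σ => β * energyB G hlf U σ with hE
  have hUi : ∀ u ∈ U, i ≤ G.dist o u := by
    intro u hu
    rw [hU] at hu
    rcases Finset.mem_union.1 hu with h | h
    · have := (Finset.mem_filter.1 h).2; omega
    · exact (hS u h).symm.le
  -- partition function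
  set Ω := U.pi (fun _ => (Finset.univ : Finset Bool)) with hΩ
  set w : (∀ a ∈ U, Bool) → ℝ := fun p => Real.exp (E (patch U η p)) with hw
  have hZeq : wsum E U η (fun _ => (1:ℝ)) = ∑ p ∈ Ω, w p := by
    rw [wsum]; exact Finset.sum_congr rfl (fun p _ => mul_one _)
  have hZpos : 0 < wsum E U η (fun _ => (1:ℝ)) := by
    rw [hZeq]
    apply Finset.sum_pos (fun p _ => Real.exp_pos _)
    exact ⟨fun a _ => true, Finset.mem_pi.2 fun a ha => Finset.mem_univ _⟩
  -- numerator bound (Peierls)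
  set 𝒞 := U.powerset.filter (fun C => ConnIn G C x) with h𝒞
  have hNum : wsum E U η (fun σ => if σ x = false then (1:ℝ) else 0)
      ≤ phi G lam U x * wsum E U η (fun _ => (1:ℝ)) := by
    set Ωev := Ω.filter (fun p => patch U η p x = false) with hΩev
    have hev : wsum E U η (fun σ => if σ x = false then (1:ℝ) else 0)
        = ∑ p ∈ Ωev, w p := by
      rw [wsum, hΩev, Finset.sum_filter]
      apply Finset.sum_congr rfl
      intro p _
      by_cases h : patch U η p x = false
      · rw [if_pos h, if_pos h, mul_one]
      · rw [if_neg h, if_neg h, mul_zero]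
    have hmapsto : ∀ p ∈ Ωev, cluster G U (patch U η p) x ∈ 𝒞 := by
      intro p hp
      have hpx : patch U η p x = false := (Finset.mem_filter.1 hp).2
      exact Finset.mem_filter.2 ⟨Finset.mem_powerset.2 (cluster_subset _ _ _),
        cluster_conn hxU hpx⟩
    have hfib := Finset.sum_fiberwise_of_maps_to hmapsto w
    have hCbound : ∀ C ∈ 𝒞,
        ∑ p ∈ Ωev.filter (fun p => cluster G U (patch U η p) x = C), w p
          ≤ lam ^ C.card * wsum E U η (fun _ => (1:ℝ)) := by
      intro C hC
      have hCU' : C ⊆ U := Finset.mem_powerset.1 (Finset.mem_filter.1 hC).1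
      have hpt : ∀ p ∈ Ωev.filter (fun p => cluster G U (patch U η p) x = C),
          w p ≤ lam ^ C.card * w (flipc U C p) := by
        intro p hp
        obtain ⟨hp1, hp2⟩ := Finset.mem_filter.1 hp
        have hpx : patch U η p x = false := (Finset.mem_filter.1 hp1).2
        have hτ : ∀ v, patch U η (flipc U C p) v
            = if v ∈ C then !(patch U η p v) else patch U η p v :=
          patch_flipc hCU' η p
        have hout : ∀ b, b ∉ U → i + 1 ≤ G.dist o b → patch U η p b = true := by
          intro b hbU hb
          unfold IsingGlauber.patch
          rw [dif_neg hbU, hη]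
          simp only
          rw [if_neg (by omega : ¬ G.dist o b ≤ i)]
        have hCm : ∀ v ∈ C, patch U η p v = false := by
          intro v hv
          rw [← hp2] at hv
          exact cluster_spin hpx v hv
        have hmax : ∀ u ∈ C, ∀ v ∈ U, G.Adj u v → patch U η p v = false → v ∈ C := by
          intro u hu v hv hadj hσv
          rw [← hp2] at hu ⊢
          exact cluster_max hpx hu hv hadj hσv
        have hen := energy_ge hlf hconn hgrow U hUi (patch U η p) hout C hCU' hCm hmax
          (patch U η (flipc U C p)) hτ
        have hEle : E (patch U η p) ≤ E (patch U η (flipc U C p)) - 2*(g:ℝ)*β*C.card := by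
          rw [hE]
          simp only
          nlinarith [hen]
        have hlampow : lam ^ C.card = Real.exp ((C.card : ℝ) * (-(2*(g:ℝ)*β))) := by
          rw [Real.exp_nat_mul]
        calc w p = Real.exp (E (patch U η p)) := rfl
          _ ≤ Real.exp ((C.card : ℝ) * (-(2*(g:ℝ)*β)) + E (patch U η (flipc U C p))) := by
              apply Real.exp_le_exp.2
              nlinarith [hEle]
          _ = lam ^ C.card * w (flipc U C p) := by
              rw [Real.exp_add, hlampow]
      have hinj : ∀ p ∈ Ωev.filter (fun p => cluster G U (patch U η p) x = C),
          ∀ q ∈ Ωev.filter (fun p => cluster G U (patch U η p) x = C),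
          flipc U C p = flipc U C q → p = q := by
        intro p _ q _ h
        rw [← flipc_flipc U C p, h, flipc_flipc]
      calc ∑ p ∈ Ωev.filter (fun p => cluster G U (patch U η p) x = C), w p
          ≤ ∑ p ∈ Ωev.filter (fun p => cluster G U (patch U η p) x = C),
              lam ^ C.card * w (flipc U C p) := Finset.sum_le_sum hpt
        _ = lam ^ C.card * ∑ p ∈ Ωev.filter (fun p => cluster G U (patch U η p) x = C),
              w (flipc U C p) := by rw [Finset.mul_sum]
        _ ≤ lam ^ C.card * wsum E U η (fun _ => (1:ℝ)) := by
            apply mul_le_mul_of_nonneg_left _ (pow_nonneg hlam0 _)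
            rw [hZeq, ← Finset.sum_image hinj]
            apply Finset.sum_le_sum_of_subset_of_nonneg
            · intro q hq
              exact Finset.mem_pi.2 fun a ha => Finset.mem_univ _
            · intro q _ _
              exact (Real.exp_pos _).le
    rw [hev, ← hfib]
    calc ∑ C ∈ 𝒞, ∑ p ∈ Ωev.filter (fun p => cluster G U (patch U η p) x = C), w p
        ≤ ∑ C ∈ 𝒞, lam ^ C.card * wsum E U η (fun _ => (1:ℝ)) :=
          Finset.sum_le_sum hCbound
      _ = (∑ C ∈ 𝒞, lam ^ C.card) * wsum E U η (fun _ => (1:ℝ)) := by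
          rw [Finset.sum_mul]
      _ = phi G lam U x * wsum E U η (fun _ => (1:ℝ)) := rfl
  -- conclusion
  have hphi : phi G lam U x ≤ Real.exp 1 * lam :=
    phi_le G hlf hlam0 Δ hΔ (by rw [hkey]; exact hexpβ'.le) U x
  have hfinal : phi G lam U x ≤ Real.exp (-β') / (1 - Real.exp (-β')) := by
    have h1 : Real.exp 1 * lam ≤ Real.exp (-β') := by
      have h2 : Real.exp 1 * lam * 1 ≤ Real.exp 1 * lam * ((Δ:ℝ)+1) := by
        apply mul_le_mul_of_nonneg_left (by linarith) (by positivity)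
      rw [mul_one] at h2
      linarith [hkey]
    have h3 : Real.exp (-β') ≤ Real.exp (-β') / (1 - Real.exp (-β')) := by
      rw [le_div_iff₀ (by linarith)]
      nlinarith [Real.exp_pos (-β')]
    linarith [hphi]
  rw [gProb, gExp, div_le_iff₀ hZpos]
  have hchain := le_trans hNum (mul_le_mul_of_nonneg_right hfinal hZpos.le)
  convert hchain using 3 with σ
  by_cases h : σ x = false <;> simp [h]
end
end

section
/- Let G be an infinite (g,o)-growing graph with g ≥ 1 and maximal degree Δ < ∞, set δ = 1 + log(Δ+1), and fix i ∈ {0,…,m}, S ⊆ L_i, U = F_{i+1} ∪ S. Let x ∈ S and y ∈ L_i \ S with graph distance d(x,y) = ℓ > 1. Then for every β with β′ = 2gβ − δ > 0, the μ_U^−-probability of the event that there is a path in the subgraph induced on U ∪ {y} from y to x all of whose vertices lying in U carry spin −1 is at most e^{δ} e^{−β′ℓ}/(1 − e^{−β′}). -/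
/- Common framework: Ising model with boundary conditions on (finite pieces of)
   locally finite graphs, heat-bath Glauber dynamics quantities. -/

open Finset
open scoped Classical

noncomputable section

open IsingGlauber

/- ### Auxiliary development ### -/



namespace S11E
open IsingGlauber SimpleGraph
variable {V : Type*} [DecidableEq V]

lemma mem_nbr (G : SimpleGraph V) (hlf : G.LocallyFinite) {u v : V} :
    v ∈ nbr G hlf u ↔ G.Adj u v := by
  simp [nbr, SimpleGraph.mem_neighborFinset]

lemma spin_not (b : Bool) : spin (!b) = - spin b := by cases b <;> simp [spin]

lemma spin_false : spin false = -1 := by simp [spin]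

lemma spin_true : spin true = 1 := by simp [spin]

lemma neg_one_le_spin (b : Bool) : -1 ≤ spin b := by cases b <;> simp [spin]

lemma nbr_subset_cl (G : SimpleGraph V) (hlf : G.LocallyFinite) (U : Finset V)
    {u : V} (hu : u ∈ U) : nbr G hlf u ⊆ cl G hlf U := by
  intro v hv
  by_cases h : v ∈ U
  · exact Finset.mem_union_left _ h
  · exact Finset.mem_union_right _ (Finset.mem_sdiff.mpr
      ⟨Finset.mem_biUnion.mpr ⟨u, hu, hv⟩, h⟩)

lemma energy_flip_diff (G : SimpleGraph V) (hlf : G.LocallyFinite) (U C : Finset V)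
    (hCU : C ⊆ U) (σ : V → Bool) (hminus : ∀ u ∈ C, σ u = false) :
    energyB G hlf U (fun v => if v ∈ C then !(σ v) else σ v) - energyB G hlf U σ
      = 2 * ∑ u ∈ C, ∑ v ∈ (nbr G hlf u) \ C, spin (σ v) := by
  set W := cl G hlf U with hW
  have hUW : U ⊆ W := Finset.subset_union_left
  have hCW : C ⊆ W := hCU.trans hUW
  set τ : V → Bool := fun v => if v ∈ C then !(σ v) else σ v with hτ
  set s : V → ℝ := fun v => spin (σ v) with hs
  have hτspin : ∀ v : V, spin (τ v) = (if v ∈ C then (-1 : ℝ) else 1) * s v := by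
    intro v
    by_cases h : v ∈ C <;> simp [hτ, hs, h, spin_not]
  -- rewrite difference of energies as a single double sum
  have step1 : energyB G hlf U τ - energyB G hlf U σ
      = (1/2) * ∑ a ∈ W, ∑ b ∈ W, (if G.Adj a b then
          spin (τ a) * spin (τ b) - s a * s b else 0) := by
    rw [energyB, energyB, ← mul_sub]
    congr 1
    rw [← Finset.sum_sub_distrib]
    apply Finset.sum_congr rfl
    intro a _
    rw [← Finset.sum_sub_distrib, Finset.sum_filter]
  -- compute the summand
  have step2 : ∀ a ∈ W, ∀ b ∈ W, (if G.Adj a b then spin (τ a) * spin (τ b) - s a * s b else 0)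
      = (if a ∈ C then (if b ∈ C then 0 else (if G.Adj a b then 2 * s b else 0))
         else (if b ∈ C then (if G.Adj a b then 2 * s a else 0) else 0)) := by
    intro a _ b _
    by_cases hA : G.Adj a b
    · rw [if_pos hA, hτspin a, hτspin b]
      by_cases ha : a ∈ C <;> by_cases hb : b ∈ C <;>
        simp only [ha, hb, if_pos, if_neg, if_true, if_false, hA]
      · ring
      · have : s a = -1 := by rw [hs]; simp only [hminus a ha, spin_false]
        rw [this]; ring
      · have : s b = -1 := by rw [hs]; simp only [hminus b hb, spin_false]
        rw [this]; ring
      · ring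
    · rw [if_neg hA]
      by_cases ha : a ∈ C <;> by_cases hb : b ∈ C <;> simp [ha, hb, hA]
  rw [step1, Finset.sum_congr rfl (fun a ha => Finset.sum_congr rfl (fun b hb => step2 a ha b hb))]
  -- split the outer sums over C and W \ C
  have houter : ∀ a : V, a ∈ W → ∑ b ∈ W, (if a ∈ C then (if b ∈ C then 0 else (if G.Adj a b then 2 * s b else 0))
         else (if b ∈ C then (if G.Adj a b then 2 * s a else 0) else 0))
      = (if a ∈ C then (∑ b ∈ W \ C, (if G.Adj a b then 2 * s b else 0))
         else (∑ b ∈ C, (if G.Adj a b then 2 * s a else 0))) := by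
    intro a _
    by_cases ha : a ∈ C
    · simp only [ha, if_true]
      rw [← Finset.sum_sdiff hCW]
      have h1 : ∑ b ∈ C, (if b ∈ C then (0:ℝ) else (if G.Adj a b then 2 * s b else 0)) = 0 :=
        Finset.sum_eq_zero (fun b hb => by rw [if_pos hb])
      have h2 : ∑ b ∈ W \ C, (if b ∈ C then (0:ℝ) else (if G.Adj a b then 2 * s b else 0))
          = ∑ b ∈ W \ C, (if G.Adj a b then 2 * s b else 0) :=
        Finset.sum_congr rfl (fun b hb => by rw [if_neg (Finset.mem_sdiff.mp hb).2])
      rw [h1, h2, add_zero]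
    · simp only [ha, if_false]
      rw [← Finset.sum_sdiff hCW]
      have h1 : ∑ b ∈ W \ C, (if b ∈ C then (if G.Adj a b then 2 * s a else 0) else 0) = 0 := by
        apply Finset.sum_eq_zero
        intro b hb
        rw [if_neg (Finset.mem_sdiff.mp hb).2]
      have h2 : ∑ b ∈ C, (if b ∈ C then (if G.Adj a b then 2 * s a else 0) else 0)
          = ∑ b ∈ C, (if G.Adj a b then 2 * s a else 0) :=
        Finset.sum_congr rfl (fun b hb => by rw [if_pos hb])
      rw [h1, h2, zero_add]
  rw [Finset.sum_congr rfl houter]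
  rw [← Finset.sum_sdiff hCW]
  have hB : ∑ a ∈ W \ C, (if a ∈ C then (∑ b ∈ W \ C, (if G.Adj a b then 2 * s b else 0))
         else (∑ b ∈ C, (if G.Adj a b then 2 * s a else 0)))
      = ∑ a ∈ W \ C, ∑ b ∈ C, (if G.Adj a b then 2 * s a else 0) :=
    Finset.sum_congr rfl (fun a ha => by rw [if_neg (Finset.mem_sdiff.mp ha).2])
  have hA : ∑ a ∈ C, (if a ∈ C then (∑ b ∈ W \ C, (if G.Adj a b then 2 * s b else 0))
         else (∑ b ∈ C, (if G.Adj a b then 2 * s a else 0)))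
      = ∑ a ∈ C, ∑ b ∈ W \ C, (if G.Adj a b then 2 * s b else 0) :=
    Finset.sum_congr rfl (fun a ha => by rw [if_pos ha])
  rw [hA, hB]
  have hBA : ∑ a ∈ W \ C, ∑ b ∈ C, (if G.Adj a b then 2 * s a else 0)
      = ∑ a ∈ C, ∑ b ∈ W \ C, (if G.Adj a b then 2 * s b else 0) := by
    rw [Finset.sum_comm]
    apply Finset.sum_congr rfl
    intro u _
    apply Finset.sum_congr rfl
    intro v _
    rw [G.adj_comm]
  rw [hBA]
  have hfilter : ∀ u ∈ C, ∑ b ∈ W \ C, (if G.Adj u b then 2 * s b else 0)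
      = ∑ v ∈ (nbr G hlf u) \ C, 2 * s v := by
    intro u hu
    rw [← Finset.sum_filter]
    apply Finset.sum_congr _ (fun _ _ => rfl)
    ext b
    simp only [Finset.mem_filter, Finset.mem_sdiff, mem_nbr]
    constructor
    · rintro ⟨⟨hbW, hbC⟩, hadj⟩; exact ⟨hadj, hbC⟩
    · rintro ⟨hadj, hbC⟩
      exact ⟨⟨nbr_subset_cl G hlf U (hCU hu) ((mem_nbr G hlf).mpr hadj), hbC⟩, hadj⟩
  rw [Finset.sum_congr rfl hfilter]
  rw [← Finset.sum_add_distrib]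
  have : ∀ u ∈ C, (∑ v ∈ (nbr G hlf u) \ C, 2 * s v) + (∑ v ∈ (nbr G hlf u) \ C, 2 * s v)
      = 4 * ∑ v ∈ (nbr G hlf u) \ C, s v := by
    intro u _
    rw [← Finset.mul_sum]
    ring
  rw [Finset.sum_congr rfl this, Finset.mul_sum, Finset.mul_sum]
  apply Finset.sum_congr rfl
  intro u _
  ring

end S11E


namespace S11
open IsingGlauber SimpleGraph
variable {V : Type*} [DecidableEq V] (G : SimpleGraph V) (hlf : G.LocallyFinite) (x : V) (Δ : ℕ)
lemma mem_nbr {u v : V} : v ∈ nbr G hlf u ↔ G.Adj u v := by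
  simp [nbr, SimpleGraph.mem_neighborFinset]
def ConnTo (C : Finset V) : Prop :=
  x ∈ C ∧ ∀ v ∈ C, ∃ w : G.Walk x v, ∀ u ∈ w.support, u ∈ C
def nthNbr (u : V) (s : ℕ) : V := ((nbr G hlf u).toList).getD s x
def kval (L : List V) (κ : ℕ) : V := nthNbr G hlf x (L.getD (κ / Δ) x) (κ % Δ)
def cand (C : Finset V) (L : List V) : Finset ℕ :=
  (Finset.range (Δ * L.length)).filter
    (fun κ => kval G hlf x Δ L κ ∈ C ∧ kval G hlf x Δ L κ ∉ L)
def explore (C : Finset V) : ℕ → List V × List ℕ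
  | 0 => ([x], [])
  | (n+1) =>
      let P := explore C n
      if h : (cand G hlf x Δ C P.1).Nonempty then
        (P.1 ++ [kval G hlf x Δ P.1 ((cand G hlf x Δ C P.1).min' h)],
         P.2 ++ [(cand G hlf x Δ C P.1).min' h])
      else P
def decodeL (code : List ℕ) : List V :=
  code.foldl (fun L κ => L ++ [kval G hlf x Δ L κ]) [x]
lemma decodeL_append (code : List ℕ) (κ : ℕ) :
    decodeL G hlf x Δ (code ++ [κ]) =
      decodeL G hlf x Δ code ++ [kval G hlf x Δ (decodeL G hlf x Δ code) κ] := by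
  simp [decodeL, List.foldl_append]
lemma exists_boundary (C : Finset V) (L : List V) :
    ∀ {a v : V} (w : G.Walk a v), (∀ u ∈ w.support, u ∈ C) → a ∈ L → v ∉ L →
      ∃ b c : V, b ∈ L ∧ G.Adj b c ∧ c ∈ C ∧ c ∉ L := by
  intro a v w
  induction w with
  | nil => intro _ ha hv; exact absurd ha hv
  | @cons a b v h w ih =>
      intro hsup ha hv
      by_cases hb : b ∈ L
      · exact ih (fun u hu => hsup u (by simp [SimpleGraph.Walk.support_cons, hu])) hb hv
      · exact ⟨a, b, ha, h, hsup b (by simp [SimpleGraph.Walk.support_cons]), hb⟩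
lemma cand_nonempty (hΔpos : 0 < Δ) (hdeg : ∀ v : V, (nbr G hlf v).card ≤ Δ)
    (C : Finset V) (hC : ConnTo G x C) (L : List V)
    (hxL : x ∈ L) (v : V) (hv : v ∈ C) (hvL : v ∉ L) :
    (cand G hlf x Δ C L).Nonempty := by
  obtain ⟨w, hw⟩ := hC.2 v hv
  obtain ⟨b, c, hbL, hadj, hcC, hcL⟩ := exists_boundary G C L w hw hxL hvL
  obtain ⟨t, ht, hbt⟩ := List.getElem_of_mem hbL
  have hc : c ∈ (nbr G hlf b).toList := by
    rw [Finset.mem_toList, mem_nbr]; exact hadj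
  obtain ⟨s, hs, hcs⟩ := List.getElem_of_mem hc
  have hsΔ : s < Δ := lt_of_lt_of_le (by simpa using hs) (by simpa [Finset.length_toList] using hdeg b)
  refine ⟨Δ * t + s, ?_⟩
  have hdiv : (Δ * t + s) / Δ = t := by
    rw [Nat.mul_add_div hΔpos, Nat.div_eq_of_lt hsΔ, Nat.add_zero]
  have hmod : (Δ * t + s) % Δ = s := by
    rw [Nat.mul_add_mod, Nat.mod_eq_of_lt hsΔ]
  have hval : kval G hlf x Δ L (Δ * t + s) = c := by
    rw [kval, hdiv, hmod, List.getD_eq_getElem L x ht, hbt, nthNbr,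
      List.getD_eq_getElem _ x (by simpa using hs), hcs]
  simp only [cand, Finset.mem_filter, Finset.mem_range, hval]
  refine ⟨?_, hcC, hcL⟩
  calc Δ * t + s < Δ * t + Δ := by omega
  _ = Δ * (t + 1) := by ring
  _ ≤ Δ * L.length := Nat.mul_le_mul_left _ (by omega)

/-- The full invariant of the exploration process. -/
lemma explore_invariant (hΔpos : 0 < Δ) (hdeg : ∀ v : V, (nbr G hlf v).card ≤ Δ)
    (C : Finset V) (hC : ConnTo G x C) :
    ∀ n : ℕ, n + 1 ≤ C.card →
      (explore G hlf x Δ C n).1.length = n + 1 ∧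
      (explore G hlf x Δ C n).1.Nodup ∧
      (∀ u ∈ (explore G hlf x Δ C n).1, u ∈ C) ∧
      x ∈ (explore G hlf x Δ C n).1 ∧
      (explore G hlf x Δ C n).2.length = n ∧
      (explore G hlf x Δ C n).2.Chain' (· < ·) ∧
      (∀ κ₀ ∈ (explore G hlf x Δ C n).2, κ₀ < Δ * (explore G hlf x Δ C n).1.length) ∧
      (∀ κ ∈ cand G hlf x Δ C (explore G hlf x Δ C n).1,
        ∀ κ₀ ∈ (explore G hlf x Δ C n).2, κ₀ < κ) ∧
      decodeL G hlf x Δ (explore G hlf x Δ C n).2 = (explore G hlf x Δ C n).1 := by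
  intro n
  induction n with
  | zero =>
      intro _
      refine ⟨rfl, by simp [explore], by simpa [explore] using hC.1, by simp [explore],
        rfl, by simp only [explore]; exact List.isChain_nil, by simp [explore], by simp [explore], by simp [explore, decodeL]⟩
  | succ n ih =>
      intro hn
      obtain ⟨hlen, hnodup, hsubC, hxL, hclen, hchain, hbound, hmininv, hdec⟩ := ih (by omega)
      set L := (explore G hlf x Δ C n).1 with hLdef
      set code := (explore G hlf x Δ C n).2 with hcodedef
      -- there is a vertex of C not in L
      have htf : L.toFinset.card = n + 1 := by
        rw [List.toFinset_card_of_nodup hnodup, hlen]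
      have hsub : L.toFinset ⊆ C := fun u hu => hsubC u (List.mem_toFinset.mp hu)
      have hne : L.toFinset ≠ C := by
        intro h; rw [h] at htf; omega
      obtain ⟨v, hvC, hvL'⟩ := (Finset.ssubset_iff_of_subset hsub).mp (hsub.ssubset_of_ne hne)
      have hvL : v ∉ L := fun h => hvL' (List.mem_toFinset.mpr h)
      have hcand : (cand G hlf x Δ C L).Nonempty :=
        cand_nonempty G hlf x Δ hΔpos hdeg C hC L hxL v hvC hvL
      set κs := (cand G hlf x Δ C L).min' hcand with hκs
      set ws := kval G hlf x Δ L κs with hws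
      have hstep : explore G hlf x Δ C (n+1) = (L ++ [ws], code ++ [κs]) := by
        rw [explore]; simp only [← hLdef, ← hcodedef, dif_pos hcand]; rfl
      have hκsmem := (cand G hlf x Δ C L).min'_mem hcand
      simp only [cand, Finset.mem_filter, Finset.mem_range] at hκsmem
      obtain ⟨hκslt, hwsC, hwsL⟩ := hκsmem
      rw [hstep]
      have hlen' : (L ++ [ws]).length = n + 2 := by simp [hlen]
      -- key: new candidates dominate everything in the new code
      have hdom : ∀ κ ∈ cand G hlf x Δ C (L ++ [ws]), ∀ κ₀ ∈ code ++ [κs], κ₀ < κ := by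
        intro κ hκ κ₀ hκ₀
        simp only [cand, Finset.mem_filter, Finset.mem_range] at hκ
        obtain ⟨hκlt, hκC, hκL⟩ := hκ
        by_cases hdivlt : κ / Δ < L.length
        · have hsame : kval G hlf x Δ (L ++ [ws]) κ = kval G hlf x Δ L κ := by
            rw [kval, kval, List.getD_append _ _ _ _ hdivlt]
          have hκcand : κ ∈ cand G hlf x Δ C L := by
            simp only [cand, Finset.mem_filter, Finset.mem_range]
            refine ⟨?_, by rwa [hsame] at hκC,
              fun h => hκL (by rw [hsame]; exact List.mem_append.mpr (Or.inl h))⟩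
            calc κ = Δ * (κ / Δ) + κ % Δ := (Nat.div_add_mod κ Δ).symm
            _ < Δ * (κ / Δ) + Δ := Nat.add_lt_add_left (Nat.mod_lt κ hΔpos) _
            _ = Δ * (κ / Δ + 1) := by ring
            _ ≤ Δ * L.length := Nat.mul_le_mul_left _ (by omega)
          have hκne : κ ≠ κs := by
            intro h
            apply hκL
            rw [hsame, h, ← hws]
            simp
          have hκgt : κs < κ :=
            lt_of_le_of_ne ((cand G hlf x Δ C L).min'_le κ hκcand) (Ne.symm hκne)
          rcases List.mem_append.mp hκ₀ with h | h
          · exact hmininv κ hκcand κ₀ h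
          · simp only [List.mem_singleton] at h; exact h ▸ hκgt
        · have hκbig : Δ * L.length ≤ κ := by
            have h1 : L.length ≤ κ / Δ := le_of_not_gt hdivlt
            calc Δ * L.length ≤ Δ * (κ / Δ) := Nat.mul_le_mul_left _ h1
            _ ≤ κ := Nat.mul_div_le κ Δ
          rcases List.mem_append.mp hκ₀ with h | h
          · exact lt_of_lt_of_le (hbound κ₀ h) hκbig
          · simp only [List.mem_singleton] at h
            exact h ▸ lt_of_lt_of_le hκslt hκbig
      refine ⟨hlen', ?_, ?_, ?_, ?_, ?_, ?_, hdom, ?_⟩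
      · simp only [List.nodup_append, hnodup, true_and]
        constructor
        · exact List.nodup_singleton _
        · intro a ha b hb hab
          simp only [List.mem_singleton] at hb
          subst hb
          rw [hab] at ha
          exact hwsL ha
      · intro u hu
        rcases List.mem_append.mp hu with h | h
        · exact hsubC u h
        · simp only [List.mem_singleton] at h; rw [h]; exact hwsC
      · exact List.mem_append.mpr (Or.inl hxL)
      · simp [hclen]
      · -- Chain'
        have hpair : (code ++ [κs]).Pairwise (· < ·) := by
          rw [List.pairwise_append]
          exact ⟨List.isChain_iff_pairwise.mp hchain, by simp,
            fun a ha b hb => by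
              simp only [List.mem_singleton] at hb
              rw [hb]
              exact hmininv κs (by simp only [cand, Finset.mem_filter, Finset.mem_range]
                                   exact ⟨hκslt, hwsC, hwsL⟩) a ha⟩
        exact List.isChain_iff_pairwise.mpr hpair
      · intro κ₀ hκ₀
        rcases List.mem_append.mp hκ₀ with h | h
        · exact lt_of_lt_of_le (hbound κ₀ h) (Nat.mul_le_mul_left _ (by simp))
        · simp only [List.mem_singleton] at h
          subst h
          exact lt_of_lt_of_le hκslt (Nat.mul_le_mul_left _ (by simp))
      · rw [decodeL_append, hdec]

lemma card_conn_le (hΔpos : 0 < Δ) (hdeg : ∀ v : V, (nbr G hlf v).card ≤ Δ)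
    (k : ℕ) (hk : 1 ≤ k) (𝒦 : Finset (Finset V))
    (h𝒦 : ∀ C ∈ 𝒦, ConnTo G x C ∧ C.card = k) :
    𝒦.card ≤ (Δ * k).choose (k - 1) := by
  classical
  have hcard : ((Finset.range (Δ * k)).powersetCard (k - 1)).card = (Δ * k).choose (k - 1) := by
    rw [Finset.card_powersetCard, Finset.card_range]
  rw [← hcard]
  apply Finset.card_le_card_of_injOn (fun C => (explore G hlf x Δ C (k - 1)).2.toFinset)
  · intro C hC
    obtain ⟨hconn, hcardC⟩ := h𝒦 C hC
    obtain ⟨hlen, hnd, hsub, hxm, hclen, hchain, hbnd, hmin, hdec⟩ :=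
      explore_invariant G hlf x Δ hΔpos hdeg C hconn (k - 1) (by omega)
    have hndc : (explore G hlf x Δ C (k - 1)).2.Nodup :=
      (List.isChain_iff_pairwise.mp hchain).imp (fun h => ne_of_lt h)
    rw [Finset.mem_coe, Finset.mem_powersetCard]
    constructor
    · intro κ hκ
      rw [List.mem_toFinset] at hκ
      rw [Finset.mem_range]
      have := hbnd κ hκ
      rwa [hlen, (by omega : k - 1 + 1 = k)] at this
    · rw [List.toFinset_card_of_nodup hndc, hclen]
  · intro C₁ hC₁ C₂ hC₂ heq
    obtain ⟨hconn₁, hcard₁⟩ := h𝒦 C₁ (by simpa using hC₁)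
    obtain ⟨hconn₂, hcard₂⟩ := h𝒦 C₂ (by simpa using hC₂)
    obtain ⟨hlen₁, hnd₁, hsub₁, _, hclen₁, hchain₁, _, _, hdec₁⟩ :=
      explore_invariant G hlf x Δ hΔpos hdeg C₁ hconn₁ (k - 1) (by omega)
    obtain ⟨hlen₂, hnd₂, hsub₂, _, hclen₂, hchain₂, _, _, hdec₂⟩ :=
      explore_invariant G hlf x Δ hΔpos hdeg C₂ hconn₂ (k - 1) (by omega)
    have hndc₁ : (explore G hlf x Δ C₁ (k - 1)).2.Nodup :=
      (List.isChain_iff_pairwise.mp hchain₁).imp (fun h => ne_of_lt h)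
    have hndc₂ : (explore G hlf x Δ C₂ (k - 1)).2.Nodup :=
      (List.isChain_iff_pairwise.mp hchain₂).imp (fun h => ne_of_lt h)
    have hperm : List.Perm (explore G hlf x Δ C₁ (k - 1)).2 (explore G hlf x Δ C₂ (k - 1)).2 :=
      List.perm_of_nodup_nodup_toFinset_eq hndc₁ hndc₂ heq
    haveI : IsAntisymm ℕ (· < ·) := ⟨fun a b h1 h2 => absurd h1 (lt_asymm h2)⟩
    have hcodes : (explore G hlf x Δ C₁ (k - 1)).2 = (explore G hlf x Δ C₂ (k - 1)).2 :=
      List.Perm.eq_of_pairwise'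
        (List.isChain_iff_pairwise.mp hchain₁) (List.isChain_iff_pairwise.mp hchain₂) hperm
    have hL : (explore G hlf x Δ C₁ (k - 1)).1 = (explore G hlf x Δ C₂ (k - 1)).1 := by
      rw [← hdec₁, ← hdec₂, hcodes]
    have hCL₁ : (explore G hlf x Δ C₁ (k - 1)).1.toFinset = C₁ := by
      apply Finset.eq_of_subset_of_card_le
      · intro u hu; exact hsub₁ u (List.mem_toFinset.mp hu)
      · rw [List.toFinset_card_of_nodup hnd₁, hlen₁, hcard₁]; omega
    have hCL₂ : (explore G hlf x Δ C₂ (k - 1)).1.toFinset = C₂ := by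
      apply Finset.eq_of_subset_of_card_le
      · intro u hu; exact hsub₂ u (List.mem_toFinset.mp hu)
      · rw [List.toFinset_card_of_nodup hnd₂, hlen₂, hcard₂]; omega
    rw [← hCL₁, ← hCL₂, hL]

end S11




namespace S11B
open IsingGlauber SimpleGraph S11E
variable {V : Type*} [DecidableEq V]

lemma dist_adj_le (G : SimpleGraph V) (hconn : G.Connected) (o : V) {u v : V}
    (h : G.Adj u v) : G.dist o v ≤ G.dist o u + 1 := by
  have h1 := hconn.dist_triangle (u := o) (v := u) (w := v)
  have h2 : G.dist u v ≤ 1 := by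
    have := SimpleGraph.dist_le (SimpleGraph.Walk.cons h SimpleGraph.Walk.nil)
    simpa using this
  omega

lemma inter_card_eq_sum (A C : Finset V) :
    (A ∩ C).card = ∑ v ∈ C, (if v ∈ A then 1 else 0) := by
  rw [Finset.inter_comm, ← Finset.filter_mem_eq_inter, Finset.card_filter]

lemma swap_count (G : SimpleGraph V) (hlf : G.LocallyFinite) (o : V) (C : Finset V) :
    ∑ u ∈ C, ((nbr G hlf u).filter (fun z => G.dist o z = G.dist o u + 1) ∩ C).card
      ≤ ∑ u ∈ C, ((nbr G hlf u).filter (fun z => ¬ (G.dist o z = G.dist o u + 1)) ∩ C).card := by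
  have lhs : ∑ u ∈ C, ((nbr G hlf u).filter (fun z => G.dist o z = G.dist o u + 1) ∩ C).card
      = ∑ u ∈ C, ∑ v ∈ C, (if G.Adj u v ∧ G.dist o v = G.dist o u + 1 then 1 else 0) := by
    apply Finset.sum_congr rfl
    intro u _
    rw [inter_card_eq_sum]
    apply Finset.sum_congr rfl
    intro v _
    congr 1
    simp [Finset.mem_filter, mem_nbr]
  have rhs : ∑ u ∈ C, ((nbr G hlf u).filter (fun z => ¬ (G.dist o z = G.dist o u + 1)) ∩ C).card
      = ∑ u ∈ C, ∑ v ∈ C, (if G.Adj u v ∧ ¬ (G.dist o v = G.dist o u + 1) then 1 else 0) := by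
    apply Finset.sum_congr rfl
    intro u _
    rw [inter_card_eq_sum]
    apply Finset.sum_congr rfl
    intro v _
    congr 1
    simp [Finset.mem_filter, mem_nbr]
  rw [lhs, rhs, Finset.sum_comm]
  apply Finset.sum_le_sum
  intro u _
  apply Finset.sum_le_sum
  intro v _
  by_cases h : G.Adj v u ∧ G.dist o u = G.dist o v + 1
  · rw [if_pos h, if_pos ⟨h.1.symm, by omega⟩]
  · rw [if_neg h]
    split <;> omega

/-- The main per-cluster boundary estimate. -/
lemma cluster_boundary_bound (G : SimpleGraph V) (hlf : G.LocallyFinite)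
    (hconn : G.Connected) (g : ℕ) (o : V) (hgrow : IsGrowing G hlf g o)
    (C : Finset V) (σ : V → Bool)
    (hplus : ∀ u ∈ C, ∀ v ∈ nbr G hlf u, v ∉ C → G.dist o v = G.dist o u + 1 → σ v = true) :
    (g : ℝ) * C.card ≤ ∑ u ∈ C, ∑ v ∈ (nbr G hlf u) \ C, spin (σ v) := by
  classical
  set au : V → Finset V := fun u => (nbr G hlf u).filter (fun z => G.dist o z = G.dist o u + 1)
    with hau
  set bu : V → Finset V := fun u => (nbr G hlf u).filter (fun z => ¬ (G.dist o z = G.dist o u + 1))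
    with hbu
  have hper : ∀ u ∈ C, ((au u).card : ℝ) - ((au u ∩ C).card : ℝ)
      - ((bu u).card : ℝ) + ((bu u ∩ C).card : ℝ)
      ≤ ∑ v ∈ (nbr G hlf u) \ C, spin (σ v) := by
    intro u hu
    have hsplit : (nbr G hlf u) \ C
        = ((au u) \ C) ∪ ((bu u) \ C) := by
      ext v
      simp only [Finset.mem_union, Finset.mem_sdiff, hau, hbu, Finset.mem_filter]
      by_cases h : G.dist o v = G.dist o u + 1 <;> tauto
    have hdisj : Disjoint ((au u) \ C) ((bu u) \ C) := by
      rw [Finset.disjoint_left]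
      intro a ha hb
      rw [Finset.mem_sdiff, hau, Finset.mem_filter] at ha
      rw [Finset.mem_sdiff, hbu, Finset.mem_filter] at hb
      exact hb.1.2 ha.1.2
    rw [hsplit, Finset.sum_union hdisj]
    have h1 : ∑ v ∈ (au u) \ C, spin (σ v) = ((au u) \ C).card := by
      rw [Finset.sum_congr rfl (g := fun _ => (1:ℝ)) ?_, Finset.sum_const, nsmul_eq_mul, mul_one]
      intro v hv
      rw [Finset.mem_sdiff, hau, Finset.mem_filter] at hv
      rw [hplus u hu v hv.1.1 hv.2 hv.1.2, spin_true]
    have h2 : (-1 : ℝ) * ((bu u) \ C).card ≤ ∑ v ∈ (bu u) \ C, spin (σ v) := by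
      calc (-1:ℝ) * ((bu u) \ C).card = ∑ _v ∈ (bu u) \ C, (-1:ℝ) := by
            rw [Finset.sum_const, nsmul_eq_mul]; ring
      _ ≤ _ := Finset.sum_le_sum (fun v _ => neg_one_le_spin _)
    have hc1 : (((au u) \ C).card : ℝ) = ((au u).card : ℝ) - ((au u ∩ C).card : ℝ) := by
      have := Finset.card_sdiff_add_card_inter (au u) C
      have : ((au u \ C).card + (au u ∩ C).card : ℕ) = (au u).card := this
      push_cast [← this]
      ring
    have hc2 : (((bu u) \ C).card : ℝ) = ((bu u).card : ℝ) - ((bu u ∩ C).card : ℝ) := by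
      have := Finset.card_sdiff_add_card_inter (bu u) C
      have : ((bu u \ C).card + (bu u ∩ C).card : ℕ) = (bu u).card := this
      push_cast [← this]
      ring
    calc ((au u).card : ℝ) - ((au u ∩ C).card : ℝ) - ((bu u).card : ℝ) + ((bu u ∩ C).card : ℝ)
        = (((au u) \ C).card : ℝ) + ((-1 : ℝ) * ((bu u) \ C).card) := by
          rw [hc1, hc2]; ring
    _ ≤ ∑ v ∈ (au u) \ C, spin (σ v) + ∑ v ∈ (bu u) \ C, spin (σ v) := by
          rw [h1]
          exact add_le_add_right h2 _
  have hgrowR : ∀ u : V, ((bu u).card : ℝ) + (g : ℝ) ≤ ((au u).card : ℝ) := by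
    intro u
    have hb : bu u = (nbr G hlf u).filter (fun z => G.dist o z ≤ G.dist o u) := by
      apply Finset.filter_congr
      intro v hv
      have htri := dist_adj_le G hconn o ((mem_nbr G hlf).mp hv)
      constructor
      · intro h; omega
      · intro h; omega
    have := hgrow u
    rw [← hb] at this
    exact_mod_cast this
  have hswapR : ∑ u ∈ C, ((au u ∩ C).card : ℝ) ≤ ∑ u ∈ C, ((bu u ∩ C).card : ℝ) := by
    exact_mod_cast swap_count G hlf o C
  calc (g : ℝ) * C.card = ∑ _u ∈ C, (g : ℝ) := by rw [Finset.sum_const, nsmul_eq_mul]; ring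
  _ ≤ ∑ u ∈ C, (((au u).card : ℝ) - ((au u ∩ C).card : ℝ)
        - ((bu u).card : ℝ) + ((bu u ∩ C).card : ℝ)) := by
      have hsplitsum : ∑ u ∈ C, (((au u).card : ℝ) - ((au u ∩ C).card : ℝ)
          - ((bu u).card : ℝ) + ((bu u ∩ C).card : ℝ))
          = ∑ u ∈ C, (((au u).card : ℝ) - ((bu u).card : ℝ))
            + (∑ u ∈ C, ((bu u ∩ C).card : ℝ) - ∑ u ∈ C, ((au u ∩ C).card : ℝ)) := by
        rw [← Finset.sum_sub_distrib, ← Finset.sum_add_distrib]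
        apply Finset.sum_congr rfl
        intro u _
        ring
      rw [hsplitsum]
      have hterm : ∑ u ∈ C, (g:ℝ) ≤ ∑ u ∈ C, (((au u).card : ℝ) - ((bu u).card : ℝ)) :=
        Finset.sum_le_sum (fun u _ => by have := hgrowR u; linarith)
      linarith [hswapR]
  _ ≤ ∑ u ∈ C, ∑ v ∈ (nbr G hlf u) \ C, spin (σ v) := Finset.sum_le_sum hper

end S11B


namespace S11M
open IsingGlauber SimpleGraph S11 S11E S11B
variable {V : Type*} [DecidableEq V]

lemma walk_exists_dist (G : SimpleGraph V) (hconn : G.Connected) (x : V) :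
    ∀ {a b : V} (w : G.Walk a b) (j : ℕ), G.dist x a ≤ j → j ≤ G.dist x b →
      ∃ v ∈ w.support, G.dist x v = j := by
  intro a b w
  induction w with
  | nil => intro j h1 h2; exact ⟨_, by simp, le_antisymm h1 h2⟩
  | @cons a c b h w ih =>
      intro j h1 h2
      by_cases hj : G.dist x a = j
      · exact ⟨a, by simp, hj⟩
      · have h1' : G.dist x a < j := lt_of_le_of_ne h1 hj
        have hc : G.dist x c ≤ j := le_trans (dist_adj_le G hconn x h) (by omega)
        obtain ⟨v, hv, hdv⟩ := ih j hc h2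
        exact ⟨v, by simp [hv], hdv⟩

def Reach (G : SimpleGraph V) (U : Finset V) (x : V) (σ : V → Bool) (v : V) : Prop :=
  ∃ w : G.Walk x v, ∀ u ∈ w.support, u ∈ U ∧ σ u = false

noncomputable def clusterOf (G : SimpleGraph V) (U : Finset V) (x : V) (σ : V → Bool) :
    Finset V :=
  U.filter (Reach G U x σ)

lemma reach_mem_U {G : SimpleGraph V} {U : Finset V} {x : V} {σ : V → Bool} {v : V}
    (h : Reach G U x σ v) : v ∈ U := by
  obtain ⟨w, hw⟩ := h
  exact (hw v (SimpleGraph.Walk.end_mem_support w)).1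

lemma mem_clusterOf {G : SimpleGraph V} {U : Finset V} {x : V} {σ : V → Bool} {v : V} :
    v ∈ clusterOf G U x σ ↔ Reach G U x σ v := by
  constructor
  · intro h; exact (Finset.mem_filter.mp h).2
  · intro h; exact Finset.mem_filter.mpr ⟨reach_mem_U h, h⟩

lemma clusterOf_spin_false {G : SimpleGraph V} {U : Finset V} {x : V} {σ : V → Bool} {v : V}
    (h : v ∈ clusterOf G U x σ) : σ v = false := by
  obtain ⟨w, hw⟩ := mem_clusterOf.mp h
  exact (hw v (SimpleGraph.Walk.end_mem_support w)).2

lemma clusterOf_subset {G : SimpleGraph V} {U : Finset V} {x : V} {σ : V → Bool} :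
    clusterOf G U x σ ⊆ U := Finset.filter_subset _ _

lemma clusterOf_connTo {G : SimpleGraph V} {U : Finset V} {x : V} {σ : V → Bool}
    (hx : x ∈ clusterOf G U x σ) : ConnTo G x (clusterOf G U x σ) := by
  refine ⟨hx, ?_⟩
  intro v hv
  obtain ⟨w, hw⟩ := mem_clusterOf.mp hv
  refine ⟨w, ?_⟩
  intro u hu
  refine mem_clusterOf.mpr ⟨w.takeUntil u hu, ?_⟩
  intro z hz
  exact hw z (SimpleGraph.Walk.support_takeUntil_subset w hu hz)

lemma clusterOf_maximal {G : SimpleGraph V} {U : Finset V} {x : V} {σ : V → Bool} {u v : V}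
    (hu : u ∈ clusterOf G U x σ) (hadj : G.Adj u v) (hvU : v ∈ U) (hvσ : σ v = false) :
    v ∈ clusterOf G U x σ := by
  obtain ⟨w, hw⟩ := mem_clusterOf.mp hu
  refine mem_clusterOf.mpr ⟨w.concat hadj, ?_⟩
  intro z hz
  rw [SimpleGraph.Walk.support_concat, List.mem_append] at hz
  rcases hz with hz | hz
  · exact hw z hz
  · simp only [List.mem_singleton] at hz
    subst hz
    exact ⟨hvU, hvσ⟩

lemma event_cluster_card (G : SimpleGraph V) (hconn : G.Connected) (U : Finset V)
    (x y : V) (σ : V → Bool)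
    (w : G.Walk y x) (hw : ∀ v ∈ w.support, v ∈ insert y U ∧ (v ∈ U → σ v = false))
    (hxy : 0 < G.dist x y) :
    G.dist x y ≤ (clusterOf G U x σ).card := by
  have hne : x ≠ y := by
    intro h; subst h; simp [SimpleGraph.dist_self] at hxy
  set wr := w.reverse with hwr
  have hyr : y ∈ wr.support := SimpleGraph.Walk.end_mem_support wr
  set q := wr.takeUntil y hyr with hq
  have hcnt : q.support.count y = 1 := wr.count_support_takeUntil_eq_one hyr
  have hqsub : ∀ u ∈ q.support, u ∈ w.support := by
    intro u hu
    have := SimpleGraph.Walk.support_takeUntil_subset wr hyr hu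
    rwa [SimpleGraph.Walk.support_reverse, List.mem_reverse] at this
  have hReach : ∀ v ∈ q.support, v ≠ y → Reach G U x σ v := by
    intro v hv hvy
    refine ⟨q.takeUntil v hv, ?_⟩
    intro u hu
    have huq : u ∈ q.support := SimpleGraph.Walk.support_takeUntil_subset q hv hu
    have huy : u ≠ y := by
      intro he
      subst he
      have hys : u ∈ (q.dropUntil v hv).support :=
        SimpleGraph.Walk.end_mem_support _
      have hytail : u ∈ (q.dropUntil v hv).support.tail := by
        have hhead := SimpleGraph.Walk.support_eq_cons (q.dropUntil v hv)
        rw [hhead] at hys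
        rcases List.mem_cons.mp hys with h | h
        · exact absurd h.symm hvy
        · rw [hhead]; exact h
      have hspec := q.take_spec hv
      have hcnt2 : q.support.count u
          = (q.takeUntil v hv).support.count u + (q.dropUntil v hv).support.tail.count u := by
        conv_lhs => rw [← hspec]
        rw [SimpleGraph.Walk.support_append, List.count_append]
      have c1 : 0 < (q.takeUntil v hv).support.count u := List.count_pos_iff.mpr hu
      have c2 : 0 < (q.dropUntil v hv).support.tail.count u := List.count_pos_iff.mpr hytail
      omega
    have huw : u ∈ w.support := hqsub u huq
    obtain ⟨hins, himp⟩ := hw u huw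
    have huU : u ∈ U := by
      rcases Finset.mem_insert.mp hins with h | h
      · exact absurd h huy
      · exact h
    exact ⟨huU, himp huU⟩
  set F := q.support.toFinset.filter (fun v => v ≠ y) with hF
  have hsub : F ⊆ clusterOf G U x σ := by
    intro v hv
    rw [hF, Finset.mem_filter, List.mem_toFinset] at hv
    have := hReach v hv.1 hv.2
    exact mem_clusterOf.mpr this
  have himg : Finset.range (G.dist x y) ⊆ F.image (G.dist x) := by
    intro j hj
    rw [Finset.mem_range] at hj
    obtain ⟨v, hv, hdv⟩ := walk_exists_dist G hconn x q j
      (by rw [SimpleGraph.dist_self]; omega) (by omega)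
    refine Finset.mem_image.mpr ⟨v, ?_, hdv⟩
    rw [hF, Finset.mem_filter, List.mem_toFinset]
    refine ⟨hv, ?_⟩
    intro he
    subst he
    omega
  calc G.dist x y = (Finset.range (G.dist x y)).card := (Finset.card_range _).symm
  _ ≤ (F.image (G.dist x)).card := Finset.card_le_card himg
  _ ≤ F.card := Finset.card_image_le
  _ ≤ (clusterOf G U x σ).card := Finset.card_le_card hsub

lemma tail_geom (β' : ℝ) (hpos : 0 < β') (ℓ M : ℕ) :
    ∑ k ∈ Finset.range M, (if k < ℓ then (0:ℝ) else Real.exp (-β' * k))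
      ≤ Real.exp (-β' * ℓ) / (1 - Real.exp (-β')) := by
  set r := Real.exp (-β') with hr
  have hr0 : 0 < r := Real.exp_pos _
  have hr1 : r < 1 := by
    rw [hr]
    have : -β' < 0 := by linarith
    calc Real.exp (-β') < Real.exp 0 := Real.exp_lt_exp.mpr this
    _ = 1 := Real.exp_zero
  have hrpow : ∀ k : ℕ, Real.exp (-β' * k) = r ^ k := by
    intro k
    rw [hr, ← Real.exp_nat_mul]
    ring_nf
  have h1 : ∑ k ∈ Finset.range M, (if k < ℓ then (0:ℝ) else Real.exp (-β' * k))
      = ∑ k ∈ (Finset.range M).filter (fun k => ¬ k < ℓ), r ^ k := by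
    rw [Finset.sum_filter]
    apply Finset.sum_congr rfl
    intro k _
    by_cases h : k < ℓ
    · simp [h]
    · rw [if_neg h, if_pos h]; exact hrpow k
  rw [h1]
  have h2 : (Finset.range M).filter (fun k => ¬ k < ℓ) ⊆ (Finset.range M).image (· + ℓ) := by
    intro k hk
    rw [Finset.mem_filter, Finset.mem_range] at hk
    refine Finset.mem_image.mpr ⟨k - ℓ, Finset.mem_range.mpr (by omega), by omega⟩
  have h3 : ∑ k ∈ (Finset.range M).filter (fun k => ¬ k < ℓ), r ^ k
      ≤ ∑ k ∈ (Finset.range M).image (· + ℓ), r ^ k :=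
    Finset.sum_le_sum_of_subset_of_nonneg h2 (fun k _ _ => by positivity)
  have h4 : ∑ k ∈ (Finset.range M).image (· + ℓ), r ^ k
      = r ^ ℓ * ∑ j ∈ Finset.range M, r ^ j := by
    rw [Finset.sum_image (by intro a _ b _ h; exact Nat.add_right_cancel h), Finset.mul_sum]
    apply Finset.sum_congr rfl
    intro j _
    rw [pow_add]
    ring
  have h5 : ∑ j ∈ Finset.range M, r ^ j ≤ 1 / (1 - r) := by
    rw [geom_sum_eq (by intro h; rw [h] at hr1; linarith) M]
    have hlt : (0:ℝ) < 1 - r := by linarith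
    have hEq : (r ^ M - 1) / (r - 1) = (1 - r ^ M) / (1 - r) := by
      rw [← neg_div_neg_eq]; ring_nf
    rw [hEq, div_le_div_iff₀ hlt hlt]
    nlinarith [pow_nonneg (le_of_lt hr0) M]
  calc ∑ k ∈ (Finset.range M).filter (fun k => ¬ k < ℓ), r ^ k
      ≤ r ^ ℓ * ∑ j ∈ Finset.range M, r ^ j := by rw [← h4]; exact h3
  _ ≤ r ^ ℓ * (1 / (1 - r)) := by
      apply mul_le_mul_of_nonneg_left h5 (by positivity)
  _ = Real.exp (-β' * ℓ) / (1 - r) := by rw [← hrpow]; ring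

end S11M



namespace S11P
open IsingGlauber SimpleGraph S11 S11E S11B S11M
variable {V : Type*} [DecidableEq V]

lemma choose_bound_nat (Δ k : ℕ) (hΔ : 1 ≤ Δ) (hk : 1 ≤ k) :
    (Δ * k).choose (k - 1) ≤ ((Δ + 1) * k).choose k := by
  have h1 : (Δ * k).choose (k - 1) ≤ ((Δ + 1) * k).choose (k - 1) :=
    Nat.choose_le_choose _ (Nat.mul_le_mul_right k (by omega))
  have h2 : ((Δ + 1) * k).choose (k - 1) ≤ ((Δ + 1) * k).choose k := by
    have hhalf : k - 1 < ((Δ + 1) * k) / 2 := by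
      have : 2 * k ≤ (Δ + 1) * k := Nat.mul_le_mul_right k (by omega)
      have := Nat.div_le_div_right (c := 2) this
      simp only [Nat.mul_div_cancel_left k (by norm_num : 0 < 2)] at this
      omega
    have := Nat.choose_le_succ_of_lt_half_left hhalf
    have hke : k - 1 + 1 = k := by omega
    rwa [hke] at this
  exact le_trans h1 h2

lemma pow_div_factorial_le_exp (k : ℕ) : (k : ℝ) ^ k / (Nat.factorial k) ≤ Real.exp k := by
  have h := Real.sum_le_exp_of_nonneg (x := (k : ℝ)) (by positivity) (k + 1)
  have hmem : k ∈ Finset.range (k + 1) := by simp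
  have hsingle : (k : ℝ) ^ k / (Nat.factorial k) ≤
      ∑ i ∈ Finset.range (k + 1), (k : ℝ) ^ i / (Nat.factorial i) := by
    apply Finset.single_le_sum (f := fun i => (k : ℝ) ^ i / (Nat.factorial i)) _ hmem
    intro i _
    positivity
  exact le_trans hsingle h

lemma choose_le_exp (Δ k : ℕ) (hΔ : 1 ≤ Δ) (hk : 1 ≤ k) :
    (((Δ * k).choose (k - 1) : ℕ) : ℝ) ≤ Real.exp ((1 + Real.log ((Δ : ℝ) + 1)) * k) := by
  have h0 : (Δ * k).choose (k - 1) ≤ ((Δ + 1) * k).choose k := choose_bound_nat Δ k hΔ hk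
  have hdesc : ((Δ + 1) * k).choose k * (Nat.factorial k) ≤ ((Δ + 1) * k) ^ k := by
    have := Nat.descFactorial_eq_factorial_mul_choose ((Δ + 1) * k) k
    have hle := Nat.descFactorial_le_pow ((Δ + 1) * k) k
    rw [Nat.mul_comm, ← this]
    exact hle
  have hfpos : (0 : ℝ) < (Nat.factorial k : ℝ) := by positivity
  have h1 : (((Δ + 1) * k).choose k : ℝ) ≤ (((Δ + 1) * k : ℕ) : ℝ) ^ k / (Nat.factorial k) := by
    rw [le_div_iff₀ hfpos]
    calc ((((Δ + 1) * k).choose k : ℕ) : ℝ) * (Nat.factorial k : ℝ)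
        = ((((Δ + 1) * k).choose k * Nat.factorial k : ℕ) : ℝ) := by push_cast; ring
    _ ≤ ((((Δ + 1) * k) ^ k : ℕ) : ℝ) := by exact_mod_cast hdesc
    _ = (((Δ + 1) * k : ℕ) : ℝ) ^ k := by push_cast; ring
  have h2 : (((Δ + 1) * k : ℕ) : ℝ) ^ k / (Nat.factorial k)
      = ((Δ : ℝ) + 1) ^ k * ((k : ℝ) ^ k / (Nat.factorial k)) := by
    push_cast; rw [mul_pow]; ring
  have h3 : ((Δ : ℝ) + 1) ^ k * ((k : ℝ) ^ k / (Nat.factorial k))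
      ≤ ((Δ : ℝ) + 1) ^ k * Real.exp k := by
    apply mul_le_mul_of_nonneg_left (pow_div_factorial_le_exp k) (by positivity)
  have h4 : ((Δ : ℝ) + 1) ^ k * Real.exp k = Real.exp ((1 + Real.log ((Δ : ℝ) + 1)) * k) := by
    rw [add_mul, one_mul, Real.exp_add, mul_comm (Real.log _) (k : ℝ), Real.exp_nat_mul,
      Real.exp_log (by positivity)]
    ring
  calc (((Δ * k).choose (k - 1) : ℕ) : ℝ) ≤ ((((Δ + 1) * k).choose k : ℕ) : ℝ) := by
        exact_mod_cast h0
  _ ≤ _ := h1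
  _ = _ := h2
  _ ≤ _ := h3
  _ = _ := h4


lemma patch_eq_of_not_mem (U : Finset V) (η : V → Bool) (p : ∀ a ∈ U, Bool) {v : V}
    (h : v ∉ U) : patch U η p v = η v := dif_neg h

lemma patch_eq_of_mem (U : Finset V) (η : V → Bool) (p : ∀ a ∈ U, Bool) {v : V}
    (h : v ∈ U) : patch U η p v = p v h := dif_pos h

def flipPi (U C : Finset V) (p : ∀ a ∈ U, Bool) : ∀ a ∈ U, Bool :=
  fun a ha => if a ∈ C then !(p a ha) else p a ha

lemma flipPi_flipPi (U C : Finset V) (p : ∀ a ∈ U, Bool) :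
    flipPi U C (flipPi U C p) = p := by
  funext a ha
  by_cases h : a ∈ C <;> simp [flipPi, h]

lemma patch_flipPi (U C : Finset V) (hCU : C ⊆ U) (η : V → Bool) (p : ∀ a ∈ U, Bool) :
    patch U η (flipPi U C p)
      = fun v => if v ∈ C then !(patch U η p v) else patch U η p v := by
  funext v
  by_cases hv : v ∈ U
  · rw [patch_eq_of_mem U η _ hv]
    by_cases hc : v ∈ C <;>
      simp [flipPi, hc, patch, hv]
  · have hc : v ∉ C := fun h => hv (hCU h)
    rw [patch_eq_of_not_mem U η _ hv]
    simp [hc, patch, hv]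

lemma wsum_indicator_le (E : (V → Bool) → ℝ) (U : Finset V) (η : V → Bool)
    (f : (V → Bool) → ℝ) (C : Finset V) (c : ℝ)
    (hf01 : ∀ σ, f σ = 0 ∨ f σ = 1)
    (hstep : ∀ p ∈ U.pi (fun _ => (Finset.univ : Finset Bool)), f (patch U η p) = 1 →
      Real.exp (E (patch U η p))
        ≤ Real.exp (-c) * Real.exp (E (patch U η (flipPi U C p)))) :
    wsum E U η f
      ≤ Real.exp (-c) * wsum E U η (fun _ => 1) := by
  classical
  rw [wsum, wsum]
  set piU := U.pi (fun _ => (Finset.univ : Finset Bool)) with hpiU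
  set A := piU.filter (fun p => f (patch U η p) = 1) with hA
  have h1 : ∑ p ∈ piU, Real.exp (E (patch U η p)) * f (patch U η p)
      = ∑ p ∈ A, Real.exp (E (patch U η p)) := by
    rw [hA, Finset.sum_filter]
    apply Finset.sum_congr rfl
    intro p _
    rcases hf01 (patch U η p) with h | h <;> simp [h]
  rw [h1]
  have h2 : ∑ p ∈ A, Real.exp (E (patch U η p))
      ≤ ∑ p ∈ A, Real.exp (-c) * Real.exp (E (patch U η (flipPi U C p))) := by
    apply Finset.sum_le_sum
    intro p hp
    rw [hA, Finset.mem_filter] at hp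
    exact hstep p hp.1 hp.2
  refine le_trans h2 ?_
  rw [← Finset.mul_sum]
  apply mul_le_mul_of_nonneg_left _ (le_of_lt (Real.exp_pos _))
  have hinj : ∀ p ∈ A, ∀ q ∈ A, flipPi U C p = flipPi U C q → p = q := by
    intro p _ q _ h
    have := congrArg (flipPi U C) h
    rwa [flipPi_flipPi, flipPi_flipPi] at this
  have h3 : ∑ p ∈ A, Real.exp (E (patch U η (flipPi U C p)))
      = ∑ q ∈ A.image (flipPi U C), Real.exp (E (patch U η q)) :=
    (Finset.sum_image (g := flipPi U C) (f := fun q => Real.exp (E (patch U η q))) hinj).symm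
  rw [h3]
  have h4 : A.image (flipPi U C) ⊆ piU := by
    intro q _
    rw [hpiU, Finset.mem_pi]
    intro a ha
    exact Finset.mem_univ _
  calc ∑ q ∈ A.image (flipPi U C), Real.exp (E (patch U η q))
      ≤ ∑ q ∈ piU, Real.exp (E (patch U η q)) :=
        Finset.sum_le_sum_of_subset_of_nonneg h4 (fun q _ _ => le_of_lt (Real.exp_pos _))
  _ = ∑ q ∈ piU, Real.exp (E (patch U η q)) * 1 := by
        apply Finset.sum_congr rfl; intro q _; rw [mul_one]

end S11P


open S11 S11E S11B S11M S11P in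
/-- estimate (3.20) of the paper: under the minus boundary condition
on `B_i \ S` and plus on `∂_V B`, the probability that some path from `y` to `x` in
the subgraph induced on `U ∪ {y}` is all minus on its vertices in `U` is at most
`e^δ e^{-β'ℓ}/(1 - e^{-β'})`, where `ℓ = d(x,y) > 1`, `β' = 2gβ - δ > 0` and
`δ = 1 + log(Δ+1)`. -/
theorem statement11 {V : Type*} [DecidableEq V] [Infinite V]
    (G : SimpleGraph V) (hlf : G.LocallyFinite) (hconn : G.Connected)
    (g Δ : ℕ) (hg : 1 ≤ g) (o : V)
    (hgrow : IsGrowing G hlf g o)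
    (hΔ : ∀ v : V, (nbr G hlf v).card ≤ Δ)
    (δ : ℝ) (hδ : δ = 1 + Real.log ((Δ : ℝ) + 1))
    (β β' : ℝ) (hβ' : β' = 2 * (g : ℝ) * β - δ) (hpos : 0 < β')
    (m i : ℕ) (him : i ≤ m) (Bm : Finset V) (hBm : ∀ v : V, v ∈ Bm ↔ G.dist o v ≤ m)
    (S : Finset V) (hS : ∀ v ∈ S, G.dist o v = i)
    (U : Finset V) (hU : U = Bm.filter (fun v => i + 1 ≤ G.dist o v) ∪ S)
    (x : V) (hx : x ∈ S)
    (y : V) (hy : G.dist o y = i) (hyS : y ∉ S) (hℓ : 1 < G.dist x y) :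
    gProb (fun σ => β * energyB G hlf U σ) U
        (fun v => if G.dist o v ≤ i then false else true)
        (fun σ => ∃ w : G.Walk y x, ∀ v ∈ w.support, v ∈ insert y U ∧ (v ∈ U → σ v = false)) ≤
      Real.exp δ * Real.exp (-β' * (G.dist x y : ℝ)) / (1 - Real.exp (-β')) := by
  classical
  set η : V → Bool := fun v => if G.dist o v ≤ i then false else true with hηdef
  set E : (V → Bool) → ℝ := fun σ => β * energyB G hlf U σ with hEdef
  set P : (V → Bool) → Prop := fun σ => ∃ w : G.Walk y x,
    ∀ v ∈ w.support, v ∈ insert y U ∧ (v ∈ U → σ v = false) with hPdef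
  set ℓ := G.dist x y with hld
  -- basic positivity facts
  have hδ1 : (1:ℝ) ≤ δ := by
    rw [hδ]
    have : (0:ℝ) ≤ Real.log ((Δ:ℝ) + 1) :=
      Real.log_nonneg (by linarith [Nat.cast_nonneg (α := ℝ) Δ])
    linarith
  have hβpos : 0 < β := by
    rcases le_or_gt β 0 with h | h
    · exfalso
      have h2 : 2 * (g:ℝ) * β ≤ 0 := by
        have : (0:ℝ) ≤ 2 * (g:ℝ) := by positivity
        exact mul_nonpos_of_nonneg_of_nonpos this h
      rw [hβ'] at hpos
      linarith
    · exact h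
  have hΔ1 : 1 ≤ Δ := by
    have h1 := hgrow x
    have h2 := hΔ x
    have h3 : ((nbr G hlf x).filter fun z => G.dist o z = G.dist o x + 1).card
        ≤ (nbr G hlf x).card := Finset.card_filter_le _ _
    omega
  have hxU : x ∈ U := by rw [hU]; exact Finset.mem_union_right _ hx
  have hyU : y ∉ U := by
    rw [hU]
    intro h
    rcases Finset.mem_union.mp h with h | h
    · rw [Finset.mem_filter] at h; omega
    · exact hyS h
  have hUlev : ∀ u ∈ U, i ≤ G.dist o u := by
    intro u hu
    rw [hU] at hu
    rcases Finset.mem_union.mp hu with h | h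
    · rw [Finset.mem_filter] at h; omega
    · rw [hS u h]
  set 𝒞 : Finset (Finset V) :=
    U.powerset.filter (fun C => ConnTo G x C ∧ ℓ ≤ C.card) with h𝒞
  set piU := U.pi (fun _ => (Finset.univ : Finset Bool)) with hpiU
  have hZpos : 0 < wsum E U η (fun _ => 1) := by
    rw [wsum]
    apply Finset.sum_pos
    · intro p _
      rw [mul_one]
      exact Real.exp_pos _
    · exact ⟨fun a _ => true, Finset.mem_pi.mpr (fun a ha => Finset.mem_univ _)⟩
  -- pointwise indicator bound
  have hpoint : ∀ σ : V → Bool, (if P σ then (1:ℝ) else 0)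
      ≤ ∑ C ∈ 𝒞, (if clusterOf G U x σ = C then (1:ℝ) else 0) := by
    intro σ
    by_cases hev : P σ
    · rw [if_pos hev]
      obtain ⟨w, hw⟩ := hev
      have hxCl : x ∈ clusterOf G U x σ := by
        apply mem_clusterOf.mpr
        refine ⟨SimpleGraph.Walk.nil, ?_⟩
        intro u hu
        simp only [SimpleGraph.Walk.support_nil, List.mem_singleton] at hu
        rw [hu]
        exact ⟨hxU, (hw x (SimpleGraph.Walk.end_mem_support w)).2 hxU⟩
      have hmem : clusterOf G U x σ ∈ 𝒞 := by
        rw [h𝒞, Finset.mem_filter, Finset.mem_powerset]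
        exact ⟨clusterOf_subset, clusterOf_connTo hxCl,
          event_cluster_card G hconn U x y σ w hw (by omega)⟩
      have := Finset.single_le_sum
        (f := fun C => if clusterOf G U x σ = C then (1:ℝ) else 0)
        (fun C _ => by positivity) hmem
      simpa using this
    · rw [if_neg hev]
      apply Finset.sum_nonneg
      intro C _
      positivity
  -- Peierls bound for each cluster
  have hPeierls : ∀ C ∈ 𝒞,
      wsum E U η (fun σ => if clusterOf G U x σ = C then 1 else 0)
        ≤ Real.exp (-(2 * (g:ℝ) * β * C.card)) * wsum E U η (fun _ => 1) := by
    intro C hC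
    rw [h𝒞, Finset.mem_filter, Finset.mem_powerset] at hC
    obtain ⟨hCU, hCconn, hCcard⟩ := hC
    apply wsum_indicator_le E U η _ C (2 * (g:ℝ) * β * C.card)
      (by intro σ; by_cases h : clusterOf G U x σ = C <;> simp [h])
    intro p _ hcl1
    have hcl : clusterOf G U x (patch U η p) = C := by
      by_cases h : clusterOf G U x (patch U η p) = C
      · exact h
      · rw [if_neg h] at hcl1; norm_num at hcl1
    set σ := patch U η p with hσ
    have hminus : ∀ u ∈ C, σ u = false := by
      intro u hu
      rw [← hcl] at hu
      exact clusterOf_spin_false hu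
    have hplus : ∀ u ∈ C, ∀ v ∈ nbr G hlf u, v ∉ C →
        G.dist o v = G.dist o u + 1 → σ v = true := by
      intro u hu v hv hvC hdist
      by_cases hvU : v ∈ U
      · by_contra hfalse
        have hvf : σ v = false := by
          cases h : σ v
          · rfl
          · exact absurd h hfalse
        have hvin : v ∈ clusterOf G U x σ :=
          clusterOf_maximal (hcl ▸ hu) ((S11E.mem_nbr G hlf).mp hv) hvU hvf
        rw [hcl] at hvin
        exact hvC hvin
      · have hσv : σ v = η v := patch_eq_of_not_mem U η p hvU
        rw [hσv, hηdef]
        have hiu : i ≤ G.dist o u := hUlev u (hCU hu)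
        simp only []
        rw [if_neg (by omega)]
    have hbnd := cluster_boundary_bound G hlf hconn g o hgrow C σ hplus
    have hdiff := energy_flip_diff G hlf U C hCU σ hminus
    have hflip : patch U η (flipPi U C p)
        = fun v => if v ∈ C then !(σ v) else σ v := patch_flipPi U C hCU η p
    have h1 : energyB G hlf U (patch U η (flipPi U C p)) - energyB G hlf U σ
        = 2 * ∑ u ∈ C, ∑ v ∈ (nbr G hlf u) \ C, spin (σ v) := by
      rw [hflip]
      exact hdiff
    have h4 : β * ((g:ℝ) * C.card) ≤ β * ∑ u ∈ C, ∑ v ∈ (nbr G hlf u) \ C, spin (σ v) :=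
      mul_le_mul_of_nonneg_left hbnd hβpos.le
    have hEdiff : E σ + 2 * (g:ℝ) * β * C.card ≤ E (patch U η (flipPi U C p)) := by
      have hE1 : E (patch U η (flipPi U C p)) = β * energyB G hlf U (patch U η (flipPi U C p)) := rfl
      have hE2 : E σ = β * energyB G hlf U σ := rfl
      rw [hE1, hE2]
      have h3 : β * energyB G hlf U (patch U η (flipPi U C p)) - β * energyB G hlf U σ
          = β * (2 * ∑ u ∈ C, ∑ v ∈ (nbr G hlf u) \ C, spin (σ v)) := by
        rw [← mul_sub, h1]
      nlinarith [h3, h4]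
    rw [← Real.exp_add]
    exact Real.exp_le_exp.mpr (by linarith)
  -- numerator bound
  have hnum : wsum E U η (fun σ => if P σ then 1 else 0)
      ≤ (∑ C ∈ 𝒞, Real.exp (-(2 * (g:ℝ) * β * C.card))) * wsum E U η (fun _ => 1) := by
    have hstep1 : wsum E U η (fun σ => if P σ then 1 else 0)
        ≤ ∑ C ∈ 𝒞, wsum E U η (fun σ => if clusterOf G U x σ = C then 1 else 0) := by
      rw [wsum]
      calc ∑ p ∈ piU, Real.exp (E (patch U η p)) * (if P (patch U η p) then (1:ℝ) else 0)
          ≤ ∑ p ∈ piU, Real.exp (E (patch U η p)) *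
              (∑ C ∈ 𝒞, if clusterOf G U x (patch U η p) = C then (1:ℝ) else 0) := by
            apply Finset.sum_le_sum
            intro p _
            exact mul_le_mul_of_nonneg_left (hpoint _) (le_of_lt (Real.exp_pos _))
      _ = ∑ p ∈ piU, ∑ C ∈ 𝒞, Real.exp (E (patch U η p)) *
              (if clusterOf G U x (patch U η p) = C then (1:ℝ) else 0) := by
            apply Finset.sum_congr rfl
            intro p _
            rw [Finset.mul_sum]
      _ = ∑ C ∈ 𝒞, ∑ p ∈ piU, Real.exp (E (patch U η p)) *
              (if clusterOf G U x (patch U η p) = C then (1:ℝ) else 0) := Finset.sum_comm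
      _ = ∑ C ∈ 𝒞, wsum E U η (fun σ => if clusterOf G U x σ = C then 1 else 0) := by
            apply Finset.sum_congr rfl
            intro C _
            rw [wsum]
    refine le_trans hstep1 ?_
    rw [Finset.sum_mul]
    exact Finset.sum_le_sum hPeierls
  -- geometric bound on the cluster sum
  have hr1 : Real.exp (-β') < 1 := by
    calc Real.exp (-β') < Real.exp 0 := Real.exp_lt_exp.mpr (by linarith)
    _ = 1 := Real.exp_zero
  have hrpos : 0 < 1 - Real.exp (-β') := by linarith
  have hsum𝒞 : ∑ C ∈ 𝒞, Real.exp (-(2 * (g:ℝ) * β * C.card))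
      ≤ Real.exp (-β' * ℓ) / (1 - Real.exp (-β')) := by
    have hmap : ∀ C ∈ 𝒞, C.card ∈ Finset.range (U.card + 1) := by
      intro C hC
      rw [h𝒞, Finset.mem_filter, Finset.mem_powerset] at hC
      rw [Finset.mem_range]
      have := Finset.card_le_card hC.1
      omega
    rw [← Finset.sum_fiberwise_of_maps_to hmap
      (fun C => Real.exp (-(2 * (g:ℝ) * β * C.card)))]
    have hbound : ∀ k ∈ Finset.range (U.card + 1),
        ∑ C ∈ 𝒞.filter (fun C => C.card = k), Real.exp (-(2 * (g:ℝ) * β * C.card))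
          ≤ (if k < ℓ then (0:ℝ) else Real.exp (-β' * k)) := by
      intro k _
      have hterm : ∀ C ∈ 𝒞.filter (fun C => C.card = k),
          Real.exp (-(2 * (g:ℝ) * β * C.card)) = Real.exp (-(2 * (g:ℝ) * β * k)) := by
        intro C hC
        rw [(Finset.mem_filter.mp hC).2]
      rw [Finset.sum_congr rfl hterm, Finset.sum_const, nsmul_eq_mul]
      by_cases hkℓ : k < ℓ
      · rw [if_pos hkℓ]
        have hempty : 𝒞.filter (fun C => C.card = k) = ∅ := by
          rw [Finset.filter_eq_empty_iff]
          intro C hC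
          rw [h𝒞, Finset.mem_filter] at hC
          intro hcard
          omega
        rw [hempty]
        simp
      · rw [if_neg hkℓ]
        have hk1 : 1 ≤ k := by omega
        have hcount : (𝒞.filter (fun C => C.card = k)).card ≤ (Δ * k).choose (k - 1) := by
          apply card_conn_le G hlf x Δ (by omega) hΔ k hk1
          intro C hC
          rw [Finset.mem_filter] at hC
          obtain ⟨hC1, hC2⟩ := hC
          rw [h𝒞, Finset.mem_filter] at hC1
          exact ⟨hC1.2.1, hC2⟩
        have hexp := choose_le_exp Δ k hΔ1 hk1
        have hcR : ((𝒞.filter (fun C => C.card = k)).card : ℝ)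
            ≤ Real.exp ((1 + Real.log ((Δ:ℝ) + 1)) * k) := by
          refine le_trans ?_ hexp
          exact_mod_cast hcount
        calc ((𝒞.filter (fun C => C.card = k)).card : ℝ) * Real.exp (-(2 * (g:ℝ) * β * k))
            ≤ Real.exp ((1 + Real.log ((Δ:ℝ) + 1)) * k) * Real.exp (-(2 * (g:ℝ) * β * k)) :=
              mul_le_mul_of_nonneg_right hcR (le_of_lt (Real.exp_pos _))
        _ = Real.exp (-β' * k) := by
              rw [← Real.exp_add]
              congr 1
              rw [hβ', hδ]
              ring
    calc ∑ k ∈ Finset.range (U.card + 1),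
          ∑ C ∈ 𝒞.filter (fun C => C.card = k), Real.exp (-(2 * (g:ℝ) * β * C.card))
        ≤ ∑ k ∈ Finset.range (U.card + 1), (if k < ℓ then (0:ℝ) else Real.exp (-β' * k)) :=
          Finset.sum_le_sum hbound
    _ ≤ Real.exp (-β' * ℓ) / (1 - Real.exp (-β')) := tail_geom β' hpos ℓ (U.card + 1)
  -- assemble
  have hfinal : ∑ C ∈ 𝒞, Real.exp (-(2 * (g:ℝ) * β * C.card))
      ≤ Real.exp δ * Real.exp (-β' * ℓ) / (1 - Real.exp (-β')) := by
    refine le_trans hsum𝒞 ?_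
    rw [mul_div_assoc]
    refine le_mul_of_one_le_left ?_ ?_
    · positivity
    · have := Real.exp_pos δ
      calc (1:ℝ) = Real.exp 0 := Real.exp_zero.symm
      _ ≤ Real.exp δ := Real.exp_le_exp.mpr (by linarith)
  rw [gProb, gExp, div_le_iff₀ hZpos]
  calc wsum E U η (fun σ => if P σ then 1 else 0)
      ≤ (∑ C ∈ 𝒞, Real.exp (-(2 * (g:ℝ) * β * C.card))) * wsum E U η (fun _ => 1) := hnum
  _ ≤ (Real.exp δ * Real.exp (-β' * ℓ) / (1 - Real.exp (-β'))) * wsum E U η (fun _ => 1) :=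
      mul_le_mul_of_nonneg_right hfinal hZpos.le
end
end

section
/- Let G be an infinite (g,o)-growing graph with maximal degree Δ < ∞, fix i ∈ {0,…,m}, S ⊆ L_i, U = F_{i+1} ∪ S, τ ∈ Ω⁺, x ∈ S and y ∈ L_i \ S. Let τ^{y,+} and τ^{y,−} be the configurations agreeing with τ off y and having spin +1, respectively −1, at y, and let μ_U^{y,+}, μ_U^{y,−} be the corresponding Gibbs measures on U. Then μ_U^{y,+}(σ_x = +1) − μ_U^{y,−}(σ_x = +1) ≤ μ_U^{y,−}(A^c), where A^c is the event that there is a path in the subgraph induced on U ∪ {y} from y to x all of whose vertices lying in U carry spin −1. -/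
/- Common framework: Ising model with boundary conditions on (finite pieces of)
   locally finite graphs, heat-bath Glauber dynamics quantities. -/

open Finset
open scoped Classical

noncomputable section

open IsingGlauber

namespace S12

open IsingGlauber

lemma spin_supermod : ∀ a b c d : Bool,
    spin a * spin c + spin b * spin d
      ≤ spin (a && b) * spin (c && d) + spin (a || b) * spin (c || d) := by
  intro a b c d
  cases a <;> cases b <;> cases c <;> cases d <;> norm_num [spin]

lemma bool_inf_eq : ∀ a b : Bool, (a ⊓ b) = (a && b) := by decide
lemma bool_sup_eq : ∀ a b : Bool, (a ⊔ b) = (a || b) := by decide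
lemma bool_le_true : ∀ a b : Bool, a ≤ b → a = true → b = true := by decide

variable {V : Type*} [DecidableEq V] (G : SimpleGraph V) (hlf : G.LocallyFinite)
  (U : Finset V) (β : ℝ) (τ : V → Bool) (y : V)

/-- generic energy comparison from a per-edge comparison. -/
lemma energy_add_le (σ₁ σ₂ σ₃ σ₄ : V → Bool)
    (h : ∀ u v, u ∈ cl G hlf U → v ∈ cl G hlf U → G.Adj u v →
      spin (σ₁ u) * spin (σ₁ v) + spin (σ₂ u) * spin (σ₂ v)
        ≤ spin (σ₃ u) * spin (σ₃ v) + spin (σ₄ u) * spin (σ₄ v)) :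
    energyB G hlf U σ₁ + energyB G hlf U σ₂ ≤ energyB G hlf U σ₃ + energyB G hlf U σ₄ := by
  unfold energyB
  rw [← mul_add, ← mul_add]
  refine mul_le_mul_of_nonneg_left ?_ (by norm_num)
  rw [← Finset.sum_add_distrib, ← Finset.sum_add_distrib]
  refine Finset.sum_le_sum fun a ha => ?_
  rw [← Finset.sum_add_distrib, ← Finset.sum_add_distrib]
  refine Finset.sum_le_sum fun b hb => ?_
  rw [Finset.mem_filter] at hb
  exact h a b ha hb.1 hb.2

lemma energy_add_eq (σ₁ σ₂ σ₃ σ₄ : V → Bool)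
    (h : ∀ u v, u ∈ cl G hlf U → v ∈ cl G hlf U → G.Adj u v →
      spin (σ₁ u) * spin (σ₁ v) + spin (σ₂ u) * spin (σ₂ v)
        = spin (σ₃ u) * spin (σ₃ v) + spin (σ₄ u) * spin (σ₄ v)) :
    energyB G hlf U σ₁ + energyB G hlf U σ₂ = energyB G hlf U σ₃ + energyB G hlf U σ₄ :=
  le_antisymm
    (energy_add_le G hlf U _ _ _ _ fun u v hu hv ha => (h u v hu hv ha).le)
    (energy_add_le G hlf U _ _ _ _ fun u v hu hv ha => (h u v hu hv ha).ge)

def emb (η : V → Bool) (c : {v // v ∈ U} → Bool) : V → Bool :=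
  fun v => if h : v ∈ U then c ⟨v, h⟩ else η v

lemma emb_mem (η : V → Bool) (c : {v // v ∈ U} → Bool) {v : V} (h : v ∈ U) :
    emb U η c v = c ⟨v, h⟩ := dif_pos h

lemma emb_not_mem (η : V → Bool) (c : {v // v ∈ U} → Bool) {v : V} (h : v ∉ U) :
    emb U η c v = η v := dif_neg h

def Sw (η : V → Bool) (f : ({v // v ∈ U} → Bool) → ℝ) : ℝ :=
  ∑ c : {v // v ∈ U} → Bool, Real.exp (β * energyB G hlf U (emb U η c)) * f c

lemma wsum_eq (η : V → Bool) (f : (V → Bool) → ℝ) :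
    wsum (fun σ => β * energyB G hlf U σ) U η f
      = Sw G hlf U β η (fun c => f (emb U η c)) := by
  unfold wsum Sw
  refine Finset.sum_nbij' (fun p => fun u => p u.1 u.2) (fun c => fun v hv => c ⟨v, hv⟩)
    ?_ ?_ ?_ ?_ ?_
  · intro p hp; exact Finset.mem_univ _
  · intro c hc; simp [Finset.mem_pi]
  · intro p hp; rfl
  · intro c hc; rfl
  · intro p hp; rfl

def ind (P : Prop) : ℝ := if P then 1 else 0

lemma ind_nonneg (P : Prop) : 0 ≤ ind P := by unfold ind; split <;> norm_num

lemma ind_le_one (P : Prop) : ind P ≤ 1 := by unfold ind; split <;> norm_num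

lemma ind_true {P : Prop} (h : P) : ind P = 1 := if_pos h

lemma ind_false {P : Prop} (h : ¬ P) : ind P = 0 := if_neg h

lemma Sw_nonneg (η : V → Bool) (f : ({v // v ∈ U} → Bool) → ℝ) (hf : ∀ c, 0 ≤ f c) :
    0 ≤ Sw G hlf U β η f :=
  Finset.sum_nonneg fun c _ => mul_nonneg (Real.exp_pos _).le (hf c)

lemma Sw_mono (η : V → Bool) (f g : ({v // v ∈ U} → Bool) → ℝ) (hfg : ∀ c, f c ≤ g c) :
    Sw G hlf U β η f ≤ Sw G hlf U β η g :=
  Finset.sum_le_sum fun c _ => mul_le_mul_of_nonneg_left (hfg c) (Real.exp_pos _).le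

lemma Sw_add (η : V → Bool) (f g : ({v // v ∈ U} → Bool) → ℝ) :
    Sw G hlf U β η f + Sw G hlf U β η g = Sw G hlf U β η (fun c => f c + g c) := by
  unfold Sw
  rw [← Finset.sum_add_distrib]
  exact Finset.sum_congr rfl fun c _ => (mul_add _ _ _).symm

lemma Sw_pos (η : V → Bool) (f : ({v // v ∈ U} → Bool) → ℝ) (hf : ∀ c, 0 ≤ f c)
    (c₀ : {v // v ∈ U} → Bool) (hc₀ : 0 < f c₀) : 0 < Sw G hlf U β η f := by
  refine Finset.sum_pos' (fun c _ => mul_nonneg (Real.exp_pos _).le (hf c))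
    ⟨c₀, Finset.mem_univ _, mul_pos (Real.exp_pos _) hc₀⟩

def Tb (D : Finset V) : Finset V :=
  U.filter fun v => v ∉ D ∧ ∃ u ∈ insert y D, G.Adj u v

def Wb (D : Finset V) : Finset V :=
  U.filter fun v => v ∉ D ∧ v ∉ Tb G U y D

lemma mem_Tb {D : Finset V} {v : V} :
    v ∈ Tb G U y D ↔ v ∈ U ∧ v ∉ D ∧ ∃ u ∈ insert y D, G.Adj u v := by
  simp [Tb]

lemma mem_Wb {D : Finset V} {v : V} :
    v ∈ Wb G U y D ↔ v ∈ U ∧ v ∉ D ∧ v ∉ Tb G U y D := by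
  simp [Wb]

/-- trichotomy on `U`. -/
lemma U_cases {D : Finset V} {v : V} (hv : v ∈ U) :
    v ∈ D ∨ v ∈ Tb G U y D ∨ v ∈ Wb G U y D := by
  by_cases h1 : v ∈ D
  · exact Or.inl h1
  by_cases h2 : v ∈ Tb G U y D
  · exact Or.inr (Or.inl h2)
  · exact Or.inr (Or.inr (mem_Wb G U y |>.2 ⟨hv, h1, h2⟩))

lemma Tb_not_mem_Wb {D : Finset V} {v : V} (h : v ∈ Tb G U y D) : v ∉ Wb G U y D := by
  intro h'; exact ((mem_Wb G U y).1 h').2.2 h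

lemma D_not_mem_Wb {D : Finset V} {v : V} (h : v ∈ D) : v ∉ Wb G U y D := by
  intro h'; exact ((mem_Wb G U y).1 h').2.1 h

lemma adj_y_mem {D : Finset V} {v : V} (hv : v ∈ U) (ha : G.Adj y v) :
    v ∈ D ∨ v ∈ Tb G U y D := by
  by_cases h1 : v ∈ D
  · exact Or.inl h1
  · exact Or.inr ((mem_Tb G U y).2 ⟨hv, h1, y, Finset.mem_insert_self _ _, ha⟩)

lemma no_edge_D_Wb {D : Finset V} {u v : V} (hu : u ∈ insert y D) (hv : v ∈ Wb G U y D) :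
    ¬ G.Adj u v := by
  intro ha
  rcases (mem_Wb G U y).1 hv with ⟨hvU, hvD, hvT⟩
  exact hvT ((mem_Tb G U y).2 ⟨hvU, hvD, u, hu, ha⟩)

def Cyl (D : Finset V) (c : {v // v ∈ U} → Bool) : Prop :=
  ∀ u : {v // v ∈ U}, (u.1 ∈ D → c u = false) ∧ (u.1 ∈ Tb G U y D → c u = true)

def Tt (D : Finset V) (c : {v // v ∈ U} → Bool) : Prop :=
  ∀ u : {v // v ∈ U}, u.1 ∈ Tb G U y D → c u = true

def Kc (c : {v // v ∈ U} → Bool) : Finset V :=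
  U.filter fun u => ∃ w : G.Walk y u, ∀ v ∈ w.support,
    v ∈ insert y U ∧ ∀ h : v ∈ U, c ⟨v, h⟩ = false

def RD (D : Finset V) : Prop :=
  ∀ u ∈ D, ∃ w : G.Walk y u, ∀ v ∈ w.support, v ∈ insert y D

end S12

namespace S12
open IsingGlauber

variable {V : Type*} [DecidableEq V] (G : SimpleGraph V) (hlf : G.LocallyFinite)
  (U : Finset V) (β : ℝ) (τ : V → Bool) (y : V)

lemma Kc_subset (c : {v // v ∈ U} → Bool) : Kc G U y c ⊆ U := Finset.filter_subset _ _

lemma mem_Kc {c : {v // v ∈ U} → Bool} {u : V} :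
    u ∈ Kc G U y c ↔ u ∈ U ∧ ∃ w : G.Walk y u, ∀ v ∈ w.support,
      v ∈ insert y U ∧ ∀ h : v ∈ U, c ⟨v, h⟩ = false := by
  simp [Kc]

/-- every support vertex of a witnessing walk lies in the cluster (or is `y`). -/
lemma RD_Kc (c : {v // v ∈ U} → Bool) : RD G y (Kc G U y c) := by
  intro u hu
  rcases (mem_Kc G U y).1 hu with ⟨huU, w, hw⟩
  refine ⟨w, fun v hv => ?_⟩
  have hvU' := (hw v hv).1
  rcases Finset.mem_insert.1 hvU' with h | hvU
  · exact Finset.mem_insert.2 (Or.inl h)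
  · refine Finset.mem_insert.2 (Or.inr ?_)
    refine (mem_Kc G U y).2 ⟨hvU, w.takeUntil v hv, fun z hz => hw z (SimpleGraph.Walk.support_takeUntil_subset w hv hz)⟩

/-- if the cylinder condition holds, supports of minus walks stay in `insert y D`. -/
lemma walk_support_in (D : Finset V) (c : {v // v ∈ U} → Bool) (hCyl : Cyl G U y D c) :
    ∀ {a u : V} (w : G.Walk a u), a ∈ insert y D →
      (∀ v ∈ w.support, v ∈ insert y U ∧ ∀ h : v ∈ U, c ⟨v, h⟩ = false) →
      ∀ v ∈ w.support, v ∈ insert y D := by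
  intro a u w
  induction w with
  | nil =>
    intro ha _ v hv
    rw [SimpleGraph.Walk.support_nil] at hv
    simp only [List.mem_singleton] at hv
    subst hv; exact ha
  | @cons a b u hab p ih =>
    intro ha hcond v hv
    rw [SimpleGraph.Walk.support_cons] at hv hcond
    rcases List.mem_cons.1 hv with rfl | hv'
    · exact ha
    · have hb : b ∈ insert y D := by
        have hbs : b ∈ p.support := SimpleGraph.Walk.start_mem_support p
        have hb1 := hcond b (List.mem_cons_of_mem _ hbs)
        rcases Finset.mem_insert.1 hb1.1 with rfl | hbU
        · exact Finset.mem_insert_self _ _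
        · have hbfalse := hb1.2 hbU
          -- b ∈ U, adjacent to a ∈ insert y D; b ∈ D or b ∈ Tb
          by_cases hbD : b ∈ D
          · exact Finset.mem_insert.2 (Or.inr hbD)
          · have hbT : b ∈ Tb G U y D := (mem_Tb G U y).2 ⟨hbU, hbD, a, ha, hab⟩
            have := (hCyl ⟨b, hbU⟩).2 hbT
            rw [hbfalse] at this
            exact absurd this (by simp)
      exact ih hb (fun z hz => hcond z (List.mem_cons_of_mem _ hz)) v hv'

lemma Kc_eq_iff (D : Finset V) (hD : D ⊆ U) (hyU : y ∉ U) (hR : RD G y D)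
    (c : {v // v ∈ U} → Bool) : Kc G U y c = D ↔ Cyl G U y D c := by
  constructor
  · intro hK
    intro u
    constructor
    · intro huD
      have hu : u.1 ∈ Kc G U y c := hK ▸ huD
      rcases (mem_Kc G U y).1 hu with ⟨huU, w, hw⟩
      have := (hw u.1 (SimpleGraph.Walk.end_mem_support w)).2 u.2
      simpa using this
    · intro huT
      by_contra hcu
      have hcu' : c u = false := by
        cases h : c u
        · rfl
        · exact absurd h hcu
      rcases (mem_Tb G U y).1 huT with ⟨huU, huD, z, hz, hadj⟩
      -- build a minus walk from y to u, contradicting u ∉ D = Kc c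
      have hmem : u.1 ∈ Kc G U y c := by
        rcases Finset.mem_insert.1 hz with hzy | hzD
        · -- single edge y ~ u
          rw [hzy] at hadj
          refine (mem_Kc G U y).2 ⟨huU, SimpleGraph.Walk.cons hadj SimpleGraph.Walk.nil, ?_⟩
          intro v hv
          rw [SimpleGraph.Walk.support_cons, SimpleGraph.Walk.support_nil] at hv
          rcases List.mem_cons.1 hv with rfl | hv'
          · exact ⟨Finset.mem_insert_self _ _, fun h => absurd h hyU⟩
          · simp only [List.mem_singleton] at hv'
            subst hv'
            refine ⟨Finset.mem_insert.2 (Or.inr huU), fun h => ?_⟩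
            convert hcu'
        · -- extend a walk to z ∈ D = Kc c by the edge z ~ u
          have hzK : z ∈ Kc G U y c := hK ▸ hzD
          rcases (mem_Kc G U y).1 hzK with ⟨hzU, w, hw⟩
          refine (mem_Kc G U y).2 ⟨huU, w.concat hadj, ?_⟩
          intro v hv
          rw [SimpleGraph.Walk.support_concat] at hv
          rcases List.mem_append.1 hv with hv' | hv'
          · exact hw v hv'
          · simp only [List.mem_singleton] at hv'
            subst hv'
            refine ⟨Finset.mem_insert.2 (Or.inr huU), fun h => ?_⟩
            convert hcu'
      rw [hK] at hmem
      exact huD hmem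
  · intro hCyl
    apply Finset.Subset.antisymm
    · intro u hu
      rcases (mem_Kc G U y).1 hu with ⟨huU, w, hw⟩
      have := walk_support_in G U y D c hCyl w (Finset.mem_insert_self _ _) hw u
        (SimpleGraph.Walk.end_mem_support w)
      rcases Finset.mem_insert.1 this with rfl | h
      · exact absurd huU hyU
      · exact h
    · intro u huD
      rcases hR u huD with ⟨w, hw⟩
      refine (mem_Kc G U y).2 ⟨hD huD, w, fun v hv => ?_⟩
      have hvD := hw v hv
      constructor
      · rcases Finset.mem_insert.1 hvD with rfl | h
        · exact Finset.mem_insert_self _ _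
        · exact Finset.mem_insert.2 (Or.inr (hD h))
      · intro h
        rcases Finset.mem_insert.1 hvD with rfl | hvD'
        · exact absurd h hyU
        · exact (hCyl ⟨v, h⟩).1 hvD'

lemma RD_of_Kc_eq {D : Finset V} {c : {v // v ∈ U} → Bool} (h : Kc G U y c = D) :
    RD G y D := h ▸ RD_Kc G U y c

end S12

namespace S12
open IsingGlauber

variable {V : Type*} [DecidableEq V] (G : SimpleGraph V) (hlf : G.LocallyFinite)
  (U : Finset V) (β : ℝ) (τ : V → Bool) (y : V)

lemma emb_upd_y (b : Bool) (c : {v // v ∈ U} → Bool) (hyU : y ∉ U) :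
    emb U (Function.update τ y b) c y = b := by
  rw [emb_not_mem U _ _ hyU, Function.update_self]

lemma emb_upd_ne (b b' : Bool) (c : {v // v ∈ U} → Bool) {v : V} (hvy : v ≠ y) :
    emb U (Function.update τ y b) c v = emb U (Function.update τ y b') c v := by
  unfold emb
  split
  · rfl
  · rw [Function.update_of_ne hvy, Function.update_of_ne hvy]

/-- agreement of two cylinder configurations at neighbours of `y`. -/
lemma cyl_agree (D : Finset V) (c c' : {v // v ∈ U} → Bool)
    (hc : Cyl G U y D c) (hc' : Cyl G U y D c') (b b' : Bool) {v : V} (hvy : v ≠ y)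
    (hadj : G.Adj y v) :
    emb U (Function.update τ y b) c v = emb U (Function.update τ y b') c' v := by
  by_cases hvU : v ∈ U
  · rw [emb_mem U _ _ hvU, emb_mem U _ _ hvU]
    rcases adj_y_mem G U y hvU hadj with hD | hT
    · rw [(hc ⟨v, hvU⟩).1 hD, (hc' ⟨v, hvU⟩).1 hD]
    · rw [(hc ⟨v, hvU⟩).2 hT, (hc' ⟨v, hvU⟩).2 hT]
  · rw [emb_not_mem U _ _ hvU, emb_not_mem U _ _ hvU,
      Function.update_of_ne hvy, Function.update_of_ne hvy]

lemma EX_energy (hyU : y ∉ U) (D : Finset V) (c c' : {v // v ∈ U} → Bool)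
    (hc : Cyl G U y D c) (hc' : Cyl G U y D c') :
    energyB G hlf U (emb U (Function.update τ y false) c)
      + energyB G hlf U (emb U (Function.update τ y true) c')
    = energyB G hlf U (emb U (Function.update τ y true) c)
      + energyB G hlf U (emb U (Function.update τ y false) c') := by
  apply energy_add_eq
  intro u v hu hv hadj
  by_cases huy : u = y
  · rw [huy] at hadj ⊢
    have hvy : v ≠ y := fun h => G.loopless.irrefl y (h ▸ hadj)
    rw [emb_upd_y U τ y false c hyU, emb_upd_y U τ y true c hyU,
      emb_upd_y U τ y false c' hyU, emb_upd_y U τ y true c' hyU,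
      emb_upd_ne U τ y false true c hvy, emb_upd_ne U τ y false true c' hvy,
      cyl_agree G U τ y D c c' hc hc' true true hvy hadj]
    ring
  · by_cases hvy : v = y
    · rw [hvy] at hadj ⊢
      rw [emb_upd_y U τ y false c hyU, emb_upd_y U τ y true c hyU,
        emb_upd_y U τ y false c' hyU, emb_upd_y U τ y true c' hyU,
        emb_upd_ne U τ y false true c huy, emb_upd_ne U τ y false true c' huy,
        cyl_agree G U τ y D c c' hc hc' true true huy hadj.symm]
      ring
    · rw [emb_upd_ne U τ y false true c huy, emb_upd_ne U τ y false true c hvy,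
        emb_upd_ne U τ y false true c' huy, emb_upd_ne U τ y false true c' hvy]

lemma EX_sum (hyU : y ∉ U) (D : Finset V) (f h : ({v // v ∈ U} → Bool) → ℝ) :
    Sw G hlf U β (Function.update τ y false) (fun c => ind (Cyl G U y D c) * f c)
      * Sw G hlf U β (Function.update τ y true) (fun c => ind (Cyl G U y D c) * h c)
    = Sw G hlf U β (Function.update τ y true) (fun c => ind (Cyl G U y D c) * f c)
      * Sw G hlf U β (Function.update τ y false) (fun c => ind (Cyl G U y D c) * h c) := by
  unfold Sw
  rw [Finset.sum_mul_sum, Finset.sum_mul_sum]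
  refine Finset.sum_congr rfl fun c _ => Finset.sum_congr rfl fun c' _ => ?_
  by_cases h1 : Cyl G U y D c
  · by_cases h2 : Cyl G U y D c'
    · simp only [ind_true h1, ind_true h2]
      have hE : β * energyB G hlf U (emb U (Function.update τ y false) c)
          + β * energyB G hlf U (emb U (Function.update τ y true) c')
          = β * energyB G hlf U (emb U (Function.update τ y true) c)
          + β * energyB G hlf U (emb U (Function.update τ y false) c') := by
        rw [← mul_add, ← mul_add, EX_energy G hlf U τ y hyU D c c' h1 h2]
      calc Real.exp (β * energyB G hlf U (emb U (Function.update τ y false) c)) * (1 * f c)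
            * (Real.exp (β * energyB G hlf U (emb U (Function.update τ y true) c')) * (1 * h c'))
          = Real.exp (β * energyB G hlf U (emb U (Function.update τ y false) c)
              + β * energyB G hlf U (emb U (Function.update τ y true) c'))
              * ((1 * f c) * (1 * h c')) := by
            rw [Real.exp_add]; ring
        _ = Real.exp (β * energyB G hlf U (emb U (Function.update τ y true) c)
              + β * energyB G hlf U (emb U (Function.update τ y false) c'))
              * ((1 * f c) * (1 * h c')) := by rw [hE]
        _ = Real.exp (β * energyB G hlf U (emb U (Function.update τ y true) c)) * (1 * f c)
            * (Real.exp (β * energyB G hlf U (emb U (Function.update τ y false) c')) * (1 * h c')) := by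
            rw [Real.exp_add]; ring
    · simp only [ind_false h2]; ring
  · simp only [ind_false h1]; ring

end S12

namespace S12
open IsingGlauber

variable {V : Type*} [DecidableEq V] (G : SimpleGraph V) (hlf : G.LocallyFinite)
  (U : Finset V) (β : ℝ) (τ : V → Bool) (y : V)

/-- merge: take `b` on `W D`, `a` elsewhere. -/
def mg (D : Finset V) (a b : {v // v ∈ U} → Bool) : {v // v ∈ U} → Bool :=
  fun u => if u.1 ∈ Wb G U y D then b u else a u

lemma mg_mg (D : Finset V) (a b : {v // v ∈ U} → Bool) :
    mg G U y D (mg G U y D a b) (mg G U y D b a) = a := by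
  funext u
  by_cases h : u.1 ∈ Wb G U y D <;> simp [mg, h]

lemma emb_mg_not_Wb (η : V → Bool) (D : Finset V) (a b : {v // v ∈ U} → Bool) {v : V}
    (hv : v ∉ Wb G U y D) : emb U η (mg G U y D a b) v = emb U η a v := by
  unfold emb
  split
  · simp [mg, hv]
  · rfl

lemma emb_mg_Wb (η : V → Bool) (D : Finset V) (a b : {v // v ∈ U} → Bool) {v : V}
    (hv : v ∈ Wb G U y D) : emb U η (mg G U y D a b) v = emb U η b v := by
  have hvU : v ∈ U := ((mem_Wb G U y).1 hv).1
  rw [emb_mem U η _ hvU, emb_mem U η _ hvU]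
  simp [mg, hv]

lemma DEC_energy (η : V → Bool) (D : Finset V) (c c' : {v // v ∈ U} → Bool)
    (hc : Cyl G U y D c) (hc' : Tt G U y D c') :
    energyB G hlf U (emb U η c) + energyB G hlf U (emb U η c')
    = energyB G hlf U (emb U η (mg G U y D c c'))
      + energyB G hlf U (emb U η (mg G U y D c' c)) := by
  apply energy_add_eq
  intro u v hu hv hadj
  -- key agreement fact at a non-`Wb` endpoint adjacent to a `Wb` vertex
  have key : ∀ {p q : V}, p ∈ Wb G U y D → q ∉ Wb G U y D → G.Adj p q →
      emb U η c q = emb U η c' q := by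
    intro p q hp hq hpq
    by_cases hqU : q ∈ U
    · rcases U_cases G U y (D := D) hqU with hD | hT | hW
      · exact absurd hpq.symm (no_edge_D_Wb G U y (Finset.mem_insert_of_mem hD) hp)
      · rw [emb_mem U η _ hqU, emb_mem U η _ hqU, (hc ⟨q, hqU⟩).2 hT, hc' ⟨q, hqU⟩ hT]
      · exact absurd hW hq
    · rw [emb_not_mem U η _ hqU, emb_not_mem U η _ hqU]
  by_cases huW : u ∈ Wb G U y D
  · by_cases hvW : v ∈ Wb G U y D
    · rw [emb_mg_Wb G U y η D c c' huW, emb_mg_Wb G U y η D c c' hvW,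
        emb_mg_Wb G U y η D c' c huW, emb_mg_Wb G U y η D c' c hvW]
      ring
    · have hv4 : emb U η c v = emb U η c' v := key huW hvW hadj
      rw [emb_mg_Wb G U y η D c c' huW, emb_mg_Wb G U y η D c' c huW,
        emb_mg_not_Wb G U y η D c c' hvW, emb_mg_not_Wb G U y η D c' c hvW, hv4]
      ring
  · by_cases hvW : v ∈ Wb G U y D
    · have hu4 : emb U η c u = emb U η c' u := key hvW huW hadj.symm
      rw [emb_mg_Wb G U y η D c c' hvW, emb_mg_Wb G U y η D c' c hvW,
        emb_mg_not_Wb G U y η D c c' huW, emb_mg_not_Wb G U y η D c' c huW, hu4]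
      ring
    · rw [emb_mg_not_Wb G U y η D c c' huW, emb_mg_not_Wb G U y η D c' c huW,
        emb_mg_not_Wb G U y η D c c' hvW, emb_mg_not_Wb G U y η D c' c hvW]

end S12

namespace S12
open IsingGlauber

variable {V : Type*} [DecidableEq V] (G : SimpleGraph V) (hlf : G.LocallyFinite)
  (U : Finset V) (β : ℝ) (τ : V → Bool) (y : V)

lemma mg_not_Wb {D : Finset V} (a b : {v // v ∈ U} → Bool) {u : {v // v ∈ U}}
    (h : u.1 ∉ Wb G U y D) : mg G U y D a b u = a u := by simp [mg, h]

lemma mg_Wb {D : Finset V} (a b : {v // v ∈ U} → Bool) {u : {v // v ∈ U}}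
    (h : u.1 ∈ Wb G U y D) : mg G U y D a b u = b u := by simp [mg, h]

lemma DEC_sum (η : V → Bool) (D : Finset V) (x : V) (hxU : x ∈ U) (hxD : x ∉ D) :
    Sw G hlf U β η (fun c => ind (Cyl G U y D c) * ind (c ⟨x, hxU⟩ = false))
      * Sw G hlf U β η (fun c => ind (Tt G U y D c))
    = Sw G hlf U β η (fun c => ind (Cyl G U y D c))
      * Sw G hlf U β η (fun c => ind (Tt G U y D c) * ind (c ⟨x, hxU⟩ = false)) := by
  unfold Sw
  rw [Finset.sum_mul_sum, Finset.sum_mul_sum, ← Finset.sum_product', ← Finset.sum_product']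
  refine Finset.sum_nbij' (fun p => (mg G U y D p.1 p.2, mg G U y D p.2 p.1))
    (fun p => (mg G U y D p.1 p.2, mg G U y D p.2 p.1)) ?_ ?_ ?_ ?_ ?_
  · intro p _; exact Finset.mem_product.2 ⟨Finset.mem_univ _, Finset.mem_univ _⟩
  · intro p _; exact Finset.mem_product.2 ⟨Finset.mem_univ _, Finset.mem_univ _⟩
  · intro p _; exact Prod.ext (mg_mg G U y D p.1 p.2) (mg_mg G U y D p.2 p.1)
  · intro p _; exact Prod.ext (mg_mg G U y D p.1 p.2) (mg_mg G U y D p.2 p.1)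
  · rintro ⟨c, c'⟩ _
    dsimp only
    by_cases hall : Cyl G U y D c ∧ c ⟨x, hxU⟩ = false ∧ Tt G U y D c'
    · obtain ⟨h1, h2, h3⟩ := hall
      have hxW : x ∈ Wb G U y D := by
        refine (mem_Wb G U y).2 ⟨hxU, hxD, fun hT => ?_⟩
        rw [(h1 ⟨x, hxU⟩).2 hT] at h2; exact absurd h2 (by simp)
      have hCyl2 : Cyl G U y D (mg G U y D c c') := by
        intro u
        constructor
        · intro huD
          rw [mg_not_Wb G U y _ _ (D_not_mem_Wb G U y huD)]
          exact (h1 u).1 huD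
        · intro huT
          rw [mg_not_Wb G U y _ _ (Tb_not_mem_Wb G U y huT)]
          exact (h1 u).2 huT
      have hTt2 : Tt G U y D (mg G U y D c' c) := by
        intro u huT
        rw [mg_not_Wb G U y _ _ (Tb_not_mem_Wb G U y huT)]
        exact h3 u huT
      have hX2 : mg G U y D c' c ⟨x, hxU⟩ = false := by
        rw [mg_Wb G U y _ _ hxW]; exact h2
      have hE : β * energyB G hlf U (emb U η c) + β * energyB G hlf U (emb U η c')
          = β * energyB G hlf U (emb U η (mg G U y D c c'))
            + β * energyB G hlf U (emb U η (mg G U y D c' c)) := by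
        rw [← mul_add, ← mul_add, DEC_energy G hlf U y η D c c' h1 h3]
      simp only [ind_true h1, ind_true h2, ind_true h3, ind_true hCyl2, ind_true hTt2,
        ind_true hX2, mul_one]
      rw [← Real.exp_add, hE, Real.exp_add]
    · have hz : ¬ (Cyl G U y D (mg G U y D c c') ∧ Tt G U y D (mg G U y D c' c)
          ∧ mg G U y D c' c ⟨x, hxU⟩ = false) := by
        rintro ⟨hCyl', hTt', hX'⟩
        refine hall ⟨?_, ?_, ?_⟩
        · intro u
          constructor
          · intro huD
            have := (hCyl' u).1 huD
            rwa [mg_not_Wb G U y _ _ (D_not_mem_Wb G U y huD)] at this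
          · intro huT
            have := (hCyl' u).2 huT
            rwa [mg_not_Wb G U y _ _ (Tb_not_mem_Wb G U y huT)] at this
        · by_cases hxW : x ∈ Wb G U y D
          · rwa [mg_Wb G U y _ _ hxW] at hX'
          · rcases U_cases G U y (D := D) hxU with hD | hT | hW
            · exact absurd hD hxD
            · have := hTt' ⟨x, hxU⟩ hT
              rw [this] at hX'
              exact absurd hX' (by simp)
            · exact absurd hW hxW
        · intro u huT
          have := hTt' u huT
          rwa [mg_not_Wb G U y _ _ (Tb_not_mem_Wb G U y huT)] at this
      rcases not_and_or.1 hall with h1 | h23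
      · simp [ind_false h1]
        rcases not_and_or.1 hz with hq1 | hq23
        · simp [ind_false hq1]
        · rcases not_and_or.1 hq23 with hq2 | hq3
          · simp [ind_false hq2]
          · simp [ind_false hq3]
      · rcases not_and_or.1 h23 with h2 | h3
        · rcases not_and_or.1 hz with hq1 | hq23
          · simp [ind_false h2, ind_false hq1]
          · rcases not_and_or.1 hq23 with hq2 | hq3
            · simp [ind_false h2, ind_false hq2]
            · simp [ind_false h2, ind_false hq3]
        · rcases not_and_or.1 hz with hq1 | hq23
          · simp [ind_false h3, ind_false hq1]
          · rcases not_and_or.1 hq23 with hq2 | hq3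
            · simp [ind_false h3, ind_false hq2]
            · simp [ind_false h3, ind_false hq3]

end S12

namespace S12
open IsingGlauber

variable {V : Type*} [DecidableEq V] (G : SimpleGraph V) (hlf : G.LocallyFinite)
  (U : Finset V) (β : ℝ) (τ : V → Bool) (y : V)

lemma emb_inf (η : V → Bool) (a b : {v // v ∈ U} → Bool) (v : V) :
    emb U η (a ⊓ b) v = (emb U η a v && emb U η b v) := by
  unfold emb
  split
  · rw [Pi.inf_apply, bool_inf_eq]
  · exact (Bool.and_self _).symm

lemma emb_sup (η : V → Bool) (a b : {v // v ∈ U} → Bool) (v : V) :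
    emb U η (a ⊔ b) v = (emb U η a v || emb U η b v) := by
  unfold emb
  split
  · rw [Pi.sup_apply, bool_sup_eq]
  · exact (Bool.or_self _).symm

lemma energy_supermod (η : V → Bool) (a b : {v // v ∈ U} → Bool) :
    energyB G hlf U (emb U η a) + energyB G hlf U (emb U η b)
      ≤ energyB G hlf U (emb U η (a ⊓ b)) + energyB G hlf U (emb U η (a ⊔ b)) := by
  apply energy_add_le
  intro u v _ _ _
  rw [emb_inf, emb_inf, emb_sup, emb_sup]
  exact spin_supermod _ _ _ _

lemma FKG_sum (hβ : 0 ≤ β) (η : V → Bool) (D : Finset V) (x : V) (hxU : x ∈ U) :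
    Sw G hlf U β η (fun c => ind (Tt G U y D c) * ind (c ⟨x, hxU⟩ = false))
      * Sw G hlf U β η (fun _ => 1)
    ≤ Sw G hlf U β η (fun c => ind (Tt G U y D c))
      * Sw G hlf U β η (fun c => ind (c ⟨x, hxU⟩ = false)) := by
  set μ : ({v // v ∈ U} → Bool) → ℝ := fun c => Real.exp (β * energyB G hlf U (emb U η c)) with hμdef
  have hμ0 : 0 ≤ μ := fun c => (Real.exp_pos _).le
  set f : ({v // v ∈ U} → Bool) → ℝ := fun c => ind (Tt G U y D c) with hfdef
  set g : ({v // v ∈ U} → Bool) → ℝ := fun c => ind (c ⟨x, hxU⟩ = true) with hgdef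
  have hf0 : 0 ≤ f := fun c => ind_nonneg _
  have hg0 : 0 ≤ g := fun c => ind_nonneg _
  have hfmono : Monotone f := by
    intro c c' hcc'
    simp only [hfdef]
    by_cases h : Tt G U y D c
    · have h' : Tt G U y D c' := fun u hu => bool_le_true _ _ (hcc' u) (h u hu)
      rw [ind_true h, ind_true h']
    · rw [ind_false h]; exact ind_nonneg _
  have hgmono : Monotone g := by
    intro c c' hcc'
    simp only [hgdef]
    by_cases h : c ⟨x, hxU⟩ = true
    · rw [ind_true h, ind_true (bool_le_true _ _ (hcc' ⟨x, hxU⟩) h)]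
    · rw [ind_false h]; exact ind_nonneg _
  have hsup : ∀ a b, μ a * μ b ≤ μ (a ⊓ b) * μ (a ⊔ b) := by
    intro a b
    simp only [hμdef]
    rw [← Real.exp_add, ← Real.exp_add, Real.exp_le_exp, ← mul_add, ← mul_add]
    exact mul_le_mul_of_nonneg_left (energy_supermod G hlf U η a b) hβ
  have hfkg := fkg f g μ hμ0 hf0 hg0 hfmono hgmono hsup
  -- translate the four sums
  have e1 : ∑ a : {v // v ∈ U} → Bool, μ a * f a = Sw G hlf U β η f := rfl
  have e2 : ∑ a : {v // v ∈ U} → Bool, μ a * g a = Sw G hlf U β η g := rfl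
  have e3 : (∑ a : {v // v ∈ U} → Bool, μ a) = Sw G hlf U β η (fun _ => 1) := by
    unfold Sw; exact Finset.sum_congr rfl fun c _ => (mul_one _).symm
  have e4 : ∑ a : {v // v ∈ U} → Bool, μ a * (f a * g a)
      = Sw G hlf U β η (fun c => f c * g c) := rfl
  rw [e1, e2, e3, e4] at hfkg
  -- complementation
  have hind : ∀ c : {v // v ∈ U} → Bool,
      ind (c ⟨x, hxU⟩ = false) = 1 - ind (c ⟨x, hxU⟩ = true) := by
    intro c
    cases h : c ⟨x, hxU⟩ <;> simp [ind, h]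
  have hTX : Sw G hlf U β η (fun c => ind (Tt G U y D c) * ind (c ⟨x, hxU⟩ = false))
      = Sw G hlf U β η f - Sw G hlf U β η (fun c => f c * g c) := by
    rw [eq_sub_iff_add_eq, Sw_add]
    refine Finset.sum_congr rfl fun c _ => ?_
    congr 1
    simp only [hfdef, hgdef, hind c]
    ring
  have hX : Sw G hlf U β η (fun c => ind (c ⟨x, hxU⟩ = false))
      = Sw G hlf U β η (fun _ => 1) - Sw G hlf U β η g := by
    rw [eq_sub_iff_add_eq, Sw_add]
    refine Finset.sum_congr rfl fun c _ => ?_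
    congr 1
    simp only [hgdef, hind c]
    ring
  rw [hTX, hX]
  nlinarith [hfkg]

end S12

namespace S12
open IsingGlauber

variable {V : Type*} [DecidableEq V] (G : SimpleGraph V) (hlf : G.LocallyFinite)
  (U : Finset V) (β : ℝ) (τ : V → Bool) (y : V)

lemma ind_and (P Q : Prop) : ind (P ∧ Q) = ind P * ind Q := by
  by_cases hP : P <;> by_cases hQ : Q <;> simp [ind, hP, hQ]

lemma Sw_congr (η : V → Bool) (f g : ({v // v ∈ U} → Bool) → ℝ) (h : ∀ c, f c = g c) :
    Sw G hlf U β η f = Sw G hlf U β η g := by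
  unfold Sw; exact Finset.sum_congr rfl fun c _ => by rw [h c]

lemma perD (hyU : y ∉ U) (hβ : 0 ≤ β) (D : Finset V) (hD : D ⊆ U)
    (x : V) (hxU : x ∈ U) (hxD : x ∉ D) :
    Sw G hlf U β (Function.update τ y false)
        (fun c => ind (c ⟨x, hxU⟩ = false ∧ Kc G U y c = D))
      * Sw G hlf U β (Function.update τ y true) (fun _ => 1)
    ≤ Sw G hlf U β (Function.update τ y false) (fun c => ind (Kc G U y c = D))
      * Sw G hlf U β (Function.update τ y true) (fun c => ind (c ⟨x, hxU⟩ = false)) := by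
  by_cases hR : RD G y D
  · have hch : ∀ c : {v // v ∈ U} → Bool, (Kc G U y c = D) ↔ Cyl G U y D c :=
      Kc_eq_iff G U y D hD hyU hR
    have r1 : Sw G hlf U β (Function.update τ y false)
        (fun c => ind (c ⟨x, hxU⟩ = false ∧ Kc G U y c = D))
        = Sw G hlf U β (Function.update τ y false)
          (fun c => ind (Cyl G U y D c) * ind (c ⟨x, hxU⟩ = false)) := by
      refine Sw_congr G hlf U β _ _ _ fun c => ?_
      rw [ind_and]
      by_cases h : Kc G U y c = D
      · rw [ind_true h, ind_true ((hch c).1 h)]; ring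
      · rw [ind_false h, ind_false (fun hc => h ((hch c).2 hc))]; ring
    have r2 : Sw G hlf U β (Function.update τ y false) (fun c => ind (Kc G U y c = D))
        = Sw G hlf U β (Function.update τ y false)
          (fun c => ind (Cyl G U y D c) * (fun _ : {v // v ∈ U} → Bool => (1:ℝ)) c) := by
      refine Sw_congr G hlf U β _ _ _ fun c => ?_
      by_cases h : Kc G U y c = D
      · rw [ind_true h, ind_true ((hch c).1 h)]; ring
      · rw [ind_false h, ind_false (fun hc => h ((hch c).2 hc))]; ring
    rw [r1, r2]
    have hEX := EX_sum G hlf U β τ y hyU D (fun c => ind (c ⟨x, hxU⟩ = false))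
      (fun _ => (1:ℝ))
    have hB1 : Sw G hlf U β (Function.update τ y true)
        (fun c => ind (Cyl G U y D c) * (fun _ : {v // v ∈ U} → Bool => (1:ℝ)) c)
        = Sw G hlf U β (Function.update τ y true) (fun c => ind (Cyl G U y D c)) := by
      refine Sw_congr G hlf U β _ _ _ fun c => ?_; simp
    have hDEC := DEC_sum G hlf U β y (Function.update τ y true) D x hxU hxD
    have hFKG := FKG_sum G hlf U β y hβ (Function.update τ y true) D x hxU
    set a := Sw G hlf U β (Function.update τ y false)
      (fun c => ind (Cyl G U y D c) * ind (c ⟨x, hxU⟩ = false)) with ha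
    set b := Sw G hlf U β (Function.update τ y false)
      (fun c => ind (Cyl G U y D c) * (fun _ : {v // v ∈ U} → Bool => (1:ℝ)) c) with hb
    set A := Sw G hlf U β (Function.update τ y true)
      (fun c => ind (Cyl G U y D c) * ind (c ⟨x, hxU⟩ = false)) with hA
    set B := Sw G hlf U β (Function.update τ y true) (fun c => ind (Cyl G U y D c)) with hBs
    set T := Sw G hlf U β (Function.update τ y true) (fun c => ind (Tt G U y D c)) with hT
    set Ctx := Sw G hlf U β (Function.update τ y true)
      (fun c => ind (Tt G U y D c) * ind (c ⟨x, hxU⟩ = false)) with hCtx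
    set Z := Sw G hlf U β (Function.update τ y true) (fun _ : {v // v ∈ U} → Bool => (1:ℝ)) with hZ
    set X := Sw G hlf U β (Function.update τ y true)
      (fun c => ind (c ⟨x, hxU⟩ = false)) with hXs
    rw [hB1] at hEX
    -- hEX : a * B = A * b ; hDEC : A * T = B * Ctx ; hFKG : Ctx * Z ≤ T * X
    have hBpos : 0 < B := by
      refine Sw_pos G hlf U β _ _ (fun c => ind_nonneg _)
        (fun u => if u.1 ∈ D then false else true) ?_
      have : Cyl G U y D (fun u => if u.1 ∈ D then false else true) := by
        intro u
        constructor
        · intro h; simp [h]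
        · intro h
          have : u.1 ∉ D := ((mem_Tb G U y).1 h).2.1
          simp [this]
      rw [ind_true this]; norm_num
    have hTpos : 0 < T := by
      refine Sw_pos G hlf U β _ _ (fun c => ind_nonneg _) (fun _ => true) ?_
      rw [ind_true (show Tt G U y D (fun _ => true) from fun u _ => rfl)]; norm_num
    have hann : 0 ≤ a := Sw_nonneg G hlf U β _ _
      (fun c => mul_nonneg (ind_nonneg _) (ind_nonneg _))
    have hbnn : 0 ≤ b := Sw_nonneg G hlf U β _ _
      (fun c => mul_nonneg (ind_nonneg _) (by norm_num))
    have hZnn : 0 ≤ Z := Sw_nonneg G hlf U β _ _ (fun c => by norm_num)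
    have key : (a * Z) * (B * T) ≤ (b * X) * (B * T) := by
      calc (a * Z) * (B * T) = (a * B) * (Z * T) := by ring
        _ = (A * b) * (Z * T) := by rw [hEX]
        _ = (A * T) * (b * Z) := by ring
        _ = (B * Ctx) * (b * Z) := by rw [hDEC]
        _ = (Ctx * Z) * (B * b) := by ring
        _ ≤ (T * X) * (B * b) := by
            exact mul_le_mul_of_nonneg_right hFKG (mul_nonneg hBpos.le hbnn)
        _ = (b * X) * (B * T) := by ring
    exact le_of_mul_le_mul_right key (mul_pos hBpos hTpos)
  · have hz : Sw G hlf U β (Function.update τ y false)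
        (fun c => ind (c ⟨x, hxU⟩ = false ∧ Kc G U y c = D)) = 0 := by
      unfold Sw
      refine Finset.sum_eq_zero fun c _ => ?_
      have : ¬ (c ⟨x, hxU⟩ = false ∧ Kc G U y c = D) := by
        rintro ⟨-, hK⟩
        exact hR (RD_of_Kc_eq G U y hK)
      simp only [ind_false this, mul_zero]
    rw [hz, zero_mul]
    exact mul_nonneg (Sw_nonneg G hlf U β _ _ fun c => ind_nonneg _)
      (Sw_nonneg G hlf U β _ _ fun c => ind_nonneg _)

end S12

namespace S12
open IsingGlauber

variable {V : Type*} [DecidableEq V] (G : SimpleGraph V) (hlf : G.LocallyFinite)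
  (U : Finset V) (β : ℝ) (τ : V → Bool) (y : V)

lemma star (hyU : y ∉ U) (hβ : 0 ≤ β) (x : V) (hxU : x ∈ U) :
    Sw G hlf U β (Function.update τ y false)
        (fun c => ind (c ⟨x, hxU⟩ = false ∧ x ∉ Kc G U y c))
      * Sw G hlf U β (Function.update τ y true) (fun _ => 1)
    ≤ Sw G hlf U β (Function.update τ y false) (fun _ => 1)
      * Sw G hlf U β (Function.update τ y true) (fun c => ind (c ⟨x, hxU⟩ = false)) := by
  set 𝒟 : Finset (Finset V) := U.powerset.filter (fun D => x ∉ D) with h𝒟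
  have h1 : ∀ c : {v // v ∈ U} → Bool,
      ind (c ⟨x, hxU⟩ = false ∧ x ∉ Kc G U y c)
        = ∑ D ∈ 𝒟, ind (c ⟨x, hxU⟩ = false ∧ Kc G U y c = D) := by
    intro c
    by_cases hX : c ⟨x, hxU⟩ = false
    · by_cases hK : x ∈ Kc G U y c
      · rw [ind_false (fun h => h.2 hK)]
        refine (Finset.sum_eq_zero fun D hD => ?_).symm
        refine ind_false fun h => ?_
        rw [h.2] at hK
        exact (Finset.mem_filter.1 hD).2 hK
      · rw [ind_true ⟨hX, hK⟩]
        have : ∀ D ∈ 𝒟, ind (c ⟨x, hxU⟩ = false ∧ Kc G U y c = D)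
            = if D = Kc G U y c then 1 else 0 := by
          intro D _
          by_cases hD : D = Kc G U y c
          · rw [if_pos hD, ind_true ⟨hX, hD.symm⟩]
          · rw [if_neg hD, ind_false (fun h => hD h.2.symm)]
        rw [Finset.sum_congr rfl this, Finset.sum_ite_eq' 𝒟 (Kc G U y c) (fun _ => 1)]
        rw [if_pos]
        rw [h𝒟, Finset.mem_filter, Finset.mem_powerset]
        exact ⟨Kc_subset G U y c, hK⟩
    · rw [ind_false (fun h => hX h.1)]
      refine (Finset.sum_eq_zero fun D hD => ind_false fun h => hX h.1).symm
  have h2 : Sw G hlf U β (Function.update τ y false)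
      (fun c => ind (c ⟨x, hxU⟩ = false ∧ x ∉ Kc G U y c))
      = ∑ D ∈ 𝒟, Sw G hlf U β (Function.update τ y false)
          (fun c => ind (c ⟨x, hxU⟩ = false ∧ Kc G U y c = D)) := by
    unfold Sw
    rw [Finset.sum_comm]
    refine Finset.sum_congr rfl fun c _ => ?_
    rw [← Finset.mul_sum, ← h1 c]
  have h3 : ∑ D ∈ 𝒟, Sw G hlf U β (Function.update τ y false)
      (fun c => ind (Kc G U y c = D))
      ≤ Sw G hlf U β (Function.update τ y false) (fun _ => 1) := by
    unfold Sw
    rw [Finset.sum_comm]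
    refine Finset.sum_le_sum fun c _ => ?_
    rw [← Finset.mul_sum]
    refine le_trans (mul_le_mul_of_nonneg_left ?_ (Real.exp_pos _).le) (le_of_eq rfl)
    have : ∀ D ∈ 𝒟, ind (Kc G U y c = D) = if D = Kc G U y c then 1 else 0 := by
      intro D _
      by_cases hD : D = Kc G U y c
      · rw [if_pos hD, ind_true hD.symm]
      · rw [if_neg hD, ind_false (fun h => hD h.symm)]
    rw [Finset.sum_congr rfl this, Finset.sum_ite_eq' 𝒟 (Kc G U y c) (fun _ => 1)]
    split <;> norm_num
  rw [h2, Finset.sum_mul]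
  have step : ∀ D ∈ 𝒟,
      Sw G hlf U β (Function.update τ y false)
          (fun c => ind (c ⟨x, hxU⟩ = false ∧ Kc G U y c = D))
        * Sw G hlf U β (Function.update τ y true) (fun _ => 1)
      ≤ Sw G hlf U β (Function.update τ y false) (fun c => ind (Kc G U y c = D))
        * Sw G hlf U β (Function.update τ y true) (fun c => ind (c ⟨x, hxU⟩ = false)) := by
    intro D hD
    rw [h𝒟, Finset.mem_filter, Finset.mem_powerset] at hD
    exact perD G hlf U β τ y hyU hβ D hD.1 x hxU hD.2
  calc ∑ D ∈ 𝒟, Sw G hlf U β (Function.update τ y false)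
          (fun c => ind (c ⟨x, hxU⟩ = false ∧ Kc G U y c = D))
        * Sw G hlf U β (Function.update τ y true) (fun _ => 1)
      ≤ ∑ D ∈ 𝒟, Sw G hlf U β (Function.update τ y false)
          (fun c => ind (Kc G U y c = D))
        * Sw G hlf U β (Function.update τ y true) (fun c => ind (c ⟨x, hxU⟩ = false)) :=
        Finset.sum_le_sum step
    _ = (∑ D ∈ 𝒟, Sw G hlf U β (Function.update τ y false)
          (fun c => ind (Kc G U y c = D)))
        * Sw G hlf U β (Function.update τ y true) (fun c => ind (c ⟨x, hxU⟩ = false)) := by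
        rw [Finset.sum_mul]
    _ ≤ Sw G hlf U β (Function.update τ y false) (fun _ => 1)
        * Sw G hlf U β (Function.update τ y true) (fun c => ind (c ⟨x, hxU⟩ = false)) := by
        refine mul_le_mul_of_nonneg_right h3 ?_
        exact Sw_nonneg G hlf U β _ _ fun c => ind_nonneg _

end S12

namespace S12
open IsingGlauber

variable {V : Type*} [DecidableEq V] (G : SimpleGraph V) (hlf : G.LocallyFinite)
  (U : Finset V) (β : ℝ) (τ : V → Bool) (y : V)

lemma gProb_eq (η : V → Bool) (P : (V → Bool) → Prop) :
    gProb (fun σ => β * energyB G hlf U σ) U η P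
      = Sw G hlf U β η (fun c => ind (P (emb U η c))) / Sw G hlf U β η (fun _ => 1) := by
  unfold gProb gExp
  rw [wsum_eq, wsum_eq]
  rfl

end S12


open S12 in
/-- inequality (3.19) of the paper: the influence on the spin at
`x ∈ S` of flipping the boundary spin at `y` from plus to minus is bounded by the
`μ_U^{y,-}`-probability of the event `A^c` that some path from `y` to `x` in the
subgraph induced on `U ∪ {y}` has all its `U`-vertices minus. -/
theorem statement12 {V : Type*} [DecidableEq V] [Infinite V]
    (G : SimpleGraph V) (hlf : G.LocallyFinite) (hconn : G.Connected)
    (g Δ : ℕ) (hg : 1 ≤ g) (o : V)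
    (hgrow : IsGrowing G hlf g o)
    (hΔ : ∀ v : V, (nbr G hlf v).card ≤ Δ)
    (β : ℝ) (hβ : 0 < β)
    (m i : ℕ) (him : i ≤ m) (Bm : Finset V) (hBm : ∀ v : V, v ∈ Bm ↔ G.dist o v ≤ m)
    (S : Finset V) (hS : ∀ v ∈ S, G.dist o v = i)
    (U : Finset V) (hU : U = Bm.filter (fun v => i + 1 ≤ G.dist o v) ∪ S)
    (τ : V → Bool) (hτ : ∀ v : V, G.dist o v = m + 1 → τ v = true)
    (x : V) (hx : x ∈ S)
    (y : V) (hy : G.dist o y = i) (hyS : y ∉ S) :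
    gProb (fun σ => β * energyB G hlf U σ) U (Function.update τ y true)
        (fun σ => σ x = true) -
      gProb (fun σ => β * energyB G hlf U σ) U (Function.update τ y false)
        (fun σ => σ x = true) ≤
      gProb (fun σ => β * energyB G hlf U σ) U (Function.update τ y false)
        (fun σ => ∃ w : G.Walk y x, ∀ v ∈ w.support, v ∈ insert y U ∧ (v ∈ U → σ v = false)) := by
  have hxU : x ∈ U := by rw [hU]; exact Finset.mem_union_right _ hx
  have hyU : y ∉ U := by
    rw [hU]
    intro hmem
    rcases Finset.mem_union.1 hmem with h | h
    · have h2 := (Finset.mem_filter.1 h).2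
      rw [hy] at h2
      omega
    · exact hyS h
  rw [gProb_eq G hlf U β _ _, gProb_eq G hlf U β _ _, gProb_eq G hlf U β _ _]
  -- normalize the three numerators
  have n1 : Sw G hlf U β (Function.update τ y true)
      (fun c => ind (emb U (Function.update τ y true) c x = true))
      = Sw G hlf U β (Function.update τ y true)
        (fun c => ind (c ⟨x, hxU⟩ = true)) := by
    refine Sw_congr G hlf U β _ _ _ fun c => ?_
    rw [emb_mem U _ _ hxU]
  have n2 : Sw G hlf U β (Function.update τ y false)
      (fun c => ind (emb U (Function.update τ y false) c x = true))
      = Sw G hlf U β (Function.update τ y false)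
        (fun c => ind (c ⟨x, hxU⟩ = true)) := by
    refine Sw_congr G hlf U β _ _ _ fun c => ?_
    rw [emb_mem U _ _ hxU]
  have n3 : Sw G hlf U β (Function.update τ y false)
      (fun c => ind (∃ w : G.Walk y x, ∀ v ∈ w.support, v ∈ insert y U ∧
        (v ∈ U → emb U (Function.update τ y false) c v = false)))
      = Sw G hlf U β (Function.update τ y false)
        (fun c => ind (x ∈ Kc G U y c)) := by
    refine Sw_congr G hlf U β _ _ _ fun c => ?_
    have hiff : (∃ w : G.Walk y x, ∀ v ∈ w.support, v ∈ insert y U ∧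
        (v ∈ U → emb U (Function.update τ y false) c v = false)) ↔ x ∈ Kc G U y c := by
      rw [mem_Kc]
      constructor
      · rintro ⟨w, hw⟩
        refine ⟨hxU, w, fun v hv => ⟨(hw v hv).1, fun h => ?_⟩⟩
        rw [← emb_mem U (Function.update τ y false) c h]
        exact (hw v hv).2 h
      · rintro ⟨-, w, hw⟩
        refine ⟨w, fun v hv => ⟨(hw v hv).1, fun h => ?_⟩⟩
        rw [emb_mem U (Function.update τ y false) c h]
        exact (hw v hv).2 h
    exact congrArg ind (propext hiff)
  rw [n1, n2, n3]
  set Zp := Sw G hlf U β (Function.update τ y true) (fun _ : {v // v ∈ U} → Bool => (1:ℝ)) with hZp'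
  set Zm := Sw G hlf U β (Function.update τ y false) (fun _ : {v // v ∈ U} → Bool => (1:ℝ)) with hZm'
  set P := Sw G hlf U β (Function.update τ y true) (fun c => ind (c ⟨x, hxU⟩ = true)) with hP'
  set Q := Sw G hlf U β (Function.update τ y false) (fun c => ind (c ⟨x, hxU⟩ = true)) with hQ'
  set M := Sw G hlf U β (Function.update τ y false) (fun c => ind (x ∈ Kc G U y c)) with hM'
  set Y := Sw G hlf U β (Function.update τ y true) (fun c => ind (c ⟨x, hxU⟩ = false)) with hY'
  set Sx := Sw G hlf U β (Function.update τ y false)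
    (fun c => ind (c ⟨x, hxU⟩ = false ∧ x ∉ Kc G U y c)) with hSx'
  have hstar : Sx * Zp ≤ Zm * Y := star G hlf U β τ y hyU hβ.le x hxU
  have hZp : 0 < Zp := by
    refine Sw_pos G hlf U β _ _ (fun c => by norm_num) (fun _ => true) (by norm_num)
  have hZm : 0 < Zm := by
    refine Sw_pos G hlf U β _ _ (fun c => by norm_num) (fun _ => true) (by norm_num)
  have hPY : Y + P = Zp := by
    rw [hY', hP', hZp', Sw_add]
    refine Sw_congr G hlf U β _ _ _ fun c => ?_
    cases h : c ⟨x, hxU⟩ <;> simp [ind, h]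
  have hQM : Zm ≤ Sx + (Q + M) := by
    rw [hSx', hQ', hM', hZm', Sw_add, Sw_add]
    refine Sw_mono G hlf U β _ _ _ fun c => ?_
    by_cases h1 : c ⟨x, hxU⟩ = false
    · by_cases h2 : x ∈ Kc G U y c
      · have : ind (x ∈ Kc G U y c) = 1 := ind_true h2
        simp only [this]
        have := ind_nonneg (c ⟨x, hxU⟩ = false ∧ x ∉ Kc G U y c)
        have := ind_nonneg (c ⟨x, hxU⟩ = true)
        linarith
      · have : ind (c ⟨x, hxU⟩ = false ∧ x ∉ Kc G U y c) = 1 := ind_true ⟨h1, h2⟩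
        simp only [this]
        have := ind_nonneg (c ⟨x, hxU⟩ = true)
        have := ind_nonneg (x ∈ Kc G U y c)
        linarith
    · have h1' : c ⟨x, hxU⟩ = true := by
        cases h : c ⟨x, hxU⟩
        · exact absurd h h1
        · rfl
      have : ind (c ⟨x, hxU⟩ = true) = 1 := ind_true h1'
      simp only [this]
      have := ind_nonneg (c ⟨x, hxU⟩ = false ∧ x ∉ Kc G U y c)
      have := ind_nonneg (x ∈ Kc G U y c)
      linarith
  have hYnn : 0 ≤ Y := Sw_nonneg G hlf U β _ _ fun c => ind_nonneg _
  have hSxnn : 0 ≤ Sx := Sw_nonneg G hlf U β _ _ fun c => ind_nonneg _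
  have l2 : Zp * (Zm - Sx) ≤ Zp * (Q + M) := by
    refine mul_le_mul_of_nonneg_left (by linarith) hZp.le
  have key : P * Zm ≤ (Q + M) * Zp := by nlinarith [hstar, l2, hPY]
  have hdiv : P / Zp ≤ (Q + M) / Zm := (div_le_div_iff₀ hZp hZm).2 key
  have hfin : (Q + M) / Zm - Q / Zm = M / Zm := by rw [add_div]; ring
  linarith [hdiv, hfin.le, hfin.ge]
end
end

section
/- Let G be an infinite (g,o)-growing graph with maximal degree Δ < ∞, fix i ∈ {0,…,m}, S ⊆ L_i, U = F_{i+1} ∪ S, τ ∈ Ω⁺, x ∈ S and y ∈ L_i \ S, and let μ_U^{y,+}, μ_U^{y,−} be the Gibbs measures on U with boundary condition τ modified to have spin +1, respectively −1, at y. Let C ⊆ U ∪ {y} be a connected set with y ∈ C and x ∉ C, and let Γ_C be the event {σ_z = −1 for all z ∈ C ∩ U and σ_z = +1 for all z ∈ ∂_V C ∩ U}. Then μ_U^{y,−}(σ_x = +1 | Γ_C) ≥ μ_U^{y,+}(σ_x = +1). -/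
/- Common framework: Ising model with boundary conditions on (finite pieces of)
   locally finite graphs, heat-bath Glauber dynamics quantities. -/

open Finset
open scoped Classical

noncomputable section

open IsingGlauber

namespace Stmt13Aux

open scoped FinsetFamily

variable {V : Type*} [DecidableEq V]

/-- The configuration equal (on `A`) to the indicator of `s`, and to `η` off `A`. -/
def conf (A : Finset V) (η : V → Bool) (s : Finset V) : V → Bool :=
  fun v => if v ∈ A then decide (v ∈ s) else η v

lemma conf_mem {A : Finset V} {η : V → Bool} {s : Finset V} {v : V} (hv : v ∈ A) :
    conf A η s v = decide (v ∈ s) := by simp [conf, hv]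

lemma conf_notMem {A : Finset V} {η : V → Bool} {s : Finset V} {v : V} (hv : v ∉ A) :
    conf A η s v = η v := by simp [conf, hv]

/-- `wsum` as a sum over the powerset. -/
lemma wsum_eq (E : (V → Bool) → ℝ) (A : Finset V) (η : V → Bool) (f : (V → Bool) → ℝ) :
    wsum E A η f = ∑ s ∈ A.powerset, Real.exp (E (conf A η s)) * f (conf A η s) := by
  classical
  unfold wsum
  refine Finset.sum_nbij' (i := fun p => A.filter fun a => ∀ h : a ∈ A, p a h = true)
    (j := fun s => fun a _ => decide (a ∈ s)) ?_ ?_ ?_ ?_ ?_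
  · intro p _; simp [Finset.mem_powerset]
  · intro s _; simp only [Finset.mem_pi, Finset.mem_univ, imp_true_iff]
  · intro p hp
    funext a h
    by_cases hb : p a h = true
    · have hmem : a ∈ A.filter fun a => ∀ h : a ∈ A, p a h = true := by
        simp only [Finset.mem_filter]
        exact ⟨h, fun _ => hb⟩
      simp [hmem, hb]
    · have hb' : p a h = false := by
        cases hpa : p a h
        · rfl
        · exact absurd hpa hb
      have hmem : a ∉ A.filter fun a => ∀ h : a ∈ A, p a h = true := by
        simp only [Finset.mem_filter, not_and]
        intro _ hall
        exact hb (hall h)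
      simp [hmem, hb']
  · intro s hs
    rw [Finset.mem_powerset] at hs
    ext a
    simp only [Finset.mem_filter, decide_eq_true_eq]
    constructor
    · rintro ⟨_, h⟩
      exact h ‹a ∈ A›
    · intro ha
      exact ⟨hs ha, fun _ => ha⟩
  · intro p hp
    have hpatch : patch A η p = conf A η (A.filter fun a => ∀ h : a ∈ A, p a h = true) := by
      funext v
      by_cases hv : v ∈ A
      · simp only [patch, conf, hv, dif_pos, if_pos]
        by_cases hb : p v hv = true
        · have : (v ∈ A ∧ ∀ h : v ∈ A, p v h = true) := ⟨hv, fun _ => hb⟩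
          simp [Finset.mem_filter, this, hb]
        · have hb' : p v hv = false := by
            cases hpa : p v hv
            · rfl
            · exact absurd hpa hb
          have : ¬ (v ∈ A ∧ ∀ h : v ∈ A, p v h = true) := by
            rintro ⟨_, hall⟩; exact hb (hall hv)
          simp [Finset.mem_filter, this, hb']
      · simp [patch, conf, hv]
    rw [hpatch]

/-- Splitting a powerset sum over a disjoint union. -/
lemma sum_powerset_union {M : Type*} [AddCommMonoid M] (D W : Finset V) (hDW : Disjoint D W)
    (F : Finset V → M) :
    ∑ u ∈ (D ∪ W).powerset, F u = ∑ t ∈ D.powerset, ∑ s ∈ W.powerset, F (t ∪ s) := by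
  classical
  rw [← Finset.sum_product']
  have key : ∀ u : Finset V, u ⊆ D ∪ W → u ∩ D ∪ u ∩ W = u := by
    intro u hu
    rw [← Finset.inter_union_distrib_left]
    exact Finset.inter_eq_left.2 hu
  refine Finset.sum_nbij' (i := fun u => (u ∩ D, u ∩ W))
    (j := fun p => p.1 ∪ p.2) ?_ ?_ ?_ ?_ ?_
  · intro u hu
    simp only [Finset.mem_powerset] at hu
    simp [Finset.mem_product, Finset.mem_powerset, Finset.inter_subset_right]
  · intro p hp
    simp only [Finset.mem_product, Finset.mem_powerset] at hp
    simp only [Finset.mem_powerset]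
    exact Finset.union_subset (hp.1.trans Finset.subset_union_left)
      (hp.2.trans Finset.subset_union_right)
  · intro u hu
    simp only [Finset.mem_powerset] at hu
    exact key u hu
  · intro p hp
    simp only [Finset.mem_product, Finset.mem_powerset] at hp
    have h1 : (p.1 ∪ p.2) ∩ D = p.1 := by
      rw [Finset.union_inter_distrib_right, Finset.inter_eq_left.2 hp.1,
        Finset.disjoint_iff_inter_eq_empty.1 (Finset.disjoint_of_subset_left hp.2 hDW.symm),
        Finset.union_empty]
    have h2 : (p.1 ∪ p.2) ∩ W = p.2 := by
      rw [Finset.union_inter_distrib_right, Finset.inter_eq_left.2 hp.2,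
        Finset.disjoint_iff_inter_eq_empty.1 (Finset.disjoint_of_subset_left hp.1 hDW),
        Finset.empty_union]
    show ((p.1 ∪ p.2) ∩ D, (p.1 ∪ p.2) ∩ W) = p
    rw [h1, h2]
  · intro u hu
    simp only [Finset.mem_powerset] at hu
    show F u = F (u ∩ D ∪ u ∩ W)
    rw [key u hu]

lemma conf_union (D W : Finset V) (hDW : Disjoint D W) (η : V → Bool)
    {t s : Finset V} (ht : t ⊆ D) (hs : s ⊆ W) :
    conf (D ∪ W) η (t ∪ s) = conf W (conf D η t) s := by
  funext v
  by_cases hvW : v ∈ W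
  · have hvD : v ∉ D := fun h => (Finset.disjoint_left.1 hDW h) hvW
    have hvt : v ∉ t := fun h => hvD (ht h)
    simp [conf, hvW, hvD, Finset.mem_union, hvt]
  · by_cases hvD : v ∈ D
    · have hvs : v ∉ s := fun h => hvW (hs h)
      simp [conf, hvW, hvD, Finset.mem_union, hvs]
    · simp [conf, hvW, hvD, Finset.mem_union]

lemma spin_supermod (a b c d : Bool) :
    spin a * spin c + spin b * spin d ≤
      spin (a && b) * spin (c && d) + spin (a || b) * spin (c || d) := by
  cases a <;> cases b <;> cases c <;> cases d <;> simp [spin] <;> norm_num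

/-- Supermodularity of the Ising energy. -/
lemma energyB_supermod (G : SimpleGraph V) (hlf : G.LocallyFinite) (A : Finset V)
    (a b : V → Bool) :
    energyB G hlf A a + energyB G hlf A b ≤
      energyB G hlf A (fun v => a v && b v) + energyB G hlf A (fun v => a v || b v) := by
  unfold energyB
  rw [← mul_add, ← mul_add]
  refine mul_le_mul_of_nonneg_left ?_ (by norm_num)
  rw [← Finset.sum_add_distrib, ← Finset.sum_add_distrib]
  refine Finset.sum_le_sum fun u _ => ?_
  rw [← Finset.sum_add_distrib, ← Finset.sum_add_distrib]
  exact Finset.sum_le_sum fun z _ => spin_supermod _ _ _ _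

lemma powerset_sups_self (W : Finset V) : W.powerset ⊻ W.powerset = W.powerset := by
  ext u
  simp only [Finset.mem_sups, Finset.mem_powerset]
  constructor
  · rintro ⟨a, ha, b, hb, rfl⟩
    exact Finset.union_subset ha hb
  · intro hu
    exact ⟨u, hu, u, hu, Finset.union_self u⟩

lemma powerset_infs_self (W : Finset V) : W.powerset ⊼ W.powerset = W.powerset := by
  ext u
  simp only [Finset.mem_infs, Finset.mem_powerset]
  constructor
  · rintro ⟨a, ha, b, hb, rfl⟩
    exact (Finset.inter_subset_left).trans ha
  · intro hu
    exact ⟨u, hu, u, hu, Finset.inter_self u⟩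

/-- Holley-type inequality on a powerset, from the four functions theorem. -/
lemma holley_pow (W : Finset V) (x : V) (f g : Finset V → ℝ)
    (hf : ∀ s, 0 < f s) (hg : ∀ s, 0 < g s)
    (hsm : ∀ a b : Finset V, f a * g b ≤ f (a ∩ b) * g (a ∪ b)) :
    (∑ s ∈ W.powerset, g s) * (∑ s ∈ W.powerset, (if x ∈ s then (1:ℝ) else 0) * f s)
      ≤ (∑ s ∈ W.powerset, f s) *
        (∑ s ∈ W.powerset, (if x ∈ s then (1:ℝ) else 0) * g s) := by
  classical
  have h4 := four_functions_theorem (α := Finset V) g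
    (fun s => (if x ∈ s then (1:ℝ) else 0) * f s) f
    (fun s => (if x ∈ s then (1:ℝ) else 0) * g s)
    (fun s => (hg s).le)
    (fun s => mul_nonneg (by positivity) (hf s).le)
    (fun s => (hf s).le)
    (fun s => mul_nonneg (by positivity) (hg s).le)
    ?_ W.powerset W.powerset
  · rwa [powerset_sups_self, powerset_infs_self] at h4
  · intro a b
    simp only [Finset.inf_eq_inter, Finset.sup_eq_union]
    by_cases hxb : x ∈ b
    · have hxab : x ∈ a ∪ b := Finset.mem_union_right _ hxb
      simp only [hxb, hxab, if_pos, one_mul]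
      have h := hsm b a
      rw [Finset.inter_comm, Finset.union_comm] at h
      calc g a * f b = f b * g a := mul_comm _ _
        _ ≤ f (a ∩ b) * g (a ∪ b) := h
    · simp only [hxb, if_neg, not_false_iff, zero_mul, mul_zero]
      exact mul_nonneg (hf _).le
        (mul_nonneg (by positivity) (hg _).le)

/-- If two boundary conditions agree on the vertex boundary of `Wf`, the energy
difference between the corresponding configurations is independent of the inner part. -/
lemma energy_diff_const (G : SimpleGraph V) (hlf : G.LocallyFinite) (A Wf : Finset V)
    (η₁ η₂ : V → Bool) (hb : ∀ v ∈ vbd G hlf Wf, η₁ v = η₂ v) (s : Finset V) :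
    energyB G hlf A (conf Wf η₁ s) - energyB G hlf A (conf Wf η₂ s)
      = energyB G hlf A (conf Wf η₁ ∅) - energyB G hlf A (conf Wf η₂ ∅) := by
  classical
  have key : ∀ (u z : V), G.Adj u z →
      spin (conf Wf η₁ s u) * spin (conf Wf η₁ s z)
        - spin (conf Wf η₂ s u) * spin (conf Wf η₂ s z)
      = spin (conf Wf η₁ ∅ u) * spin (conf Wf η₁ ∅ z)
        - spin (conf Wf η₂ ∅ u) * spin (conf Wf η₂ ∅ z) := by
    intro u z hadj
    by_cases hu : u ∈ Wf <;> by_cases hz : z ∈ Wf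
    · simp [conf_mem hu, conf_mem hz]
    · have hzb : z ∈ vbd G hlf Wf := by
        simp only [vbd, Finset.mem_sdiff, Finset.mem_biUnion]
        exact ⟨⟨u, hu, by simp [nbr, SimpleGraph.mem_neighborFinset, hadj]⟩, hz⟩
      simp [conf_mem hu, conf_notMem hz, hb z hzb]
    · have hub : u ∈ vbd G hlf Wf := by
        simp only [vbd, Finset.mem_sdiff, Finset.mem_biUnion]
        exact ⟨⟨z, hz, by simp [nbr, SimpleGraph.mem_neighborFinset, hadj.symm]⟩, hu⟩
      simp [conf_notMem hu, conf_mem hz, hb u hub]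
    · simp [conf_notMem hu, conf_notMem hz]
  unfold energyB
  rw [← mul_sub, ← mul_sub, ← Finset.sum_sub_distrib, ← Finset.sum_sub_distrib]
  congr 1
  refine Finset.sum_congr rfl fun u _ => ?_
  rw [← Finset.sum_sub_distrib, ← Finset.sum_sub_distrib]
  refine Finset.sum_congr rfl fun z hz => ?_
  rw [Finset.mem_filter] at hz
  exact key u z hz.2

/-- Partition function on `Wf` with boundary condition `η`. -/
def Zb (E : (V → Bool) → ℝ) (Wf : Finset V) (η : V → Bool) : ℝ :=
  ∑ s ∈ Wf.powerset, Real.exp (E (conf Wf η s))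

/-- Numerator: weight of configurations with `x` occupied. -/
def Nb (E : (V → Bool) → ℝ) (Wf : Finset V) (x : V) (η : V → Bool) : ℝ :=
  ∑ s ∈ Wf.powerset, (if x ∈ s then (1:ℝ) else 0) * Real.exp (E (conf Wf η s))

lemma Zb_pos (E : (V → Bool) → ℝ) (Wf : Finset V) (η : V → Bool) : 0 < Zb E Wf η :=
  Finset.sum_pos (fun s _ => Real.exp_pos _) ⟨∅, by simp⟩

lemma Nb_nonneg (E : (V → Bool) → ℝ) (Wf : Finset V) (x : V) (η : V → Bool) :
    0 ≤ Nb E Wf x η :=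
  Finset.sum_nonneg fun s _ => mul_nonneg (by positivity) (Real.exp_pos _).le

/-- Boundary conditions agreeing on the vertex boundary give proportional weights. -/
lemma Zb_Nb_shift (G : SimpleGraph V) (hlf : G.LocallyFinite) (A : Finset V) (β : ℝ)
    (Wf : Finset V) (x : V) (η₁ η₂ : V → Bool)
    (hb : ∀ v ∈ vbd G hlf Wf, η₁ v = η₂ v) :
    ∃ K : ℝ, 0 < K ∧
      Zb (fun σ => β * energyB G hlf A σ) Wf η₁ =
        K * Zb (fun σ => β * energyB G hlf A σ) Wf η₂ ∧
      Nb (fun σ => β * energyB G hlf A σ) Wf x η₁ =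
        K * Nb (fun σ => β * energyB G hlf A σ) Wf x η₂ := by
  set E : (V → Bool) → ℝ := fun σ => β * energyB G hlf A σ with hE
  set c : ℝ := E (conf Wf η₁ ∅) - E (conf Wf η₂ ∅) with hc
  have hshift : ∀ s : Finset V, E (conf Wf η₁ s) = c + E (conf Wf η₂ s) := by
    intro s
    have h := energy_diff_const G hlf A Wf η₁ η₂ hb s
    simp only [hE, hc]
    linear_combination β * h
  refine ⟨Real.exp c, Real.exp_pos _, ?_, ?_⟩
  · unfold Zb
    rw [Finset.mul_sum]
    refine Finset.sum_congr rfl fun s _ => ?_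
    rw [hshift s, Real.exp_add]
  · unfold Nb
    rw [Finset.mul_sum]
    refine Finset.sum_congr rfl fun s _ => ?_
    rw [hshift s, Real.exp_add]
    ring

/-- Monotone comparison of boundary conditions (Holley/FKG step). -/
lemma holley_compare (G : SimpleGraph V) (hlf : G.LocallyFinite) (A : Finset V)
    (β : ℝ) (hβ : 0 ≤ β) (Wf : Finset V) (x : V) (η₁ η₂ : V → Bool)
    (hle : ∀ v, η₁ v = true → η₂ v = true) :
    Zb (fun σ => β * energyB G hlf A σ) Wf η₂ *
        Nb (fun σ => β * energyB G hlf A σ) Wf x η₁ ≤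
      Zb (fun σ => β * energyB G hlf A σ) Wf η₁ *
        Nb (fun σ => β * energyB G hlf A σ) Wf x η₂ := by
  set E : (V → Bool) → ℝ := fun σ => β * energyB G hlf A σ with hE
  have hand : ∀ a b : Finset V,
      (fun v => conf Wf η₁ a v && conf Wf η₂ b v) = conf Wf η₁ (a ∩ b) := by
    intro a b
    funext v
    by_cases hv : v ∈ Wf
    · simp [conf_mem hv, Finset.mem_inter, Bool.decide_and]
    · simp only [conf_notMem hv]
      cases h1 : η₁ v
      · simp
      · simp [hle v h1]
  have hor : ∀ a b : Finset V,
      (fun v => conf Wf η₁ a v || conf Wf η₂ b v) = conf Wf η₂ (a ∪ b) := by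
    intro a b
    funext v
    by_cases hv : v ∈ Wf
    · simp [conf_mem hv, Finset.mem_union, Bool.decide_or]
    · simp only [conf_notMem hv]
      cases h1 : η₁ v
      · simp
      · simp [hle v h1]
  have hsm : ∀ a b : Finset V,
      Real.exp (E (conf Wf η₁ a)) * Real.exp (E (conf Wf η₂ b)) ≤
        Real.exp (E (conf Wf η₁ (a ∩ b))) * Real.exp (E (conf Wf η₂ (a ∪ b))) := by
    intro a b
    rw [← Real.exp_add, ← Real.exp_add]
    apply Real.exp_le_exp.2
    have h := energyB_supermod G hlf A (conf Wf η₁ a) (conf Wf η₂ b)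
    rw [hand a b, hor a b] at h
    simp only [hE]
    nlinarith [h]
  have := holley_pow Wf x (fun s => Real.exp (E (conf Wf η₁ s)))
    (fun s => Real.exp (E (conf Wf η₂ s)))
    (fun s => Real.exp_pos _) (fun s => Real.exp_pos _) hsm
  exact this

end Stmt13Aux

open Stmt13Aux

/-- inequalities (3.16)–(3.18) of the paper: conditioned on a maximal
negative component `C ∋ y` avoiding `x`, the `μ_U^{y,-}`-probability that the spin
at `x` is plus dominates the unconditioned `μ_U^{y,+}`-probability. -/
theorem statement13 {V : Type*} [DecidableEq V] [Infinite V]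
    (G : SimpleGraph V) (hlf : G.LocallyFinite) (hconn : G.Connected)
    (g Δ : ℕ) (hg : 1 ≤ g) (o : V)
    (hgrow : IsGrowing G hlf g o)
    (hΔ : ∀ v : V, (nbr G hlf v).card ≤ Δ)
    (β : ℝ) (hβ : 0 < β)
    (m i : ℕ) (him : i ≤ m) (Bm : Finset V) (hBm : ∀ v : V, v ∈ Bm ↔ G.dist o v ≤ m)
    (S : Finset V) (hS : ∀ v ∈ S, G.dist o v = i)
    (U : Finset V) (hU : U = Bm.filter (fun v => i + 1 ≤ G.dist o v) ∪ S)
    (τ : V → Bool) (hτ : ∀ v : V, G.dist o v = m + 1 → τ v = true)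
    (x : V) (hx : x ∈ S)
    (y : V) (hy : G.dist o y = i) (hyS : y ∉ S)
    (C : Finset V) (hCy : y ∈ C) (hCx : x ∉ C) (hCU : C ⊆ insert y U)
    (hCconn : (G.induce (C : Set V)).Connected)
    (Γ : (V → Bool) → Prop)
    (hΓ : Γ = fun σ => (∀ z ∈ C ∩ U, σ z = false) ∧ ∀ z ∈ vbd G hlf C ∩ U, σ z = true) :
    gProb (fun σ => β * energyB G hlf U σ) U (Function.update τ y true)
        (fun σ => σ x = true) ≤
      gProb (fun σ => β * energyB G hlf U σ) U (Function.update τ y false)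
          (fun σ => σ x = true ∧ Γ σ) /
        gProb (fun σ => β * energyB G hlf U σ) U (Function.update τ y false) Γ := by
  classical
  set E : (V → Bool) → ℝ := fun σ => β * energyB G hlf U σ with hE
  set ηp : V → Bool := Function.update τ y true with hηp
  set ηm : V → Bool := Function.update τ y false with hηm
  have hxU : x ∈ U := by rw [hU]; exact Finset.mem_union_right _ hx
  have hyU : y ∉ U := by
    rw [hU]
    intro hyU
    rcases Finset.mem_union.1 hyU with h | h
    · have h2 := (Finset.mem_filter.1 h).2
      rw [hy] at h2
      omega
    · exact hyS h
  set Cv : Finset V := C ∪ vbd G hlf C with hCv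
  set D : Finset V := U ∩ Cv with hDdef
  set Wf : Finset V := U \ Cv with hWdef
  have hUDW : D ∪ Wf = U := by
    ext v
    simp only [hDdef, hWdef, Finset.mem_union, Finset.mem_inter, Finset.mem_sdiff]
    tauto
  have hdisj : Disjoint D Wf := by
    rw [Finset.disjoint_left]
    intro a ha hb
    exact (Finset.mem_sdiff.1 hb).2 (Finset.mem_inter.1 ha).2
  have hCadj : ∀ v ∈ C, ∀ w, G.Adj v w → w ∉ Wf := by
    intro v hv w hadj hw
    rcases Finset.mem_sdiff.1 hw with ⟨hwU, hwCv⟩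
    apply hwCv
    by_cases hwC : w ∈ C
    · exact Finset.mem_union_left _ hwC
    · refine Finset.mem_union_right _ ?_
      simp only [vbd, Finset.mem_sdiff, Finset.mem_biUnion]
      exact ⟨⟨v, hv, by simp [nbr, SimpleGraph.mem_neighborFinset, hadj]⟩, hwC⟩
  have hyvbdW : y ∉ vbd G hlf Wf := by
    intro hyv
    rcases Finset.mem_sdiff.1 hyv with ⟨hybi, hyW⟩
    rcases Finset.mem_biUnion.1 hybi with ⟨w, hw, hyw⟩
    have hadj : G.Adj w y := by
      simpa [nbr, SimpleGraph.mem_neighborFinset] using hyw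
    exact hCadj y hCy w hadj.symm hw
  set t₀ : Finset V := vbd G hlf C ∩ U with ht₀def
  have ht₀D : t₀ ⊆ D := by
    intro v hv
    rcases Finset.mem_inter.1 hv with ⟨h1, h2⟩
    exact Finset.mem_inter.2 ⟨h2, Finset.mem_union_right _ h1⟩
  have ht₀C : ∀ v ∈ t₀, v ∉ C := by
    intro v hv
    exact (Finset.mem_sdiff.1 (Finset.mem_inter.1 hv).1).2
  have hCUD : C ∩ U ⊆ D := by
    intro v hv
    rcases Finset.mem_inter.1 hv with ⟨h1, h2⟩
    exact Finset.mem_inter.2 ⟨h2, Finset.mem_union_left _ h1⟩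
  have hDsub : ∀ v ∈ D, v ∈ C ∩ U ∨ v ∈ t₀ := by
    intro v hv
    rcases Finset.mem_inter.1 hv with ⟨hvU, hvCv⟩
    rcases Finset.mem_union.1 hvCv with h | h
    · exact Or.inl (Finset.mem_inter.2 ⟨h, hvU⟩)
    · exact Or.inr (Finset.mem_inter.2 ⟨h, hvU⟩)
  have hvbdWt₀ : ∀ v ∈ vbd G hlf Wf, v ∈ U → v ∈ t₀ := by
    intro v hv hvU
    rcases Finset.mem_sdiff.1 hv with ⟨hbi, hvW⟩
    rcases Finset.mem_biUnion.1 hbi with ⟨w, hwW, hvw⟩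
    have hadj : G.Adj w v := by
      simpa [nbr, SimpleGraph.mem_neighborFinset] using hvw
    have hvC : v ∉ C := fun hvC => hCadj v hvC w hadj.symm hwW
    have hvCv : v ∈ Cv := by
      by_contra hvCv
      exact hvW (Finset.mem_sdiff.2 ⟨hvU, hvCv⟩)
    rcases Finset.mem_union.1 hvCv with h | h
    · exact absurd h hvC
    · exact Finset.mem_inter.2 ⟨h, hvU⟩
  have hconfD : ∀ (η : V → Bool) (t s : Finset V), ∀ z ∈ D,
      conf Wf (conf D η t) s z = decide (z ∈ t) := by
    intro η t s z hz
    rw [conf_notMem (Finset.disjoint_left.1 hdisj hz), conf_mem hz]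
  have hGamma : ∀ t ⊆ D, ∀ s : Finset V,
      (Γ (conf Wf (conf D ηm t) s) ↔ t = t₀) := by
    intro t ht s
    rw [hΓ]
    constructor
    · rintro ⟨h1, h2⟩
      apply Finset.Subset.antisymm
      · intro z hz
        rcases hDsub z (ht hz) with hcase | hcase
        · have hz1 := h1 z hcase
          rw [hconfD _ _ _ _ (hCUD hcase)] at hz1
          simp only [decide_eq_false_iff_not] at hz1
          exact absurd hz hz1
        · exact hcase
      · intro z hz
        have hz2 := h2 z hz
        rw [hconfD _ _ _ _ (ht₀D hz)] at hz2
        simpa using hz2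
    · rintro rfl
      constructor
      · intro z hz
        rw [hconfD _ _ _ _ (hCUD hz)]
        simp only [decide_eq_false_iff_not]
        exact fun h => ht₀C z h (Finset.mem_inter.1 hz).1
      · intro z hz
        rw [hconfD _ _ _ _ (ht₀D hz)]
        simpa using hz
  have hsplit : ∀ (η : V → Bool) (f : (V → Bool) → ℝ),
      wsum E U η f = ∑ t ∈ D.powerset, ∑ s ∈ Wf.powerset,
        Real.exp (E (conf Wf (conf D η t) s)) * f (conf Wf (conf D η t) s) := by
    intro η f
    rw [wsum_eq, ← hUDW, sum_powerset_union D Wf hdisj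
      (fun u => Real.exp (E (conf (D ∪ Wf) η u)) * f (conf (D ∪ Wf) η u))]
    refine Finset.sum_congr rfl fun t ht => Finset.sum_congr rfl fun s hs => ?_
    rw [conf_union D Wf hdisj η (Finset.mem_powerset.1 ht) (Finset.mem_powerset.1 hs)]
  have hwsum1 : ∀ η : V → Bool, wsum E U η (fun _ => 1) = Zb E U η := by
    intro η
    rw [wsum_eq]
    unfold Zb
    simp only [mul_one]
  have hZU : ∀ η : V → Bool, 0 < wsum E U η (fun _ => 1) := by
    intro η
    rw [hwsum1]
    exact Zb_pos E U η
  -- the denominator of the right-hand side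
  have hDen : gProb E U ηm Γ = Zb E Wf (conf D ηm t₀) / Zb E U ηm := by
    unfold gProb gExp
    rw [hwsum1 ηm]
    congr 1
    rw [hsplit ηm _]
    have hterm : ∀ t ∈ D.powerset,
        (∑ s ∈ Wf.powerset, Real.exp (E (conf Wf (conf D ηm t) s)) *
          (if Γ (conf Wf (conf D ηm t) s) then (1:ℝ) else 0))
        = if t = t₀ then Zb E Wf (conf D ηm t₀) else 0 := by
      intro t ht
      by_cases hteq : t = t₀
      · rw [hteq, if_pos rfl]
        unfold Zb
        refine Finset.sum_congr rfl fun s hs => ?_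
        rw [if_pos ((hGamma t₀ ht₀D s).2 rfl), mul_one]
      · rw [if_neg hteq]
        refine Finset.sum_eq_zero fun s hs => ?_
        rw [if_neg, mul_zero]
        intro hcon
        exact hteq ((hGamma t (Finset.mem_powerset.1 ht) s).1 hcon)
    rw [Finset.sum_congr rfl hterm,
      Finset.sum_ite_eq' D.powerset t₀ (fun _ => Zb E Wf (conf D ηm t₀)),
      if_pos (Finset.mem_powerset.2 ht₀D)]
  have hDenPos : 0 < gProb E U ηm Γ := by
    rw [hDen]
    exact div_pos (Zb_pos E Wf _) (Zb_pos E U ηm)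
  by_cases hxvbd : x ∈ vbd G hlf C
  · -- `x` is forced to be `+` by `Γ`, so the RHS equals `1`
    have hxt₀ : x ∈ t₀ := Finset.mem_inter.2 ⟨hxvbd, hxU⟩
    have hgeq : gProb E U ηm (fun σ => σ x = true ∧ Γ σ) = gProb E U ηm Γ := by
      unfold gProb gExp
      congr 2
      funext σ
      by_cases hγ : Γ σ
      · have hγ' := hγ
        rw [hΓ] at hγ'
        have hσx : σ x = true := hγ'.2 x hxt₀
        simp [hγ, hσx]
      · simp [hγ]
    have hle1 : gProb E U ηp (fun σ => σ x = true) ≤ 1 := by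
      unfold gProb gExp
      rw [div_le_one (hZU ηp)]
      rw [wsum_eq, wsum_eq]
      refine Finset.sum_le_sum fun s _ => ?_
      by_cases hb : conf U ηp s x = true
      · simp [hb]
      · simp [hb, (Real.exp_pos _).le]
    rw [hgeq, div_self hDenPos.ne']
    exact hle1
  · -- main case : `x` lies in the interior region `Wf`
    have hxW : x ∈ Wf := by
      refine Finset.mem_sdiff.2 ⟨hxU, fun h => ?_⟩
      rcases Finset.mem_union.1 h with h | h
      · exact hCx h
      · exact hxvbd h
    -- numerator of the right-hand side
    have hNum : gProb E U ηm (fun σ => σ x = true ∧ Γ σ)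
        = Nb E Wf x (conf D ηm t₀) / Zb E U ηm := by
      unfold gProb gExp
      rw [hwsum1 ηm]
      congr 1
      rw [hsplit ηm _]
      beta_reduce
      have hterm : ∀ t ∈ D.powerset,
          (∑ s ∈ Wf.powerset, Real.exp (E (conf Wf (conf D ηm t) s)) *
            (@ite ℝ (conf Wf (conf D ηm t) s x = true ∧ Γ (conf Wf (conf D ηm t) s))
              (Classical.propDecidable _) (1:ℝ) 0))
          = if t = t₀ then Nb E Wf x (conf D ηm t₀) else 0 := by
        intro t ht
        by_cases hteq : t = t₀
        · rw [hteq, if_pos rfl]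
          unfold Nb
          refine Finset.sum_congr rfl fun s hs => ?_
          have hγ := (hGamma t₀ ht₀D s).2 rfl
          rw [conf_mem hxW]
          by_cases hxs : x ∈ s
          · simp [hxs, hγ, mul_comm]
          · simp [hxs]
        · rw [if_neg hteq]
          refine Finset.sum_eq_zero fun s hs => ?_
          rw [if_neg, mul_zero]
          rintro ⟨-, hcon⟩
          exact hteq ((hGamma t (Finset.mem_powerset.1 ht) s).1 hcon)
      rw [Finset.sum_congr rfl hterm,
        Finset.sum_ite_eq' D.powerset t₀ (fun _ => Nb E Wf x (conf D ηm t₀)),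
        if_pos (Finset.mem_powerset.2 ht₀D)]
    -- left-hand side as a ratio of double sums
    have hLHS : gProb E U ηp (fun σ => σ x = true)
        = (∑ t ∈ D.powerset, Nb E Wf x (conf D ηp t)) /
          (∑ t ∈ D.powerset, Zb E Wf (conf D ηp t)) := by
      unfold gProb gExp
      rw [hsplit ηp _, hsplit ηp (fun _ => 1)]
      beta_reduce
      congr 1
      · refine Finset.sum_congr rfl fun t ht => ?_
        unfold Nb
        refine Finset.sum_congr rfl fun s hs => ?_
        rw [conf_mem hxW]
        by_cases hxs : x ∈ s
        · simp [hxs, mul_comm]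
        · simp [hxs]
      · refine Finset.sum_congr rfl fun t ht => ?_
        unfold Zb
        simp only [mul_one]
    rw [hLHS, hNum, hDen]
    have hZmne : Zb E U ηm ≠ 0 := (Zb_pos E U ηm).ne'
    rw [div_div_div_comm, div_self hZmne, div_one]
    have hsumZpos : 0 < ∑ t ∈ D.powerset, Zb E Wf (conf D ηp t) :=
      Finset.sum_pos (fun t _ => Zb_pos E Wf _) ⟨∅, by simp⟩
    rw [div_le_div_iff₀ hsumZpos (Zb_pos E Wf _)]
    rw [Finset.sum_mul, Finset.mul_sum]
    refine Finset.sum_le_sum fun t ht => ?_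
    -- per-boundary comparison via Holley
    set η' : V → Bool := fun v => if v ∈ vbd G hlf Wf then conf D ηp t v else conf D ηm t₀ v
      with hη'
    have hb : ∀ v ∈ vbd G hlf Wf, conf D ηp t v = η' v := by
      intro v hv
      rw [hη']
      simp [hv]
    obtain ⟨K, hK, hZ, hN⟩ := Zb_Nb_shift G hlf U β Wf x (conf D ηp t) η' hb
    rw [← hE] at hZ hN
    have hle : ∀ v, η' v = true → conf D ηm t₀ v = true := by
      intro v hv
      by_cases hvb : v ∈ vbd G hlf Wf
      · by_cases hvU : v ∈ U
        · have hvt₀ := hvbdWt₀ v hvb hvU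
          rw [conf_mem (ht₀D hvt₀)]
          simp [hvt₀]
        · have hvD : v ∉ D := fun h => hvU (Finset.mem_inter.1 h).1
          have hvy : v ≠ y := fun h => hyvbdW (h ▸ hvb)
          rw [conf_notMem hvD]
          rw [hη'] at hv
          simp only [hvb, if_pos] at hv
          rw [conf_notMem hvD] at hv
          rw [hηm, Function.update_of_ne hvy]
          rw [hηp, Function.update_of_ne hvy] at hv
          exact hv
      · rw [hη'] at hv
        simp only [hvb, if_neg, if_false] at hv
        exact hv
    have hH := holley_compare G hlf U β hβ.le Wf x η' (conf D ηm t₀) hle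
    rw [← hE] at hH
    calc Nb E Wf x (conf D ηp t) * Zb E Wf (conf D ηm t₀)
        = K * (Zb E Wf (conf D ηm t₀) * Nb E Wf x η') := by rw [hN]; ring
      _ ≤ K * (Zb E Wf η' * Nb E Wf x (conf D ηm t₀)) :=
          mul_le_mul_of_nonneg_left hH hK.le
      _ = Nb E Wf x (conf D ηm t₀) * Zb E Wf (conf D ηp t) := by rw [hZ]; ring
end
end
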